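/- arXiv:1307.0230 — 8 statements merged into one kernel-verified Lean document; each statement's English description precedes it below -/
import Mathlib

section
/- Let P, P₀, P₁ be probability measures on a measurable space (Ω, F) with P₀ ≪ P and P₁ ≪ P, and let f₀ := dP₀/dP and f₁ := dP₁/dP denote Radon–Nikodym densities. Fix α ∈ (0, 1). Then the set {a ∈ (0, ∞) : P₀({f₁ > a·f₀}) ≤ α} is nonempty, so â := inf{a ∈ (0, ∞) : P₀({f₁ > a·f₀}) ≤ α} is a well-defined finite nonnegative number, and there exists γ̂ ∈ [0, 1] such that the randomized test ξ̂ := 1_{{f₁ > â·f₀}} + γ̂·1_{{f₁ = â·f₀}} satisfies ∫ ξ̂ dP₀ = α. Moreover, ξ̂ is optimal: for every measurable ξ : Ω → [0, 1] with ∫ ξ dP₀ ≤ α, one has ∫ ξ dP₁ ≤ ∫ ξ̂ dP₁. -/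
open MeasureTheory Set
open scoped ENNReal

private lemma np_aux {x y h : ENNReal} (hxy : x ≤ y) (hh : h ≤ 1) :
    h * y + x ≤ y + h * x := by
  calc h * y + x = h * y + ((1 - h) * x + h * x) := by
        rw [← add_mul, tsub_add_cancel_of_le hh, one_mul]
    _ = (h * y + (1 - h) * x) + h * x := (add_assoc _ _ _).symm
    _ ≤ (h * y + (1 - h) * y) + h * x := by gcongr
    _ = y + h * x := by rw [← add_mul, add_tsub_cancel_of_le hh, one_mul]

/-- **Neyman–Pearson lemma for randomized tests.**
Let `P₀, P₁ ≪ P` be probability measures with densities `f₀ = dP₀/dP`, `f₁ = dP₁/dP`, and let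
`α ∈ (0,1)`.  The set `{a > 0 : P₀(f₁ > a f₀) ≤ α}` is nonempty; with `a₀` its infimum
(a finite nonnegative number), there is `γ ∈ [0,1]` such that the randomized test
`ξ₀ = 1_{f₁ > a₀ f₀} + γ 1_{f₁ = a₀ f₀}` has size exactly `α` under `P₀`, and `ξ₀` maximizes
the power `∫ ξ dP₁` among all measurable `ξ : Ω → [0,1]` with `∫ ξ dP₀ ≤ α`. -/
theorem stmt_2 {Ω : Type*} [MeasurableSpace Ω]
    (P P₀ P₁ : Measure Ω) [IsProbabilityMeasure P] [IsProbabilityMeasure P₀]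
    [IsProbabilityMeasure P₁] (h₀ : P₀ ≪ P) (h₁ : P₁ ≪ P)
    (α : ℝ) (hα : α ∈ Set.Ioo (0 : ℝ) 1)
    (f₀ f₁ : Ω → ENNReal) (hf₀ : f₀ = P₀.rnDeriv P) (hf₁ : f₁ = P₁.rnDeriv P)
    (S : Set ℝ)
    (hS : S = {a : ℝ | 0 < a ∧ P₀ {ω | ENNReal.ofReal a * f₀ ω < f₁ ω} ≤ ENNReal.ofReal α}) :
    S.Nonempty ∧ 0 ≤ sInf S ∧
    ∃ γ ∈ Set.Icc (0 : ℝ) 1,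
      ∀ ξhat : Ω → ℝ,
        ξhat = (fun ω =>
          (({ω | ENNReal.ofReal (sInf S) * f₀ ω < f₁ ω} : Set Ω).indicator
              (fun _ => (1 : ℝ)) ω) +
          γ * (({ω | f₁ ω = ENNReal.ofReal (sInf S) * f₀ ω} : Set Ω).indicator
              (fun _ => (1 : ℝ)) ω)) →
        (∫ ω, ξhat ω ∂P₀) = α ∧
        ∀ ξ : Ω → ℝ, Measurable ξ → (∀ ω, ξ ω ∈ Set.Icc (0 : ℝ) 1) →
          (∫ ω, ξ ω ∂P₀) ≤ α → (∫ ω, ξ ω ∂P₁) ≤ ∫ ω, ξhat ω ∂P₁ := by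
  obtain ⟨hα0, hα1⟩ := hα
  have hm₀ : Measurable f₀ := hf₀ ▸ Measure.measurable_rnDeriv _ _
  have hm₁ : Measurable f₁ := hf₁ ▸ Measure.measurable_rnDeriv _ _
  have hPd₀ : P.withDensity f₀ = P₀ := hf₀ ▸ Measure.withDensity_rnDeriv_eq _ _ h₀
  have hPd₁ : P.withDensity f₁ = P₁ := hf₁ ▸ Measure.withDensity_rnDeriv_eq _ _ h₁
  -- null sets
  have hf₀top : P {ω | f₀ ω = ∞} = 0 := by
    have h := Measure.rnDeriv_lt_top P₀ P
    rw [← hf₀] at h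
    simpa [ae_iff, lt_top_iff_ne_top] using h
  have hf₁top : P {ω | f₁ ω = ∞} = 0 := by
    have h := Measure.rnDeriv_lt_top P₁ P
    rw [← hf₁] at h
    simpa [ae_iff, lt_top_iff_ne_top] using h
  have hP₀f₀top : P₀ {ω | f₀ ω = ∞} = 0 := h₀ hf₀top
  have hP₀f₁top : P₀ {ω | f₁ ω = ∞} = 0 := h₀ hf₁top
  have hzero_meas : MeasurableSet {ω | f₀ ω = 0} := hm₀ (measurableSet_singleton 0)
  have hP₀f₀zero : P₀ {ω | f₀ ω = 0} = 0 := by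
    rw [← hPd₀, withDensity_apply _ hzero_meas]
    calc ∫⁻ ω in {ω | f₀ ω = 0}, f₀ ω ∂P
        = ∫⁻ _ in {ω | f₀ ω = 0}, 0 ∂P :=
          setLIntegral_congr_fun hzero_meas (fun ω hω => hω)
      _ = 0 := lintegral_zero
  -- the family of critical sets
  set M : ℝ → Set Ω := fun a => {ω | ENNReal.ofReal a * f₀ ω < f₁ ω} with hM
  have hM_meas : ∀ a, MeasurableSet (M a) := fun a => measurableSet_lt (hm₀.const_mul _) hm₁
  have hM_anti : ∀ {a b : ℝ}, a ≤ b → M b ⊆ M a := by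
    intro a b hab ω hω
    exact lt_of_le_of_lt (mul_le_mul_left (ENNReal.ofReal_le_ofReal hab) _) hω
  -- S is nonempty
  have hInter : P₀ (⋂ n : ℕ, M n) = 0 := by
    refine measure_mono_null ?_ (measure_union_null hP₀f₀zero hP₀f₁top)
    intro ω hω
    simp only [Set.mem_iInter] at hω
    by_contra hc
    simp only [Set.mem_union, Set.mem_setOf_eq, not_or] at hc
    obtain ⟨h0, htop⟩ := hc
    by_cases hft : f₀ ω = ∞
    · have h1 := hω 1
      simp only [hM, Set.mem_setOf_eq, hft] at h1
      rw [Nat.cast_one, ENNReal.ofReal_one, one_mul] at h1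
      exact absurd h1 (not_lt.2 le_top)
    · obtain ⟨n, hn⟩ := ENNReal.exists_nat_gt (show f₁ ω / f₀ ω ≠ ∞ from
        ENNReal.div_lt_top htop h0 |>.ne)
      have hle : f₁ ω ≤ (n : ENNReal) * f₀ ω := by
        have h2 : f₁ ω / f₀ ω * f₀ ω ≤ (n : ENNReal) * f₀ ω := mul_le_mul_left hn.le _
        rwa [ENNReal.div_mul_cancel h0 hft] at h2
      have hmem := hω n
      simp only [hM, Set.mem_setOf_eq, ENNReal.ofReal_natCast] at hmem
      exact absurd hle (not_le.2 hmem)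
  have htend : Filter.Tendsto (fun n : ℕ => P₀ (M n)) Filter.atTop (nhds 0) := by
    have := tendsto_measure_iInter_atTop (μ := P₀) (s := fun n : ℕ => M n)
      (fun n => (hM_meas _).nullMeasurableSet)
      (fun i j hij => hM_anti (by exact_mod_cast hij)) ⟨0, measure_ne_top _ _⟩
    rwa [hInter] at this
  obtain ⟨n, hn⟩ : ∃ n : ℕ, P₀ (M n) < ENNReal.ofReal α := by
    have := (tendsto_order.1 htend).2 _ (ENNReal.ofReal_pos.2 hα0)
    exact this.exists
  have hSne : S.Nonempty := by
    refine ⟨max n 1, ?_⟩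
    rw [hS]
    refine ⟨lt_of_lt_of_le one_pos (le_max_right _ _), ?_⟩
    exact le_trans (measure_mono (hM_anti (le_max_left _ _))) hn.le
  have hSlb : ∀ a ∈ S, (0:ℝ) ≤ a := fun a ha => le_of_lt (hS ▸ ha).1
  have hSbdd : BddBelow S := ⟨0, hSlb⟩
  have hInf0 : 0 ≤ sInf S := le_csInf hSne hSlb
  set a₀ := sInf S with ha₀
  set A : Set Ω := {ω | ENNReal.ofReal a₀ * f₀ ω < f₁ ω} with hA
  set B : Set Ω := {ω | f₁ ω = ENNReal.ofReal a₀ * f₀ ω} with hB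
  have hA_meas : MeasurableSet A := hM_meas a₀
  have hB_meas : MeasurableSet B :=
    MeasurableSet.inter (measurableSet_le hm₁ (hm₀.const_mul _))
      (measurableSet_le (hm₀.const_mul _) hm₁) |>.congr (by
        ext ω; simp only [Set.mem_inter_iff, Set.mem_setOf_eq]; exact ⟨fun h => le_antisymm h.1 h.2,
          fun h => ⟨h.le, h.ge⟩⟩)
  -- P₀ A ≤ α
  have hPA : P₀ A ≤ ENNReal.ofReal α := by
    have hmono : Monotone fun k : ℕ => M (a₀ + 1 / (k + 1)) := by
      intro i j hij
      refine hM_anti (add_le_add_right ?_ _)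
      have : (i : ℝ) + 1 ≤ (j : ℝ) + 1 := by exact_mod_cast Nat.succ_le_succ hij
      exact one_div_le_one_div_of_le (by positivity) this
    have hUle : P₀ (⋃ k : ℕ, M (a₀ + 1 / (k + 1))) ≤ ENNReal.ofReal α := by
      rw [hmono.measure_iUnion]
      refine iSup_le fun k => ?_
      obtain ⟨a, haS, halt⟩ := exists_lt_of_csInf_lt hSne
        (show sInf S < a₀ + 1 / (k + 1) by
          rw [← ha₀]; exact lt_add_of_pos_right _ (by positivity))
      rw [hS] at haS
      exact le_trans (measure_mono (hM_anti halt.le)) haS.2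
    have hsub : A ⊆ (⋃ k : ℕ, M (a₀ + 1 / (k + 1))) ∪ {ω | f₀ ω = ∞} := by
      intro ω hω
      by_cases hft : f₀ ω = ∞
      · exact Or.inr hft
      left
      by_cases hf1t : f₁ ω = ∞
      · refine Set.mem_iUnion.2 ⟨0, ?_⟩
        simp only [hM, Set.mem_setOf_eq, hf1t]
        exact ENNReal.mul_lt_top ENNReal.ofReal_lt_top (lt_top_iff_ne_top.2 hft)
      · have hωA : ENNReal.ofReal a₀ * f₀ ω < f₁ ω := hω
        set δ : ENNReal := f₁ ω - ENNReal.ofReal a₀ * f₀ ω with hδ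
        have hδpos : 0 < δ := tsub_pos_iff_lt.2 hωA
        have hδtop : δ ≠ ∞ := by
          refine ne_top_of_le_ne_top hf1t ?_
          exact tsub_le_self
        have hδr : 0 < δ.toReal := ENNReal.toReal_pos hδpos.ne' hδtop
        obtain ⟨k, hk⟩ := exists_nat_gt ((f₀ ω).toReal / δ.toReal)
        refine Set.mem_iUnion.2 ⟨k, ?_⟩
        have hsmall : ENNReal.ofReal (1 / (k + 1)) * f₀ ω < δ := by
          have : ENNReal.ofReal (1 / (k + 1)) * f₀ ω
              = ENNReal.ofReal (1 / (k + 1) * (f₀ ω).toReal) := by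
            rw [ENNReal.ofReal_mul (by positivity), ENNReal.ofReal_toReal hft]
          rw [this, ← ENNReal.ofReal_toReal hδtop]
          refine ENNReal.ofReal_lt_ofReal_iff hδr |>.2 ?_
          rw [div_lt_iff₀ (by positivity)] at hk
          rw [one_div, inv_mul_eq_div, div_lt_iff₀ (by positivity)]
          nlinarith [hδr]
        show ENNReal.ofReal (a₀ + 1 / (k + 1)) * f₀ ω < f₁ ω
        rw [ENNReal.ofReal_add hInf0 (by positivity), add_mul]
        have hfin : ENNReal.ofReal a₀ * f₀ ω ≠ ∞ := (lt_of_lt_of_le hωA le_top).ne_top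
        calc ENNReal.ofReal a₀ * f₀ ω + ENNReal.ofReal (1 / (k + 1)) * f₀ ω
            < ENNReal.ofReal a₀ * f₀ ω + δ := ENNReal.add_lt_add_left hfin hsmall
          _ = f₁ ω := add_tsub_cancel_of_le hωA.le
    calc P₀ A ≤ P₀ ((⋃ k : ℕ, M (a₀ + 1 / (k + 1))) ∪ {ω | f₀ ω = ∞}) := measure_mono hsub
      _ ≤ P₀ (⋃ k : ℕ, M (a₀ + 1 / (k + 1))) + P₀ {ω | f₀ ω = ∞} := measure_union_le _ _
      _ ≤ ENNReal.ofReal α := by rw [hP₀f₀top, add_zero]; exact hUle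
  -- α ≤ P₀ (A ∪ B)
  have hPAB : ENNReal.ofReal α ≤ P₀ (A ∪ B) := by
    set D : Set Ω := {ω | f₁ ω < ENNReal.ofReal a₀ * f₀ ω} with hD
    have hD_meas : MeasurableSet D := measurableSet_lt hm₁ (hm₀.const_mul _)
    have hABc : A ∪ B = Dᶜ := by
      ext ω
      simp only [hA, hB, hD, Set.mem_union, Set.mem_setOf_eq, Set.mem_compl_iff, not_lt]
      constructor
      · rintro (h | h)
        · exact h.le
        · exact h.ge
      · intro h
        rcases eq_or_lt_of_le h with h' | h'
        · exact Or.inr h'.symm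
        · exact Or.inl h'
    have hPD : P₀ D ≤ 1 - ENNReal.ofReal α := by
      rcases eq_or_lt_of_le hInf0 with h0 | h0
      · have : D = ∅ := by
          ext ω
          simp [hD, ← h0]
        rw [this]
        simp
      · -- a₀ > 0
        set F : ℕ → Set Ω := fun k => {ω | f₁ ω ≤ ENNReal.ofReal (a₀ - a₀ / (k + 2)) * f₀ ω}
          with hF
        have hak_pos : ∀ k : ℕ, 0 < a₀ - a₀ / (k + 2) := by
          intro k
          have hk2 : (0:ℝ) < (k:ℝ) + 2 := by positivity
          have : a₀ / ((k:ℝ) + 2) < a₀ := by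
            rw [div_lt_iff₀ hk2]
            nlinarith [mul_pos h0 (show (0:ℝ) < (k:ℝ) + 1 by positivity)]
          linarith
        have hak_lt : ∀ k : ℕ, a₀ - a₀ / (k + 2) < a₀ := fun k =>
          sub_lt_self _ (by positivity)
        have hFle : ∀ k, P₀ (F k) ≤ 1 - ENNReal.ofReal α := by
          intro k
          have hnotS : (a₀ - a₀ / (k + 2)) ∉ S := fun hmem =>
            absurd (csInf_le hSbdd hmem) (not_le.2 (hak_lt k))
          rw [hS] at hnotS
          simp only [Set.mem_setOf_eq, not_and, not_le] at hnotS
          have hgt := hnotS (hak_pos k)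
          have hFc : F k = (M (a₀ - a₀ / (k + 2)))ᶜ := by
            ext ω
            simp [hF, hM, not_lt]
          rw [hFc, prob_compl_eq_one_sub (hM_meas _)]
          exact tsub_le_tsub_left hgt.le 1
        have hFmono : Monotone F := by
          intro i j hij ω hω
          refine le_trans hω (mul_le_mul_left (ENNReal.ofReal_le_ofReal ?_) _)
          have hij' : (i : ℝ) + 2 ≤ (j : ℝ) + 2 := by exact_mod_cast by omega
          have : a₀ / ((j:ℝ) + 2) ≤ a₀ / ((i:ℝ) + 2) :=
            div_le_div_of_nonneg_left hInf0 (by positivity) hij'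
          linarith
        have hDsub : D ⊆ ⋃ k, F k := by
          intro ω hω
          have hωD : f₁ ω < ENNReal.ofReal a₀ * f₀ ω := hω
          by_cases hft : f₀ ω = ∞
          · refine Set.mem_iUnion.2 ⟨0, ?_⟩
            simp only [hF, Set.mem_setOf_eq]
            rw [hft, ENNReal.mul_top (ENNReal.ofReal_pos.2 (hak_pos 0)).ne']
            exact le_top
          · have hcfin : ENNReal.ofReal a₀ * f₀ ω ≠ ∞ :=
              ENNReal.mul_ne_top ENNReal.ofReal_ne_top hft
            set δ : ENNReal := ENNReal.ofReal a₀ * f₀ ω - f₁ ω with hδ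
            have hδpos : 0 < δ := tsub_pos_iff_lt.2 hωD
            have hδtop : δ ≠ ∞ := ne_top_of_le_ne_top hcfin tsub_le_self
            have hδr : 0 < δ.toReal := ENNReal.toReal_pos hδpos.ne' hδtop
            obtain ⟨k, hk⟩ := exists_nat_gt ((a₀ * (f₀ ω).toReal) / δ.toReal)
            refine Set.mem_iUnion.2 ⟨k, ?_⟩
            show f₁ ω ≤ ENNReal.ofReal (a₀ - a₀ / (k + 2)) * f₀ ω
            by_contra hcon
            push_neg at hcon
            have hsmall : ENNReal.ofReal (a₀ / (k + 2)) * f₀ ω < δ := by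
              have heq : ENNReal.ofReal (a₀ / (k + 2)) * f₀ ω
                  = ENNReal.ofReal (a₀ / (k + 2) * (f₀ ω).toReal) := by
                rw [ENNReal.ofReal_mul (by positivity), ENNReal.ofReal_toReal hft]
              rw [heq, ← ENNReal.ofReal_toReal hδtop]
              refine ENNReal.ofReal_lt_ofReal_iff hδr |>.2 ?_
              rw [div_lt_iff₀ (by positivity)] at hk
              rw [div_mul_eq_mul_div, div_lt_iff₀ (by positivity)]
              nlinarith [hδr]
            have hdecomp : ENNReal.ofReal a₀ * f₀ ω
                = ENNReal.ofReal (a₀ - a₀ / (k + 2)) * f₀ ω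
                  + ENNReal.ofReal (a₀ / (k + 2)) * f₀ ω := by
              rw [← add_mul, ← ENNReal.ofReal_add (hak_pos k).le (by positivity)]
              ring_nf
            have : ENNReal.ofReal a₀ * f₀ ω < f₁ ω + δ := by
              rw [hdecomp]
              exact ENNReal.add_lt_add_of_lt_of_le
                ((lt_of_lt_of_le hsmall (le_of_eq (ENNReal.ofReal_toReal hδtop).symm)).trans_le
                  (le_of_eq (ENNReal.ofReal_toReal hδtop))).ne_top hcon hsmall.le
            rw [hδ, add_tsub_cancel_of_le hωD.le] at this
            exact lt_irrefl _ this
        calc P₀ D ≤ P₀ (⋃ k, F k) := measure_mono hDsub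
          _ = ⨆ k, P₀ (F k) := hFmono.measure_iUnion
          _ ≤ 1 - ENNReal.ofReal α := iSup_le hFle
    have hαle1 : ENNReal.ofReal α ≤ 1 := ENNReal.ofReal_le_one.2 hα1.le
    rw [hABc, prob_compl_eq_one_sub hD_meas]
    calc ENNReal.ofReal α = 1 - (1 - ENNReal.ofReal α) :=
          (ENNReal.sub_sub_cancel ENNReal.one_ne_top hαle1).symm
      _ ≤ 1 - P₀ D := tsub_le_tsub_left hPD 1
  -- define γ
  have hAB_disj : Disjoint A B := by
    rw [Set.disjoint_left]
    intro ω hωA hωB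
    exact (ne_of_gt (show ENNReal.ofReal a₀ * f₀ ω < f₁ ω from hωA))
      (show f₁ ω = ENNReal.ofReal a₀ * f₀ ω from hωB)
  have hAB_sum : P₀ (A ∪ B) = P₀ A + P₀ B := measure_union hAB_disj hB_meas
  set pA : ℝ := (P₀ A).toReal with hpA
  set pB : ℝ := (P₀ B).toReal with hpB
  have hpA_le : pA ≤ α := ENNReal.toReal_le_of_le_ofReal hα0.le hPA
  have hα_le : α ≤ pA + pB := by
    have := (ENNReal.ofReal_le_iff_le_toReal (measure_ne_top P₀ (A ∪ B))).1 hPAB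
    rwa [hAB_sum, ENNReal.toReal_add (measure_ne_top _ _) (measure_ne_top _ _)] at this
  have hpB0 : 0 ≤ pB := ENNReal.toReal_nonneg
  set γ : ℝ := if pB = 0 then 0 else (α - pA) / pB with hγ
  have hγmem : γ ∈ Set.Icc (0:ℝ) 1 := by
    rw [hγ]
    split_ifs with h
    · exact ⟨le_refl 0, zero_le_one⟩
    · have hpBpos : 0 < pB := lt_of_le_of_ne hpB0 (Ne.symm h)
      constructor
      · exact div_nonneg (by linarith) hpB0
      · rw [div_le_one hpBpos]; linarith
  have hsize_real : pA + γ * pB = α := by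
    rw [hγ]
    split_ifs with h
    · rw [h] at hα_le ⊢
      simp only [mul_zero, add_zero] at hα_le ⊢
      linarith
    · field_simp; ring
  refine ⟨hSne, hInf0, γ, hγmem, ?_⟩
  intro ξhat hξhat
  subst hξhat
  -- size
  have hξeq : ∀ ω, (A.indicator (fun _ => (1:ℝ)) ω) + γ * (B.indicator (fun _ => (1:ℝ)) ω)
      = A.indicator (fun _ => (1:ℝ)) ω + B.indicator (fun _ => γ) ω := by
    intro ω
    simp only [Set.indicator_apply]
    split_ifs <;> ring
  have hsize : (∫ ω, ((A.indicator (fun _ => (1:ℝ)) ω) +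
      γ * (B.indicator (fun _ => (1:ℝ)) ω)) ∂P₀) = α := by
    simp only [hξeq]
    rw [integral_add ((integrable_const (1:ℝ)).indicator hA_meas)
      ((integrable_const γ).indicator hB_meas),
      integral_indicator_const _ hA_meas, integral_indicator_const _ hB_meas]
    simp only [smul_eq_mul, mul_one]
    rw [measureReal_def, measureReal_def, ← hpA, ← hpB]
    linarith [hsize_real]
  refine ⟨hsize, ?_⟩
  -- optimality
  intro ξ hξm hξ01 hξsize
  set g : Ω → ℝ := fun ω => (A.indicator (fun _ => (1:ℝ)) ω) +
      γ * (B.indicator (fun _ => (1:ℝ)) ω) with hg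
  have hg_meas : Measurable g :=
    ((measurable_const.indicator hA_meas).add
      ((measurable_const.indicator hB_meas).const_mul γ))
  have hg01 : ∀ ω, 0 ≤ g ω ∧ g ω ≤ 1 := by
    intro ω
    by_cases hωA : ω ∈ A
    · have hωB : ω ∉ B := fun h => Set.disjoint_left.1 hAB_disj hωA h
      simp [hg, Set.indicator_of_mem hωA, Set.indicator_of_notMem hωB]
    · by_cases hωB : ω ∈ B
      · simp only [hg, Set.indicator_of_notMem hωA, Set.indicator_of_mem hωB, zero_add, mul_one]
        exact ⟨hγmem.1, hγmem.2⟩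
      · simp [hg, Set.indicator_of_notMem hωA, Set.indicator_of_notMem hωB]
  -- pointwise inequality
  set c : ENNReal := ENNReal.ofReal a₀ with hc
  have hpt : ∀ ω, ENNReal.ofReal (ξ ω) * f₁ ω + ENNReal.ofReal (g ω) * (c * f₀ ω)
      ≤ ENNReal.ofReal (g ω) * f₁ ω + ENNReal.ofReal (ξ ω) * (c * f₀ ω) := by
    intro ω
    have hh1 : ENNReal.ofReal (ξ ω) ≤ 1 := ENNReal.ofReal_le_one.2 (hξ01 ω).2
    rcases lt_trichotomy (c * f₀ ω) (f₁ ω) with hlt | heq | hgt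
    · have hωA : ω ∈ A := hlt
      have hωB : ω ∉ B := fun h =>
        (ne_of_gt hlt) (show f₁ ω = c * f₀ ω from h)
      have : g ω = 1 := by
        simp [hg, Set.indicator_of_mem hωA, Set.indicator_of_notMem hωB]
      rw [this, ENNReal.ofReal_one, one_mul, one_mul]
      exact np_aux hlt.le hh1
    · rw [← heq]
      ring_nf
      exact le_refl _
    · have hωA : ω ∉ A := fun h => asymm hgt (show c * f₀ ω < f₁ ω from h)
      have hωB : ω ∉ B := fun h => (ne_of_lt hgt) (show f₁ ω = c * f₀ ω from h)
      have : g ω = 0 := by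
        simp [hg, Set.indicator_of_notMem hωA, Set.indicator_of_notMem hωB]
      rw [this, ENNReal.ofReal_zero, zero_mul, zero_mul, add_zero, zero_add]
      exact mul_le_mul_right hgt.le _
  -- measurability of the four integrands
  have mξ1 : Measurable fun ω => ENNReal.ofReal (ξ ω) * f₁ ω :=
    hξm.ennreal_ofReal.mul hm₁
  have mg0 : Measurable fun ω => ENNReal.ofReal (g ω) * (c * f₀ ω) :=
    hg_meas.ennreal_ofReal.mul (hm₀.const_mul c)
  have mg1 : Measurable fun ω => ENNReal.ofReal (g ω) * f₁ ω :=
    hg_meas.ennreal_ofReal.mul hm₁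
  have hint : ∫⁻ ω, ENNReal.ofReal (ξ ω) * f₁ ω ∂P
        + ∫⁻ ω, ENNReal.ofReal (g ω) * (c * f₀ ω) ∂P
      ≤ ∫⁻ ω, ENNReal.ofReal (g ω) * f₁ ω ∂P
        + ∫⁻ ω, ENNReal.ofReal (ξ ω) * (c * f₀ ω) ∂P := by
    rw [← lintegral_add_left mξ1, ← lintegral_add_left mg1]
    exact lintegral_mono hpt
  -- rewrite with densities
  have e₁ : ∀ (φ : Ω → ℝ), Measurable φ →
      ∫⁻ ω, ENNReal.ofReal (φ ω) * f₁ ω ∂P = ∫⁻ ω, ENNReal.ofReal (φ ω) ∂P₁ := by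
    intro φ hφ
    rw [← hPd₁, lintegral_withDensity_eq_lintegral_mul _ hm₁ hφ.ennreal_ofReal]
    exact lintegral_congr fun ω => mul_comm _ _
  have e₀ : ∀ (φ : Ω → ℝ), Measurable φ →
      ∫⁻ ω, ENNReal.ofReal (φ ω) * (c * f₀ ω) ∂P = c * ∫⁻ ω, ENNReal.ofReal (φ ω) ∂P₀ := by
    intro φ hφ
    rw [← hPd₀, lintegral_withDensity_eq_lintegral_mul _ hm₀ hφ.ennreal_ofReal]
    simp only [Pi.mul_apply]
    rw [← lintegral_const_mul (f := fun a => f₀ a * ENNReal.ofReal (φ a)) c (hm₀.mul hφ.ennreal_ofReal)]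
    exact lintegral_congr fun ω => by ring
  rw [e₁ ξ hξm, e₁ g hg_meas, e₀ ξ hξm, e₀ g hg_meas] at hint
  -- bridge lintegral / integral
  have bridge : ∀ (μ : Measure Ω) [IsProbabilityMeasure μ] (φ : Ω → ℝ), Measurable φ →
      (∀ ω, 0 ≤ φ ω) →
      (∫ ω, φ ω ∂μ) = (∫⁻ ω, ENNReal.ofReal (φ ω) ∂μ).toReal := by
    intro μ _ φ hφ h0
    rw [integral_eq_lintegral_of_nonneg_ae (Filter.Eventually.of_forall h0)
      hφ.aestronglyMeasurable]
  have lint_le_one : ∀ (μ : Measure Ω) [IsProbabilityMeasure μ] (φ : Ω → ℝ),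
      (∀ ω, φ ω ≤ 1) → (∫⁻ ω, ENNReal.ofReal (φ ω) ∂μ) ≤ 1 := by
    intro μ hμ φ hφ1
    calc (∫⁻ ω, ENNReal.ofReal (φ ω) ∂μ) ≤ ∫⁻ _, 1 ∂μ :=
          lintegral_mono fun ω => ENNReal.ofReal_le_one.2 (hφ1 ω)
      _ = 1 := by simp
  have hI₀g_top : (∫⁻ ω, ENNReal.ofReal (g ω) ∂P₀) ≠ ∞ :=
    (lt_of_le_of_lt (lint_le_one P₀ g fun ω => (hg01 ω).2) ENNReal.one_lt_top).ne
  have hI₀ξ_top : (∫⁻ ω, ENNReal.ofReal (ξ ω) ∂P₀) ≠ ∞ :=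
    (lt_of_le_of_lt (lint_le_one P₀ ξ fun ω => (hξ01 ω).2) ENNReal.one_lt_top).ne
  have hI₁g_top : (∫⁻ ω, ENNReal.ofReal (g ω) ∂P₁) ≠ ∞ :=
    (lt_of_le_of_lt (lint_le_one P₁ g fun ω => (hg01 ω).2) ENNReal.one_lt_top).ne
  have hI₁ξ_top : (∫⁻ ω, ENNReal.ofReal (ξ ω) ∂P₁) ≠ ∞ :=
    (lt_of_le_of_lt (lint_le_one P₁ ξ fun ω => (hξ01 ω).2) ENNReal.one_lt_top).ne
  have hI₀g : (∫⁻ ω, ENNReal.ofReal (g ω) ∂P₀) = ENNReal.ofReal α := by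
    have := bridge P₀ g hg_meas fun ω => (hg01 ω).1
    rw [hsize] at this
    rw [← ENNReal.ofReal_toReal hI₀g_top, ← this]
  have hI₀ξ : (∫⁻ ω, ENNReal.ofReal (ξ ω) ∂P₀) ≤ ENNReal.ofReal α := by
    have hb := bridge P₀ ξ hξm fun ω => (hξ01 ω).1
    rw [← ENNReal.ofReal_toReal hI₀ξ_top]
    exact ENNReal.ofReal_le_ofReal (by rw [← hb]; exact hξsize)
  have hcancel : (∫⁻ ω, ENNReal.ofReal (ξ ω) ∂P₁) ≤ ∫⁻ ω, ENNReal.ofReal (g ω) ∂P₁ := by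
    have h2 : ∫⁻ ω, ENNReal.ofReal (ξ ω) ∂P₁ + c * ∫⁻ ω, ENNReal.ofReal (g ω) ∂P₀
        ≤ ∫⁻ ω, ENNReal.ofReal (g ω) ∂P₁ + c * ∫⁻ ω, ENNReal.ofReal (g ω) ∂P₀ := by
      refine le_trans hint (add_le_add_right (mul_le_mul_right ?_ c) _)
      rw [hI₀g]; exact hI₀ξ
    have hfin : c * ∫⁻ ω, ENNReal.ofReal (g ω) ∂P₀ ≠ ∞ :=
      ENNReal.mul_ne_top ENNReal.ofReal_ne_top hI₀g_top
    exact (ENNReal.add_le_add_iff_right hfin).1 h2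
  rw [bridge P₁ ξ hξm fun ω => (hξ01 ω).1, bridge P₁ g hg_meas fun ω => (hg01 ω).1]
  exact ENNReal.toReal_mono hI₁g_top hcancel
end

section
/- Let (Ω, F, P) be a probability space and (ζ_n)_{n≥1} a sequence of integrable real-valued random variables that is uniformly bounded in L¹(P), i.e. sup_n E|ζ_n| < ∞. Then there exist random variables (ζ̄_n)_{n≥1} and an integrable random variable ζ̄ such that, for each n ≥ 1, ζ̄_n is a finite convex combination of elements of {ζ_k : k ≥ n} (that is, ζ̄_n belongs to the convex hull of {ζ_k : k ≥ n} in the real vector space of measurable functions Ω → ℝ), and ζ̄_n → ζ̄ P-almost surely. -/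
open MeasureTheory Filter Topology
open scoped ENNReal NNReal

namespace KomlosAux

noncomputable def F (x : ℝ) : ℝ := Real.sqrt (1 + x^2)

lemma F_sq (x : ℝ) : F x ^ 2 = 1 + x ^ 2 :=
  Real.sq_sqrt (by positivity)

lemma F_nonneg (x : ℝ) : 0 ≤ F x := Real.sqrt_nonneg _

lemma one_le_F (x : ℝ) : 1 ≤ F x := by
  rw [show (1:ℝ) = Real.sqrt 1 by simp [Real.sqrt_one]]
  exact Real.sqrt_le_sqrt (by nlinarith [sq_nonneg x])

lemma F_le_F {x M : ℝ} (h : |x| ≤ M) : F x ≤ F M := by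
  apply Real.sqrt_le_sqrt
  nlinarith [abs_nonneg x, sq_abs x]

lemma F_le_one_add_abs (x : ℝ) : F x ≤ 1 + |x| := by
  rw [show (1:ℝ) + |x| = Real.sqrt ((1+|x|)^2) by
    rw [Real.sqrt_sq (by positivity)]]
  exact Real.sqrt_le_sqrt (by nlinarith [abs_nonneg x, sq_abs x])

lemma abs_mul_F_le {x M : ℝ} (h : |x| ≤ M) : |x| * F M ≤ M * F x := by
  have hM : 0 ≤ M := le_trans (abs_nonneg x) h
  refine le_of_pow_le_pow_left₀ (two_ne_zero) (mul_nonneg hM (F_nonneg x)) ?_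
  have hx2 : |x|^2 ≤ M^2 := by nlinarith [abs_nonneg x]
  have := F_sq x
  have := F_sq M
  have hsx := sq_abs x
  nlinarith [abs_nonneg x]

lemma F_midpoint_le (x y : ℝ) : F ((x+y)/2) ≤ F x / 2 + F y / 2 := by
  have hp := F_sq x
  have hq := F_sq y
  have hr := F_sq ((x+y)/2)
  have h1 := one_le_F x
  have h2 := one_le_F y
  have h3 := one_le_F ((x+y)/2)
  have hkey : 1 + x*y ≤ F x * F y := by
    nlinarith [sq_nonneg (F x * F y - 1 - x*y), sq_nonneg (x - y),
      mul_pos (lt_of_lt_of_le one_pos h1) (lt_of_lt_of_le one_pos h2)]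
  nlinarith [sq_nonneg (F x / 2 + F y / 2 - F ((x+y)/2))]

noncomputable def dlt (M ε : ℝ) : ℝ := ε^2 / (8 * (1 + M^2) * F M)

lemma dlt_pos {M ε : ℝ} (hε : 0 < ε) : 0 < dlt M ε := by
  have := one_le_F M
  unfold dlt; positivity

set_option maxHeartbeats 1000000 in
private lemma key_alg {M ε x y p q r B : ℝ} (hM : 0 ≤ M) (hε : 0 ≤ ε)
    (hxy : ε ≤ |x - y|)
    (hp2 : p^2 = 1 + x^2) (hq2 : q^2 = 1 + y^2) (hr2 : r^2 = 1 + ((x+y)/2)^2)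
    (hB2 : B^2 = 1 + M^2)
    (h1p : 1 ≤ p) (h1q : 1 ≤ q) (h1r : 1 ≤ r) (h1B : 1 ≤ B)
    (hpB : p ≤ B) (hqB : q ≤ B) (hrB : r ≤ B)
    (hxB : |x| * B ≤ M * p) (hyB : |y| * B ≤ M * q) :
    ε^2 ≤ (p/2 + q/2 - r) * (8 * (1 + M^2) * B) := by
  have h4 : |x+y| * B ≤ M * (p + q) := by
    nlinarith [mul_le_mul_of_nonneg_right (abs_add_le x y) (show (0:ℝ) ≤ B by linarith), hxB, hyB]
  have hsumxy : (x+y)^2 * B^2 ≤ M^2 * (p+q)^2 := by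
    have e2 : (|x+y| * B)^2 ≤ (M * (p+q))^2 :=
      pow_le_pow_left₀ (mul_nonneg (abs_nonneg _) (by linarith)) h4 2
    nlinarith [e2, sq_abs (x+y)]
  have hid : (p-q) * (p+q) = x^2 - y^2 := by linear_combination hp2 - hq2
  have hpq2 : (p-q)^2 * (p+q)^2 = (x-y)^2 * (x+y)^2 := by
    linear_combination ((p-q)*(p+q) + (x^2-y^2)) * hid
  have hpqpos : (0:ℝ) < (p+q)^2 := by positivity
  have h5 : ((p-q)^2 * B^2) * (p+q)^2 ≤ (M^2 * (x-y)^2) * (p+q)^2 := by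
    calc ((p-q)^2 * B^2) * (p+q)^2 = (x-y)^2 * ((x+y)^2 * B^2) := by
          linear_combination B^2 * hpq2
      _ ≤ (x-y)^2 * (M^2 * (p+q)^2) := mul_le_mul_of_nonneg_left hsumxy (sq_nonneg _)
      _ = (M^2 * (x-y)^2) * (p+q)^2 := by ring
  have hdiff : (p-q)^2 * B^2 ≤ M^2 * (x-y)^2 := le_of_mul_le_mul_right h5 hpqpos
  have heps : ε^2 ≤ (x-y)^2 := by nlinarith [sq_abs (x-y), abs_nonneg (x-y)]
  have hpar : (p+q)^2 * B^2 = (2*r)^2*B^2 + (x-y)^2 * B^2 - (p-q)^2*B^2 := by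
    linear_combination (2*B^2) * (hp2 + hq2 - 2*hr2)
  have hBM : (x-y)^2 * B^2 - M^2*(x-y)^2 = (x-y)^2 := by
    linear_combination (x-y)^2 * hB2
  have hmain : (2*r)^2 * B^2 + ε^2 ≤ (p+q)^2 * B^2 := by
    linarith [hpar, hdiff, heps, hBM]
  have h2r : 2*r ≤ p + q := by
    by_contra hcon
    push_neg at hcon
    have h8 : (p+q)^2 < (2*r)^2 := by
      apply pow_lt_pow_left₀ hcon (by linarith)
      norm_num
    have h9 : (p+q)^2 * B^2 < (2*r)^2 * B^2 :=
      mul_lt_mul_of_pos_right h8 (by positivity)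
    linarith [hmain, h9, sq_nonneg ε]
  have hfac : 0 ≤ p + q - 2*r := by linarith
  have h7 : p + q + 2*r ≤ 4*B := by linarith
  have h6 : (p+q-2*r)*((p+q+2*r)*B^2) ≤ (p+q-2*r)*((4*B)*B^2) :=
    mul_le_mul_of_nonneg_left (mul_le_mul_of_nonneg_right h7 (sq_nonneg B)) hfac
  have hconc : ε^2 ≤ (p+q-2*r)*(4*B^3) := by nlinarith [hmain, h6]
  have hfin : (p/2+q/2-r)*(8*(1+M^2)*B) = (p+q-2*r)*(4*B^3) := by
    linear_combination (-(4*B*(p+q-2*r)))*hB2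
  rw [hfin]
  exact hconc

lemma key_ineq {M ε x y : ℝ} (hε : 0 ≤ ε) (hx : |x| ≤ M) (hy : |y| ≤ M)
    (hxy : ε ≤ |x - y|) : dlt M ε ≤ F x / 2 + F y / 2 - F ((x+y)/2) := by
  have hM : 0 ≤ M := le_trans (abs_nonneg x) hx
  have hmid : |(x+y)/2| ≤ M := by
    rw [abs_le] at hx hy ⊢
    constructor
    · linarith [hx.1, hy.1]
    · linarith [hx.2, hy.2]
  have h1B := one_le_F M
  have hBpos : (0:ℝ) < 8 * (1 + M^2) * F M := by positivity
  rw [dlt, div_le_iff₀ hBpos]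
  exact key_alg hM hε hxy (F_sq x) (F_sq y) (F_sq _) (F_sq M) (one_le_F x) (one_le_F y)
    (one_le_F _) h1B (F_le_F hx) (F_le_F hy) (F_le_F hmid) (abs_mul_F_le hx) (abs_mul_F_le hy)


lemma continuous_F : Continuous F := by
  unfold F
  fun_prop

section Meas

variable {Ω : Type*} [MeasurableSpace Ω] {P : Measure Ω} [IsProbabilityMeasure P]

lemma integrable_F {g : Ω → ℝ} (hg : Integrable g P) :
    Integrable (fun ω => F (g ω)) P := by
  have hm : AEStronglyMeasurable (fun ω => F (g ω)) P :=
    continuous_F.comp_aestronglyMeasurable hg.aestronglyMeasurable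
  refine Integrable.mono (g := fun ω => 1 + |g ω|)
    (show Integrable (fun ω => 1 + |g ω|) P from (integrable_const 1).add hg.abs) hm ?_
  filter_upwards with ω
  rw [Real.norm_eq_abs, Real.norm_eq_abs,
    abs_of_nonneg (F_nonneg _), abs_of_nonneg (by positivity : (0:ℝ) ≤ 1 + |g ω|)]
  exact F_le_one_add_abs _

lemma integrable_negF {g : Ω → ℝ} (hg : Integrable g P) :
    Integrable (fun ω => -F (g ω)) P := (integrable_F hg).neg'

lemma negF_integral_le_neg_one {g : Ω → ℝ} (hg : Integrable g P) :
    (∫ ω, -F (g ω) ∂P) ≤ -1 := by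
  calc (∫ ω, -F (g ω) ∂P) ≤ ∫ _, (-1 : ℝ) ∂P := by
        apply integral_mono (integrable_negF hg) (integrable_const _)
        intro ω
        simp only [neg_le_neg_iff]
        exact one_le_F _
    _ = -1 := by simp

lemma neg_le_negF_integral {g : Ω → ℝ} (hg : Integrable g P) :
    -(1 + ∫ ω, |g ω| ∂P) ≤ (∫ ω, -F (g ω) ∂P) := by
  have h1 : Integrable (fun ω => -(1 + |g ω|)) P :=
    (show Integrable (fun ω => 1 + |g ω|) P from (integrable_const 1).add hg.abs).neg'
  calc -(1 + ∫ ω, |g ω| ∂P) = ∫ ω, -(1 + |g ω|) ∂P := by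
        rw [integral_neg, integral_add (integrable_const _) hg.abs]
        simp
    _ ≤ ∫ ω, -F (g ω) ∂P := by
        apply integral_mono h1 (integrable_negF hg)
        intro ω
        simp only [neg_le_neg_iff]
        exact F_le_one_add_abs _

lemma markov_est {g : Ω → ℝ} (hg : Integrable g P) {C M : ℝ}
    (hgC : (∫ ω, |g ω| ∂P) ≤ C) (hM : 0 < M) :
    P {ω | M ≤ |g ω|} ≤ ENNReal.ofReal (C / M) := by
  have hml := mul_meas_ge_le_lintegral₀ (μ := P)
    (f := fun ω => ENNReal.ofReal |g ω|)
    (ENNReal.measurable_ofReal.comp_aemeasurable hg.abs.aemeasurable) (ENNReal.ofReal M)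
  have hsub : {ω | M ≤ |g ω|} ⊆ {ω | ENNReal.ofReal M ≤ ENNReal.ofReal |g ω|} :=
    fun ω h => ENNReal.ofReal_le_ofReal h
  have hlint : (∫⁻ ω, ENNReal.ofReal |g ω| ∂P) = ENNReal.ofReal (∫ ω, |g ω| ∂P) :=
    (ofReal_integral_eq_lintegral_ofReal hg.abs
      (Filter.Eventually.of_forall fun ω => abs_nonneg _)).symm
  have h1 : ENNReal.ofReal M * P {ω | M ≤ |g ω|} ≤ ENNReal.ofReal C :=
    le_trans (mul_le_mul_right (measure_mono hsub) _)
      (hml.trans (hlint.trans_le (ENNReal.ofReal_le_ofReal hgC)))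
  rw [ENNReal.ofReal_div_of_pos hM]
  rw [ENNReal.le_div_iff_mul_le (Or.inl (by simpa using hM)) (Or.inl ENNReal.ofReal_ne_top)]
  rwa [mul_comm]

lemma conc_est {gm gn : Ω → ℝ} (hm : Integrable gm P) (hn : Integrable gn P)
    {M ε R : ℝ} (hε : 0 < ε)
    (hR : (∫ ω, -F ((gm ω + gn ω)/2) ∂P)
        - (∫ ω, -F (gm ω) ∂P)/2 - (∫ ω, -F (gn ω) ∂P)/2 ≤ R) :
    P {ω | |gm ω| ≤ M ∧ |gn ω| ≤ M ∧ ε ≤ |gm ω - gn ω|}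
      ≤ ENNReal.ofReal (R / dlt M ε) := by
  have hmid : Integrable (fun ω => (gm ω + gn ω)/2) P := (hm.add hn).div_const 2
  set φ : Ω → ℝ := fun ω => F (gm ω)/2 + F (gn ω)/2 - F ((gm ω + gn ω)/2) with hφ
  have hφ0 : ∀ ω, 0 ≤ φ ω := fun ω => by
    have := F_midpoint_le (gm ω) (gn ω)
    simp only [hφ]
    linarith
  have hFm : Integrable (fun ω => F (gm ω)) P := integrable_F hm
  have hFn : Integrable (fun ω => F (gn ω)) P := integrable_F hn
  have hFmid : Integrable (fun ω => F ((gm ω + gn ω)/2)) P := integrable_F hmid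
  have hsumint : Integrable (fun ω => F (gm ω)/2 + F (gn ω)/2) P :=
    (hFm.div_const 2).add (hFn.div_const 2)
  have hφint : Integrable φ P := by
    simp only [hφ]
    exact hsumint.sub hFmid
  have hφR : (∫ ω, φ ω ∂P) ≤ R := by
    have e : (∫ ω, φ ω ∂P) = (∫ ω, F (gm ω) ∂P)/2 + (∫ ω, F (gn ω) ∂P)/2
        - ∫ ω, F ((gm ω + gn ω)/2) ∂P := by
      simp only [hφ]
      rw [integral_sub hsumint hFmid,
        integral_add (hFm.div_const 2) (hFn.div_const 2), integral_div, integral_div]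
    rw [integral_neg, integral_neg, integral_neg] at hR
    linarith [e, hR]
  have hδpos : 0 < dlt M ε := dlt_pos hε
  -- A ⊆ {dlt ≤ φ}
  have hsub : {ω | |gm ω| ≤ M ∧ |gn ω| ≤ M ∧ ε ≤ |gm ω - gn ω|}
      ⊆ {ω | ENNReal.ofReal (dlt M ε) ≤ ENNReal.ofReal (φ ω)} := by
    intro ω ⟨h1, h2, h3⟩
    exact ENNReal.ofReal_le_ofReal (key_ineq hε.le h1 h2 h3)
  have hφmeas : AEMeasurable (fun ω => ENNReal.ofReal (φ ω)) P := by
    apply ENNReal.measurable_ofReal.comp_aemeasurable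
    exact hφint.aemeasurable
  have hml := mul_meas_ge_le_lintegral₀ (μ := P) hφmeas (ENNReal.ofReal (dlt M ε))
  have hlint : (∫⁻ ω, ENNReal.ofReal (φ ω) ∂P) = ENNReal.ofReal (∫ ω, φ ω ∂P) :=
    (ofReal_integral_eq_lintegral_ofReal hφint (Filter.Eventually.of_forall hφ0)).symm
  have h1 : ENNReal.ofReal (dlt M ε) * P {ω | |gm ω| ≤ M ∧ |gn ω| ≤ M ∧ ε ≤ |gm ω - gn ω|}
      ≤ ENNReal.ofReal R :=
    le_trans (mul_le_mul_right (measure_mono hsub) _)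
      (hml.trans (hlint.trans_le (ENNReal.ofReal_le_ofReal hφR)))
  rw [ENNReal.ofReal_div_of_pos hδpos]
  rw [ENNReal.le_div_iff_mul_le (Or.inl (by simpa using hδpos)) (Or.inl ENNReal.ofReal_ne_top)]
  rwa [mul_comm]

end Meas

end KomlosAux

open KomlosAux in
set_option maxHeartbeats 1000000 in
/-- **Komlós-type lemma (convex-combination form).**
If `(ζ n)` is a sequence of integrable random variables that is uniformly bounded in `L¹(P)`,
then there exist random variables `ζbar n`, each a finite convex combination of elements of
`{ζ k : k ≥ n}`, and an integrable random variable `ζlim`, such that `ζbar n → ζlim` P-a.s. -/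
theorem stmt_3 {Ω : Type*} [MeasurableSpace Ω] (P : Measure Ω) [IsProbabilityMeasure P]
    (ζ : ℕ → Ω → ℝ) (hint : ∀ n, Integrable (ζ n) P)
    (hbdd : ∃ C : ℝ, ∀ n, (∫ ω, |ζ n ω| ∂P) ≤ C) :
    ∃ (ζbar : ℕ → Ω → ℝ) (ζlim : Ω → ℝ),
      Integrable ζlim P ∧
      (∀ n, ζbar n ∈ convexHull ℝ {f : Ω → ℝ | ∃ k ≥ n, f = ζ k}) ∧
      (∀ᵐ ω ∂P, Tendsto (fun n => ζbar n ω) atTop (nhds (ζlim ω))) := by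
  classical
  obtain ⟨C₀, hC₀⟩ := hbdd
  set C : ℝ := max C₀ 1 with hCdef
  have hC1 : (1:ℝ) ≤ C := le_max_right _ _
  have hCpos : (0:ℝ) < C := lt_of_lt_of_le one_pos hC1
  set G : ℕ → Set (Ω → ℝ) := fun n => convexHull ℝ {f : Ω → ℝ | ∃ k ≥ n, f = ζ k} with hGdef
  have hGanti : ∀ m n, m ≤ n → G n ⊆ G m := by
    intro m n h
    apply convexHull_mono
    rintro f ⟨k, hk, rfl⟩
    exact ⟨k, le_trans h hk, rfl⟩
  have hGself : ∀ n, ζ n ∈ G n := fun n => subset_convexHull ℝ _ ⟨n, le_refl n, rfl⟩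
  have hGD : ∀ n, ∀ g ∈ G n, Integrable g P ∧ (∫ ω, |g ω| ∂P) ≤ C := by
    intro n
    have hsub : G n ⊆ {g : Ω → ℝ | Integrable g P ∧ (∫ ω, |g ω| ∂P) ≤ C} := by
      apply convexHull_min
      · rintro f ⟨k, _, rfl⟩
        exact ⟨hint k, le_trans (hC₀ k) (le_max_left _ _)⟩
      · rintro f ⟨hf1, hf2⟩ g ⟨hg1, hg2⟩ a b ha hb hab
        have hintc : Integrable (a • f + b • g) P := (hf1.smul a).add (hg1.smul b)
        refine ⟨hintc, ?_⟩
        have hpt : ∀ ω, |(a • f + b • g) ω| ≤ a * |f ω| + b * |g ω| := fun ω => by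
          simp only [Pi.add_apply, Pi.smul_apply, smul_eq_mul]
          calc |a * f ω + b * g ω| ≤ |a * f ω| + |b * g ω| := abs_add_le _ _
            _ = a * |f ω| + b * |g ω| := by
                rw [abs_mul, abs_mul, abs_of_nonneg ha, abs_of_nonneg hb]
        have hint2 : Integrable (fun ω => a * |f ω| + b * |g ω|) P :=
          (hf1.abs.const_mul a).add (hg1.abs.const_mul b)
        calc (∫ ω, |(a • f + b • g) ω| ∂P) ≤ ∫ ω, a * |f ω| + b * |g ω| ∂P :=
              integral_mono hintc.abs hint2 hpt
          _ = a * (∫ ω, |f ω| ∂P) + b * (∫ ω, |g ω| ∂P) := by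
              rw [integral_add (hf1.abs.const_mul a) (hg1.abs.const_mul b),
                integral_const_mul, integral_const_mul]
          _ ≤ a * C + b * C :=
              add_le_add (mul_le_mul_of_nonneg_left hf2 ha) (mul_le_mul_of_nonneg_left hg2 hb)
          _ = C := by rw [← add_mul, hab, one_mul]
    exact fun g hg => hsub hg
  set J : (Ω → ℝ) → ℝ := fun g => ∫ ω, -F (g ω) ∂P with hJdef
  set T : ℕ → ℝ := fun n => sSup (J '' G n) with hTdef
  have hTne : ∀ n, (J '' G n).Nonempty := fun n => ⟨J (ζ n), ζ n, hGself n, rfl⟩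
  have hTbdd : ∀ n, BddAbove (J '' G n) := fun n => ⟨-1, by
    rintro x ⟨g, hg, rfl⟩
    exact negF_integral_le_neg_one (hGD n g hg).1⟩
  have hTanti : Antitone T := fun m n hmn =>
    csSup_le_csSup (hTbdd m) (hTne n) (Set.image_mono (hGanti m n hmn))
  have hTlb : ∀ n, -(1+C) ≤ T n := by
    intro n
    have h2 : J (ζ n) ≤ T n := le_csSup (hTbdd n) ⟨ζ n, hGself n, rfl⟩
    have h3 := neg_le_negF_integral (P := P) (hint n)
    have h4 : -(1+C) ≤ -(1 + ∫ ω, |ζ n ω| ∂P) := by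
      have h5 := le_trans (hC₀ n) (le_max_left C₀ 1)
      rw [← hCdef] at h5
      simp only [neg_le_neg_iff]
      linarith
    exact le_trans (le_trans h4 h3) h2
  have hTbb : BddBelow (Set.range T) := ⟨-(1+C), by rintro x ⟨n, rfl⟩; exact hTlb n⟩
  set S : ℝ := ⨅ n, T n with hSdef
  have hTS : Tendsto T atTop (𝓝 S) := tendsto_atTop_ciInf hTanti hTbb
  have hST : ∀ n, S ≤ T n := fun n => ciInf_le hTbb n
  have hchoice : ∀ n : ℕ, ∃ g ∈ G n, T n - 1/((n:ℝ)+1) < J g := by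
    intro n
    have hd : (0:ℝ) < 1/((n:ℝ)+1) := by positivity
    obtain ⟨x, hx, hlt'⟩ := exists_lt_of_lt_csSup (hTne n) (by linarith : T n - 1/((n:ℝ)+1) < T n)
    obtain ⟨g, hg, rfl⟩ := hx
    exact ⟨g, hg, hlt'⟩
  choose g hgG hgJ using hchoice
  -- parameters
  set ε : ℕ → ℝ := fun k => (1/2)^k with hεdef
  have hεpos : ∀ k, 0 < ε k := fun k => by positivity
  set M : ℕ → ℝ := fun k => 4 * 2^k * C with hMdef
  have hMpos : ∀ k, 0 < M k := fun k => by positivity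
  set δ : ℕ → ℝ := fun k => dlt (M k) (ε k) with hδdef
  have hδpos : ∀ k, 0 < δ k := fun k => dlt_pos (hεpos k)
  set η : ℕ → ℝ := fun k => δ k * ε k / 4 with hηdef
  have hηpos : ∀ k, 0 < η k := fun k => by
    have := hδpos k; have := hεpos k; positivity
  have hNex : ∀ k, ∃ N : ℕ, ∀ m, N ≤ m → T m - S ≤ η k ∧ 1/((m:ℝ)+1) ≤ η k := by
    intro k
    have h1 : ∀ᶠ m in atTop, T m < S + η k :=
      hTS.eventually_lt_const (by linarith [hηpos k] : S < S + η k)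
    have h2 : ∀ᶠ m : ℕ in atTop, 1/((m:ℝ)+1) < η k :=
      tendsto_one_div_add_atTop_nhds_zero_nat.eventually_lt_const (hηpos k)
    obtain ⟨N, hN⟩ := eventually_atTop.mp (h1.and h2)
    exact ⟨N, fun m hm => ⟨by linarith [(hN m hm).1], le_of_lt (hN m hm).2⟩⟩
  choose N hN using hNex
  -- indices
  set idx : ℕ → ℕ := fun k => Nat.rec (N 0) (fun k ih => max (ih + 1) (N (k+1))) k with hidxdef
  have hidxsucc : ∀ k, idx (k+1) = max (idx k + 1) (N (k+1)) := fun k => rfl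
  have hidxN : ∀ k, N k ≤ idx k := by
    intro k
    cases k with
    | zero => exact le_refl _
    | succ k => rw [hidxsucc k]; exact le_max_right _ _
  have hidxmono : ∀ k, idx k < idx (k+1) := fun k => by
    rw [hidxsucc k]; exact lt_of_lt_of_le (Nat.lt_succ_self _) (le_max_left _ _)
  have hidxk : ∀ k, k ≤ idx k := by
    intro k
    induction k with
    | zero => exact Nat.zero_le _
    | succ k ih => exact lt_of_le_of_lt ih (hidxmono k)
  -- bad sets
  set s : ℕ → Set Ω := fun k => {ω | ε k ≤ |g (idx k) ω - g (idx (k+1)) ω|} with hsdef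
  have hsk : ∀ k, P (s k) ≤ ENNReal.ofReal (ε k) := by
    intro k
    set m := idx k with hm
    set n' := idx (k+1) with hn'
    have hmn : m ≤ n' := (hidxmono k).le
    have hgm := hGD m (g m) (hgG m)
    have hgn := hGD n' (g n') (hgG n')
    -- decomposition
    have hdecomp : s k ⊆ ({ω | M k ≤ |g m ω|} ∪ {ω | M k ≤ |g n' ω|})
        ∪ {ω | |g m ω| ≤ M k ∧ |g n' ω| ≤ M k ∧ ε k ≤ |g m ω - g n' ω|} := by
      intro ω hω
      by_cases h1 : M k ≤ |g m ω|
      · exact Or.inl (Or.inl h1)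
      · by_cases h2 : M k ≤ |g n' ω|
        · exact Or.inl (Or.inr h2)
        · exact Or.inr ⟨le_of_lt (lt_of_not_ge h1), le_of_lt (lt_of_not_ge h2), hω⟩
    -- markov bounds
    have hmark1 : P {ω | M k ≤ |g m ω|} ≤ ENNReal.ofReal (ε k / 4) := by
      have := markov_est hgm.1 hgm.2 (hMpos k)
      have heq : C / M k = ε k / 4 := by
        rw [hMdef, hεdef]
        field_simp
        rw [← mul_pow]; norm_num
      rwa [heq] at this
    have hmark2 : P {ω | M k ≤ |g n' ω|} ≤ ENNReal.ofReal (ε k / 4) := by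
      have := markov_est hgn.1 hgn.2 (hMpos k)
      have heq : C / M k = ε k / 4 := by
        rw [hMdef, hεdef]
        field_simp
        rw [← mul_pow]; norm_num
      rwa [heq] at this
    -- concentration bound
    have hconc : P {ω | |g m ω| ≤ M k ∧ |g n' ω| ≤ M k ∧ ε k ≤ |g m ω - g n' ω|}
        ≤ ENNReal.ofReal (ε k / 2) := by
      have hmidmem : (fun ω => (g m ω + g n' ω)/2) ∈ G m := by
        have hcv := (convex_convexHull ℝ {f : Ω → ℝ | ∃ j ≥ m, f = ζ j})
        have h2 := hcv (hgG m) (hGanti m n' hmn (hgG n'))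
          (by norm_num : (0:ℝ) ≤ 1/2) (by norm_num : (0:ℝ) ≤ 1/2) (by norm_num)
        have : ((1:ℝ)/2) • g m + ((1:ℝ)/2) • g n' = fun ω => (g m ω + g n' ω)/2 := by
          funext ω
          simp only [Pi.add_apply, Pi.smul_apply, smul_eq_mul]
          ring
        rw [hGdef]
        rw [← this]
        exact h2
      have hJh : J (fun ω => (g m ω + g n' ω)/2) ≤ T m := le_csSup (hTbdd m) ⟨_, hmidmem, rfl⟩
      have hJm : T m - 1/((m:ℝ)+1) < J (g m) := hgJ m
      have hJn' : S - 1/((m:ℝ)+1) ≤ J (g n') := by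
        have h1 : T n' - 1/((n':ℝ)+1) < J (g n') := hgJ n'
        have h2 : S ≤ T n' := hST n'
        have h3 : 1/((n':ℝ)+1) ≤ 1/((m:ℝ)+1) := by
          apply one_div_le_one_div_of_le (by positivity)
          have hcst := (Nat.cast_le (α := ℝ)).mpr hmn
          linarith
        linarith
      have hR : (∫ ω, -F ((g m ω + g n' ω)/2) ∂P)
          - (∫ ω, -F (g m ω) ∂P)/2 - (∫ ω, -F (g n' ω) ∂P)/2
          ≤ T m - S + 1/((m:ℝ)+1) := by
        have e1 : J (fun ω => (g m ω + g n' ω)/2) = ∫ ω, -F ((g m ω + g n' ω)/2) ∂P := rfl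
        have e2 : J (g m) = ∫ ω, -F (g m ω) ∂P := rfl
        have e3 : J (g n') = ∫ ω, -F (g n' ω) ∂P := rfl
        rw [← e1, ← e2, ← e3]
        linarith [hST m, hJh, hJm, hJn']
      have hce := conc_est (M := M k) hgm.1 hgn.1 (hεpos k) hR
      refine le_trans hce (ENNReal.ofReal_le_ofReal ?_)
      have hmNk : N k ≤ m := hidxN k
      obtain ⟨hη1, hη2⟩ := hN k m hmNk
      have hRle : T m - S + 1/((m:ℝ)+1) ≤ 2 * η k := by linarith
      have hδk := hδpos k
      rw [div_le_iff₀ hδk]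
      calc T m - S + 1/((m:ℝ)+1) ≤ 2 * η k := hRle
        _ = ε k / 2 * δ k := by rw [hηdef]; ring
    calc P (s k) ≤ P (({ω | M k ≤ |g m ω|} ∪ {ω | M k ≤ |g n' ω|})
          ∪ {ω | |g m ω| ≤ M k ∧ |g n' ω| ≤ M k ∧ ε k ≤ |g m ω - g n' ω|}) :=
          measure_mono hdecomp
      _ ≤ P ({ω | M k ≤ |g m ω|} ∪ {ω | M k ≤ |g n' ω|})
          + P {ω | |g m ω| ≤ M k ∧ |g n' ω| ≤ M k ∧ ε k ≤ |g m ω - g n' ω|} :=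
          measure_union_le _ _
      _ ≤ (P {ω | M k ≤ |g m ω|} + P {ω | M k ≤ |g n' ω|})
          + P {ω | |g m ω| ≤ M k ∧ |g n' ω| ≤ M k ∧ ε k ≤ |g m ω - g n' ω|} :=
          add_le_add_left (measure_union_le _ _) _
      _ ≤ (ENNReal.ofReal (ε k / 4) + ENNReal.ofReal (ε k / 4)) + ENNReal.ofReal (ε k / 2) :=
          add_le_add (add_le_add hmark1 hmark2) hconc
      _ = ENNReal.ofReal (ε k) := by
          rw [← ENNReal.ofReal_add (by positivity) (by positivity),
            ← ENNReal.ofReal_add (by positivity) (by positivity)]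
          congr 1
          ring
  -- Borel-Cantelli
  have hsum : (∑' k, P (s k)) ≠ ⊤ := by
    have hle := ENNReal.tsum_le_tsum hsk
    refine ne_top_of_le_ne_top ?_ hle
    have he : ∀ k, ENNReal.ofReal (ε k) = (ENNReal.ofReal (1/2))^k := fun k => by
      rw [hεdef]
      exact ENNReal.ofReal_pow (by norm_num) k
    rw [tsum_congr he, ENNReal.tsum_geometric]
    have hhalf : ENNReal.ofReal (1/2) < 1 := ENNReal.ofReal_lt_one.mpr (by norm_num)
    exact ENNReal.inv_ne_top.mpr (tsub_pos_of_lt hhalf).ne' 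
  have hBC := MeasureTheory.ae_eventually_notMem (μ := P) hsum
  -- a.e. convergence
  have hconv : ∀ᵐ ω ∂P, ∃ l : ℝ, Tendsto (fun k => g (idx k) ω) atTop (𝓝 l) := by
    filter_upwards [hBC] with ω hω
    obtain ⟨K, hK⟩ := eventually_atTop.mp hω
    have hc : CauchySeq (fun j => g (idx (K + j)) ω) := by
      apply cauchySeq_of_le_geometric (1/2) 1 (by norm_num)
      intro j
      have h1 := hK (K + j) (Nat.le_add_right K j)
      rw [hsdef] at h1
      simp only [Set.mem_setOf_eq, not_le] at h1
      rw [Real.dist_eq]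
      have h2 : |g (idx (K+j)) ω - g (idx (K+j+1)) ω| < ε (K+j) := h1
      have h3 : ε (K + j) ≤ 1 * (1/2)^j := by
        simp only [hεdef, one_mul, pow_add]
        have h4 : ((1:ℝ)/2)^K ≤ 1 := pow_le_one₀ (by norm_num) (by norm_num)
        have h5 : (0:ℝ) ≤ (1/2:ℝ)^j := pow_nonneg (by norm_num) j
        nlinarith
      calc dist (g (idx (K+j)) ω) (g (idx (K+j+1)) ω)
          = |g (idx (K+j)) ω - g (idx (K+j+1)) ω| := Real.dist_eq _ _
        _ ≤ 1 * (1/2)^j := le_trans h2.le h3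
    obtain ⟨l, hl⟩ := cauchySeq_tendsto_of_complete hc
    refine ⟨l, ?_⟩
    rw [← tendsto_add_atTop_iff_nat K]
    have : (fun n => g (idx (n + K)) ω) = fun j => g (idx (K + j)) ω := by
      funext j; rw [add_comm]
    rw [this]
    exact hl
  set ζlim : Ω → ℝ := fun ω => limUnder atTop (fun k => g (idx k) ω) with hζlimdef
  have hconv' : ∀ᵐ ω ∂P, Tendsto (fun k => g (idx k) ω) atTop (𝓝 (ζlim ω)) := by
    filter_upwards [hconv] with ω hl
    obtain ⟨l, hl⟩ := hl
    have : ζlim ω = l := hl.limUnder_eq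
    rw [this]
    exact hl
  -- integrability of the limit
  have hmeas : AEStronglyMeasurable ζlim P :=
    aestronglyMeasurable_of_tendsto_ae atTop
      (fun k => (hGD _ _ (hgG (idx k))).1.aestronglyMeasurable) hconv'
  have hbound : ∀ k : ℕ, (∫⁻ ω, ‖g (idx k) ω‖₊ ∂P) ≤ ENNReal.ofReal C := by
    intro k
    have h1 := hGD _ _ (hgG (idx k))
    have e : (∫⁻ ω, (‖g (idx k) ω‖₊ : ℝ≥0∞) ∂P) = ENNReal.ofReal (∫ ω, |g (idx k) ω| ∂P) := by
      rw [ofReal_integral_eq_lintegral_ofReal h1.1.abs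
        (Filter.Eventually.of_forall fun ω => abs_nonneg _)]
      apply lintegral_congr
      intro ω
      rw [← enorm_eq_nnnorm, ← ofReal_norm, Real.norm_eq_abs]
    rw [e]
    exact ENNReal.ofReal_le_ofReal h1.2
  have hfin : HasFiniteIntegral ζlim P := by
    have hae : ∀ᵐ ω ∂P, (‖ζlim ω‖₊ : ℝ≥0∞)
        = Filter.liminf (fun k => (‖g (idx k) ω‖₊ : ℝ≥0∞)) atTop := by
      filter_upwards [hconv'] with ω hω
      have ht : Tendsto (fun k => (‖g (idx k) ω‖₊ : ℝ≥0∞)) atTop (𝓝 (‖ζlim ω‖₊ : ℝ≥0∞)) :=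
        ENNReal.tendsto_coe.2 hω.nnnorm
      exact ht.liminf_eq.symm
    have hlim : (∫⁻ ω, ‖ζlim ω‖₊ ∂P) ≤ ENNReal.ofReal C := by
      calc (∫⁻ ω, ‖ζlim ω‖₊ ∂P)
          = ∫⁻ ω, Filter.liminf (fun k => (‖g (idx k) ω‖₊ : ℝ≥0∞)) atTop ∂P :=
            lintegral_congr_ae hae
        _ ≤ Filter.liminf (fun k => ∫⁻ ω, (‖g (idx k) ω‖₊ : ℝ≥0∞) ∂P) atTop :=
            lintegral_liminf_le' (fun k => (hGD _ _ (hgG (idx k))).1.aestronglyMeasurable.enorm)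
        _ ≤ ENNReal.ofReal C :=
            liminf_le_of_frequently_le' (Filter.Frequently.of_forall hbound)
    exact lt_of_le_of_lt hlim ENNReal.ofReal_lt_top
  refine ⟨fun j => g (idx j), ζlim, ⟨hmeas, hfin⟩, ?_, hconv'⟩
  intro j
  exact hGanti j (idx j) (hidxk j) (hgG (idx j))
end

section
/- Let d ≥ 1, T > 0, let ρ : ℝ^d → ℝ be continuous with ρ⁻ := max(−ρ, 0) bounded and with x ↦ ρ(x)x of linear growth, and let σ : ℝ^d → M_d(ℝ) be continuous with linear growth, i.e. there is C > 0 with ‖ρ(x)x‖ + ‖σ(x)‖ ≤ C(1 + ‖x‖) for all x. Let U, V : [0,T]×ℝ^d → ℝ be continuous on [0,T]×ℝ^d, C^{1,2} on [0,T)×ℝ^d, and of polynomial growth. Assume that on [0,T)×ℝ^d one has L U(t,x) ≤ ρ(x)U(t,x) and L V(t,x) ≥ ρ(x)V(t,x), and that U(T,·) ≥ V(T,·) on ℝ^d. Then U ≥ V on [0,T]×ℝ^d. -/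
open MeasureTheory Set Matrix

attribute [local instance] Matrix.normedAddCommGroup

section Aux
open Set Filter Topology

/-- Right derivative at a one-sided minimum on `Ico 0 T` is nonneg. -/
lemma aux_deriv_nonneg_of_min {h : ℝ → ℝ} {θ t T : ℝ} (ht : t < T) (ht0 : 0 ≤ t)
    (hder : HasDerivWithinAt h θ (Ico 0 T) t)
    (hmin : ∀ s ∈ Ico 0 T, h t ≤ h s) : 0 ≤ θ := by
  have hmem : t ∈ Ico (0:ℝ) T := ⟨ht0, ht⟩
  have hslope := hasDerivWithinAt_iff_tendsto_slope.1 hder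
  have hsub : Ioo t T ⊆ (Ico 0 T) \ {t} := fun s hs =>
    ⟨⟨le_trans ht0 hs.1.le, hs.2⟩, ne_of_gt hs.1⟩
  have hne : (𝓝[Ioo t T] t).NeBot := by
    rw [← mem_closure_iff_nhdsWithin_neBot, closure_Ioo (ne_of_lt ht)]
    exact ⟨le_refl t, ht.le⟩
  have htend : Tendsto (slope h t) (𝓝[Ioo t T] t) (𝓝 θ) :=
    hslope.mono_left (nhdsWithin_mono _ hsub)
  refine ge_of_tendsto htend ?_
  filter_upwards [self_mem_nhdsWithin] with s hs
  have h1 : h t ≤ h s := hmin s ⟨le_trans ht0 hs.1.le, hs.2⟩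
  have h2 : 0 < s - t := sub_pos.2 hs.1
  rw [slope_def_field]
  exact div_nonneg (by linarith) h2.le

/-- 1D second-order condition at a global minimum. -/
lemma aux_second_deriv_nonneg {φ ψ : ℝ → ℝ} {c : ℝ}
    (hφ : ∀ s, HasDerivAt φ (ψ s) s) (hψ : HasDerivAt ψ c 0) (hψ0 : ψ 0 = 0)
    (hmin : ∀ s, φ 0 ≤ φ s) : 0 ≤ c := by
  by_contra hc
  push_neg at hc
  have hslope := hasDerivAt_iff_tendsto_slope.1 hψ
  have hev : ∀ᶠ s in 𝓝[>] (0:ℝ), slope ψ 0 s < c / 2 := by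
    have h2 : Iio (c/2) ∈ 𝓝 c := Iio_mem_nhds (by linarith)
    exact (hslope.mono_left (nhdsWithin_mono _ (fun s hs => ne_of_gt hs))).eventually_mem h2
  rw [eventually_nhdsWithin_iff] at hev
  rcases Metric.eventually_nhds_iff.1 hev with ⟨δ, hδ, hδev⟩
  have hneg : ∀ s ∈ Ioo (0:ℝ) δ, ψ s < 0 := by
    intro s hs
    have h1 : slope ψ 0 s < c / 2 := by
      refine hδev ?_ hs.1
      simp [abs_of_pos hs.1, hs.2]
    rw [slope_def_field, hψ0, sub_zero, sub_zero, div_lt_iff₀ hs.1] at h1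
    nlinarith [hs.1]
  have hanti : StrictAntiOn φ (Icc 0 (δ/2)) := by
    refine strictAntiOn_of_deriv_neg (convex_Icc _ _)
      (fun s _ => (hφ s).continuousAt.continuousWithinAt) ?_
    intro s hs
    rw [interior_Icc] at hs
    rw [(hφ s).deriv]
    exact hneg s ⟨hs.1, by linarith [hs.2]⟩
  have : φ (δ/2) < φ 0 := hanti ⟨le_refl 0, by linarith⟩ ⟨by linarith, le_refl _⟩ (by linarith)
  exact absurd (hmin (δ/2)) (not_le.2 this)

section QF
open RealInnerProductSpace
variable {F : Type*} [NormedAddCommGroup F] [InnerProductSpace ℝ F] [CompleteSpace F]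

lemma aux_grad_zero {f : F → ℝ} {Grad : F → F} {x : F}
    (hf : HasGradientAt f (Grad x) x) (hmin : ∀ y, f x ≤ f y) : Grad x = 0 := by
  have hloc : IsLocalMin f x := Filter.Eventually.of_forall hmin
  have h0 := hloc.hasFDerivAt_eq_zero hf.hasFDerivAt
  have := (InnerProductSpace.toDual ℝ F).injective (h0.trans (map_zero _).symm)
  exact this

lemma aux_qf_nonneg {f : F → ℝ} {Grad : F → F} {H : F →L[ℝ] F} {x : F}
    (hf : ∀ y, HasGradientAt f (Grad y) y) (hH : HasFDerivAt Grad H x)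
    (hmin : ∀ y, f x ≤ f y) (v : F) : 0 ≤ ⟪H v, v⟫ := by
  set γ : ℝ → F := fun s => x + s • v with hγdef
  have hγ0 : γ 0 = x := by simp [hγdef]
  have hγ : ∀ s, HasDerivAt γ v s := by
    intro s
    have := ((hasDerivAt_id s).smul_const v).const_add x
    simp only [one_smul] at this
    exact this
  have hφ : ∀ s, HasDerivAt (fun s => f (γ s)) ⟪Grad (γ s), v⟫ s := by
    intro s
    have := (hf (γ s)).hasFDerivAt.comp_hasDerivAt s (hγ s)
    simp only [InnerProductSpace.toDual_apply_apply] at this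
    exact this
  have hGder : HasDerivAt (fun s => Grad (γ s)) (H v) 0 := by
    have hH' : HasFDerivAt Grad H (γ 0) := hγ0 ▸ hH
    exact hH'.comp_hasDerivAt 0 (hγ 0)
  have hψ : HasDerivAt (fun s => (⟪Grad (γ s), v⟫ : ℝ)) ⟪H v, v⟫ 0 := by
    have := hGder.inner ℝ (hasDerivAt_const (0:ℝ) v)
    simpa [real_inner_comm] using this
  have hψ0 : (⟪Grad (γ 0), v⟫ : ℝ) = 0 := by
    rw [hγ0, aux_grad_zero (hf x) hmin, inner_zero_left]
  refine aux_second_deriv_nonneg hφ hψ hψ0 ?_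
  intro s
  rw [hγ0]
  exact hmin (γ s)

end QF

section GCalc
open RealInnerProductSpace
variable {F : Type*} [NormedAddCommGroup F] [InnerProductSpace ℝ F] [CompleteSpace F]

lemma aux_q_fderiv (x : F) :
    HasFDerivAt (fun y : F => (⟪y, y⟫ : ℝ)) ((2:ℝ) • (innerSL ℝ x : F →L[ℝ] ℝ)) x := by
  have := (hasFDerivAt_id x).inner ℝ (hasFDerivAt_id x)
  refine this.congr_fderiv ?_
  ext v
  simp [fderivInnerCLM_apply, real_inner_comm]
  ring

lemma aux_g_grad (m : ℕ) (x : F) :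
    HasGradientAt (fun y : F => (1 + ⟪y, y⟫ : ℝ) ^ m)
      ((2 * (m:ℝ) * (1 + ⟪x, x⟫) ^ (m - 1)) • x) x := by
  have h2 := (hasDerivAt_pow m (1 + ⟪x, x⟫ : ℝ)).comp_hasFDerivAt x ((aux_q_fderiv x).const_add 1)
  rw [hasGradientAt_iff_hasFDerivAt]
  refine h2.congr_fderiv ?_
  ext v
  simp [InnerProductSpace.toDual_apply_apply, real_inner_smul_left]
  ring

lemma aux_G_fderiv (m : ℕ) (x : F) :
    HasFDerivAt (fun y : F => (2 * (m:ℝ) * (1 + ⟪y, y⟫) ^ (m - 1)) • y)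
      ((2 * (m:ℝ) * (1 + ⟪x, x⟫) ^ (m - 1)) • ContinuousLinearMap.id ℝ F
        + ((4 * (m:ℝ) * ((m - 1 : ℕ) : ℝ) * (1 + ⟪x, x⟫) ^ (m - 1 - 1)) •
            (innerSL ℝ x : F →L[ℝ] ℝ)).smulRight x) x := by
  have hc : HasFDerivAt (fun y : F => (2 * (m:ℝ) * (1 + ⟪y, y⟫) ^ (m - 1)))
      ((4 * (m:ℝ) * ((m - 1 : ℕ) : ℝ) * (1 + ⟪x, x⟫) ^ (m - 1 - 1)) •
        (innerSL ℝ x : F →L[ℝ] ℝ)) x := by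
    have h2 := ((hasDerivAt_pow (m - 1) (1 + ⟪x, x⟫ : ℝ)).comp_hasFDerivAt x
      ((aux_q_fderiv x).const_add 1)).const_mul (2 * (m:ℝ))
    refine h2.congr_fderiv ?_
    ext v
    simp
    ring
  have := hc.smul (hasFDerivAt_id x)
  exact this

end GCalc

section MatrixPart
open Matrix RealInnerProductSpace
attribute [local instance] Matrix.normedAddCommGroup

lemma aux_trace {d : ℕ} (σ A : Matrix (Fin d) (Fin d) ℝ) :
    (σ * σᵀ * A).trace
      = ∑ j : Fin d, ⟪(Matrix.toEuclideanCLM (𝕜 := ℝ) A)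
          ((WithLp.equiv 2 (Fin d → ℝ)).symm (fun k => σ k j)),
          ((WithLp.equiv 2 (Fin d → ℝ)).symm (fun k => σ k j))⟫ := by
  simp only [WithLp.equiv_symm_apply, Matrix.toEuclideanCLM_toLp, PiLp.inner_apply,
    PiLp.toLp_apply, Matrix.toLin'_apply, Matrix.mulVec, dotProduct,
    RCLike.inner_apply, conj_trivial, Matrix.trace, Matrix.diag, Matrix.mul_apply,
    Matrix.transpose_apply, Finset.sum_mul, Finset.mul_sum]
  rw [Finset.sum_comm]
  conv_lhs => rw [Finset.sum_comm]
  refine (Finset.sum_congr rfl fun b _ => by rw [Finset.sum_comm]).trans ?_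
  rw [Finset.sum_comm]
  refine Finset.sum_congr rfl fun x _ => ?_
  rw [Finset.sum_comm]
  exact Finset.sum_congr rfl fun y _ => Finset.sum_congr rfl fun i _ => by ring

lemma aux_rho_bound {d : ℕ} {ρ : EuclideanSpace ℝ (Fin d) → ℝ} {C : ℝ}
    (hρc : Continuous ρ) (hC : 0 < C)
    (h : ∀ x, |ρ x| * ‖x‖ ≤ C * (1 + ‖x‖)) : ∃ K : ℝ, 0 ≤ K ∧ ∀ x, |ρ x| ≤ K := by
  obtain ⟨K₀, hK₀⟩ := (isCompact_closedBall (0 : EuclideanSpace ℝ (Fin d)) 1).exists_bound_of_continuousOn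
    hρc.continuousOn
  refine ⟨max K₀ (2 * C), le_trans (by positivity) (le_max_right _ _), fun x => ?_⟩
  by_cases hx : ‖x‖ ≤ 1
  · exact le_trans (by simpa using hK₀ x (by simpa [Metric.mem_closedBall, dist_eq_norm] using hx))
      (le_max_left _ _)
  · push_neg at hx
    have h1 := h x
    have : |ρ x| * ‖x‖ ≤ 2 * C * ‖x‖ := le_trans h1 (by nlinarith)
    have h2 : |ρ x| ≤ 2 * C := by
      have hxpos : 0 < ‖x‖ := by linarith
      exact le_of_mul_le_mul_right (by linarith [this]) hxpos
    exact le_trans h2 (le_max_right _ _)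

end MatrixPart


open Filter Topology RealInnerProductSpace

lemma aux_pow_le {a : ℝ} (ha : 0 ≤ a) {n m : ℕ} (h : n ≤ m) : a ^ n ≤ 1 + a ^ m := by
  rcases le_or_gt a 1 with h1 | h1
  · calc a ^ n ≤ 1 := pow_le_one₀ ha h1
    _ ≤ 1 + a ^ m := le_add_of_nonneg_right (by positivity)
  · calc a ^ n ≤ a ^ m := pow_le_pow_right₀ h1.le h
    _ ≤ 1 + a ^ m := le_add_of_nonneg_left one_pos.le

end Aux

open Filter Topology RealInnerProductSpace

set_option maxHeartbeats 16000000

/-- **Comparison principle for smooth super/subsolutions of the pricing equation.**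
With `L φ(t,x) = ∂_t φ + ρ(x)⟨x, Dφ⟩ + ½ Tr(σσᵀ D²φ)`, if `U` (resp. `V`) is a continuous,
`C^{1,2}` on `[0,T) × ℝ^d`, polynomially growing function with `L U ≤ ρ U`
(resp. `L V ≥ ρ V`) on `[0,T) × ℝ^d` and `U(T,·) ≥ V(T,·)`, then `U ≥ V` on `[0,T] × ℝ^d`.
The time derivative, spatial gradient and spatial Hessian of `U` and `V` are given as the
data `Ut, Ux, Uxx` (resp. `Vt, Vx, Vxx`), with the corresponding `HasDerivWithinAt`,
`HasGradientAt` and `HasFDerivAt` statements, continuous on `[0,T) × ℝ^d`. -/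
theorem stmt_4
    (d : ℕ) (hd : 1 ≤ d) (T : ℝ) (hT : 0 < T)
    (ρ : EuclideanSpace ℝ (Fin d) → ℝ)
    (σ : EuclideanSpace ℝ (Fin d) → Matrix (Fin d) (Fin d) ℝ)
    (hρc : Continuous ρ)
    (hρneg : ∃ M : ℝ, ∀ x, max (-ρ x) 0 ≤ M)
    (hσc : Continuous σ)
    (hgrowth : ∃ C : ℝ, 0 < C ∧ ∀ x, ‖ρ x • x‖ + ‖σ x‖ ≤ C * (1 + ‖x‖))
    (U V Ut Vt : ℝ → EuclideanSpace ℝ (Fin d) → ℝ)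
    (Ux Vx : ℝ → EuclideanSpace ℝ (Fin d) → EuclideanSpace ℝ (Fin d))
    (Uxx Vxx : ℝ → EuclideanSpace ℝ (Fin d) → Matrix (Fin d) (Fin d) ℝ)
    -- continuity of U and V on [0,T] × ℝ^d
    (hUcont : ContinuousOn (fun p : ℝ × EuclideanSpace ℝ (Fin d) => U p.1 p.2)
      (Icc 0 T ×ˢ univ))
    (hVcont : ContinuousOn (fun p : ℝ × EuclideanSpace ℝ (Fin d) => V p.1 p.2)
      (Icc 0 T ×ˢ univ))
    -- U is C^{1,2} on [0,T) × ℝ^d with derivatives Ut, Ux, Uxx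
    (hUt : ∀ t ∈ Ico (0:ℝ) T, ∀ x, HasDerivWithinAt (fun s => U s x) (Ut t x) (Ico 0 T) t)
    (hUx : ∀ t ∈ Ico (0:ℝ) T, ∀ x, HasGradientAt (fun y => U t y) (Ux t x) x)
    (hUxx : ∀ t ∈ Ico (0:ℝ) T, ∀ x, HasFDerivAt (fun y => Ux t y)
      ((Matrix.toEuclideanCLM (𝕜 := ℝ) (Uxx t x) :
        EuclideanSpace ℝ (Fin d) →L[ℝ] EuclideanSpace ℝ (Fin d))) x)
    (hUtc : ContinuousOn (fun p : ℝ × EuclideanSpace ℝ (Fin d) => Ut p.1 p.2)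
      (Ico 0 T ×ˢ univ))
    (hUxc : ContinuousOn (fun p : ℝ × EuclideanSpace ℝ (Fin d) => Ux p.1 p.2)
      (Ico 0 T ×ˢ univ))
    (hUxxc : ContinuousOn (fun p : ℝ × EuclideanSpace ℝ (Fin d) => Uxx p.1 p.2)
      (Ico 0 T ×ˢ univ))
    -- V is C^{1,2} on [0,T) × ℝ^d with derivatives Vt, Vx, Vxx
    (hVt : ∀ t ∈ Ico (0:ℝ) T, ∀ x, HasDerivWithinAt (fun s => V s x) (Vt t x) (Ico 0 T) t)
    (hVx : ∀ t ∈ Ico (0:ℝ) T, ∀ x, HasGradientAt (fun y => V t y) (Vx t x) x)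
    (hVxx : ∀ t ∈ Ico (0:ℝ) T, ∀ x, HasFDerivAt (fun y => Vx t y)
      ((Matrix.toEuclideanCLM (𝕜 := ℝ) (Vxx t x) :
        EuclideanSpace ℝ (Fin d) →L[ℝ] EuclideanSpace ℝ (Fin d))) x)
    (hVtc : ContinuousOn (fun p : ℝ × EuclideanSpace ℝ (Fin d) => Vt p.1 p.2)
      (Ico 0 T ×ˢ univ))
    (hVxc : ContinuousOn (fun p : ℝ × EuclideanSpace ℝ (Fin d) => Vx p.1 p.2)
      (Ico 0 T ×ˢ univ))
    (hVxxc : ContinuousOn (fun p : ℝ × EuclideanSpace ℝ (Fin d) => Vxx p.1 p.2)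
      (Ico 0 T ×ˢ univ))
    -- polynomial growth of U and V
    (hUgrowth : ∃ C : ℝ, 0 < C ∧ ∃ p : ℕ, 1 ≤ p ∧
      ∀ t ∈ Icc (0:ℝ) T, ∀ x, |U t x| ≤ C * (1 + ‖x‖ ^ p))
    (hVgrowth : ∃ C : ℝ, 0 < C ∧ ∃ p : ℕ, 1 ≤ p ∧
      ∀ t ∈ Icc (0:ℝ) T, ∀ x, |V t x| ≤ C * (1 + ‖x‖ ^ p))
    -- L U ≤ ρ U and L V ≥ ρ V on [0,T) × ℝ^d
    (hUsuper : ∀ t ∈ Ico (0:ℝ) T, ∀ x,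
      Ut t x + ρ x * (inner ℝ x (Ux t x) : ℝ)
        + (1/2) * (σ x * (σ x)ᵀ * Uxx t x).trace ≤ ρ x * U t x)
    (hVsub : ∀ t ∈ Ico (0:ℝ) T, ∀ x,
      ρ x * V t x ≤ Vt t x + ρ x * (inner ℝ x (Vx t x) : ℝ)
        + (1/2) * (σ x * (σ x)ᵀ * Vxx t x).trace)
    -- terminal ordering
    (hTerm : ∀ x, V T x ≤ U T x) :
    ∀ t ∈ Icc (0:ℝ) T, ∀ x, V t x ≤ U t x := by
  classical
  obtain ⟨M, hM⟩ := hρneg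
  have hM0 : 0 ≤ M := le_trans (le_max_right _ _) (hM 0)
  have hρM : ∀ x, -M ≤ ρ x := fun x => by
    have := le_trans (le_max_left _ _) (hM x); linarith
  obtain ⟨C, hC0, hC⟩ := hgrowth
  have hσ : ∀ x, ‖σ x‖ ≤ C * (1 + ‖x‖) := fun x =>
    le_trans (le_add_of_nonneg_left (norm_nonneg _)) (hC x)
  have hρx : ∀ x, |ρ x| * ‖x‖ ≤ C * (1 + ‖x‖) := fun x => by
    have := hC x
    rw [norm_smul, Real.norm_eq_abs] at this
    linarith [norm_nonneg (σ x)]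
  obtain ⟨K, hK0, hK⟩ := aux_rho_bound hρc hC0 hρx
  obtain ⟨CU, hCU0, pU, hpU, hU⟩ := hUgrowth
  obtain ⟨CV, hCV0, pV, hpV, hV⟩ := hVgrowth
  set m : ℕ := max pU pV with hmdef
  have hm1 : 1 ≤ m := le_trans hpU (le_max_left _ _)
  set C₁ : ℝ := 2 * (CU + CV) * Real.exp (M * T) with hC₁def
  have hC₁0 : 0 < C₁ := by positivity
  -- growth bound for e^{Mt} (U - V)
  have hW : ∀ t ∈ Icc (0:ℝ) T, ∀ x, |Real.exp (M*t) * (U t x - V t x)| ≤ C₁ * (1 + ‖x‖ ^ m) := by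
    intro t ht x
    rw [abs_mul, Real.abs_exp]
    have he : Real.exp (M*t) ≤ Real.exp (M*T) :=
      Real.exp_le_exp.2 (mul_le_mul_of_nonneg_left ht.2 hM0)
    have h1 : |U t x - V t x| ≤ (CU + CV) * (2 * (1 + ‖x‖ ^ m)) := by
      have hu := hU t ht x
      have hv := hV t ht x
      have h2 : ‖x‖ ^ pU ≤ 1 + ‖x‖ ^ m := aux_pow_le (norm_nonneg x) (le_max_left _ _)
      have h3 : ‖x‖ ^ pV ≤ 1 + ‖x‖ ^ m := aux_pow_le (norm_nonneg x) (le_max_right _ _)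
      have := abs_sub (U t x) (V t x)
      nlinarith [abs_nonneg (U t x), abs_nonneg (V t x),
        mul_le_mul_of_nonneg_left h2 hCU0.le, mul_le_mul_of_nonneg_left h3 hCV0.le,
        mul_nonneg hCU0.le (pow_nonneg (norm_nonneg x) m),
        mul_nonneg hCV0.le (pow_nonneg (norm_nonneg x) m)]
    calc Real.exp (M*t) * |U t x - V t x|
        ≤ Real.exp (M*T) * ((CU + CV) * (2 * (1 + ‖x‖ ^ m))) := by
          apply mul_le_mul he h1 (abs_nonneg _) (Real.exp_pos _).le
      _ = C₁ * (1 + ‖x‖ ^ m) := by rw [hC₁def]; ring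
  set lam : ℝ := 2*m*K + 6*m^2*C^2*d^2 + 1 with hlamdef
  have hlam0 : 0 ≤ lam := by positivity
  set g : EuclideanSpace ℝ (Fin d) → ℝ := fun x => (1 + ⟪x, x⟫) ^ m with hgdef
  have hq0 : ∀ x : EuclideanSpace ℝ (Fin d), 0 ≤ ⟪x, x⟫ := fun x => real_inner_self_nonneg
  have hg1 : ∀ x, 1 ≤ g x := fun x => one_le_pow₀ (by linarith [hq0 x])
  have hgc : Continuous g := by
    apply Continuous.pow
    exact continuous_const.add (continuous_id.inner continuous_id)
  -- the key positivity claim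
  have key : ∀ ε : ℝ, 0 < ε → ∀ t ∈ Icc (0:ℝ) T, ∀ x,
      0 < Real.exp (M*t) * (U t x - V t x) + ε * Real.exp (lam*(T-t)) * g x := by
    intro ε hε
    set G : ℝ × EuclideanSpace ℝ (Fin d) → ℝ := fun p =>
      Real.exp (M*p.1) * (U p.1 p.2 - V p.1 p.2) + ε * Real.exp (lam*(T-p.1)) * g p.2 with hGdef
    have hGval : ∀ s (y : EuclideanSpace ℝ (Fin d)), G (s,y) =
      Real.exp (M*s) * (U s y - V s y) + ε * Real.exp (lam*(T-s)) * g y := fun s y => rfl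
    have hGcont : ContinuousOn G (Icc 0 T ×ˢ univ) := by
      apply ContinuousOn.add
      · exact (((Real.continuous_exp.comp (continuous_const.mul continuous_fst)).continuousOn).mul
          (hUcont.sub hVcont))
      · apply Continuous.continuousOn
        exact (continuous_const.mul (Real.continuous_exp.comp
          (continuous_const.mul (continuous_const.sub continuous_fst)))).mul
          (hgc.comp continuous_snd)
    set R : ℝ := max 1 (2*(C₁ + |G (0, 0)| + 1)/ε) with hRdef
    have hR1 : (1:ℝ) ≤ R := le_max_left _ _
    have hR2 : 2*(C₁ + |G (0, 0)| + 1)/ε ≤ R := le_max_right _ _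
    set Kc : Set (ℝ × EuclideanSpace ℝ (Fin d)) := Icc 0 T ×ˢ Metric.closedBall 0 R with hKcdef
    have hKcc : IsCompact Kc := isCompact_Icc.prod (isCompact_closedBall _ _)
    have h00 : ((0:ℝ), (0: EuclideanSpace ℝ (Fin d))) ∈ Kc := by
      refine ⟨⟨le_refl _, hT.le⟩, ?_⟩
      simp only [Metric.mem_closedBall, dist_self]
      linarith
    have hKsub : Kc ⊆ Icc 0 T ×ˢ univ := fun p hp => ⟨hp.1, trivial⟩
    obtain ⟨⟨t₀, x₀⟩, hzK, hzmin⟩ := hKcc.exists_isMinOn ⟨_, h00⟩ (hGcont.mono hKsub)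
    have ht₀ : t₀ ∈ Icc (0:ℝ) T := hzK.1
    have hx₀R : ‖x₀‖ ≤ R := by
      have := hzK.2; simpa [Metric.mem_closedBall, dist_eq_norm] using this
    -- G is large outside the ball
    have hout : ∀ s ∈ Icc (0:ℝ) T, ∀ y, R ≤ ‖y‖ → G (0,0) + 1 ≤ G (s,y) := by
      intro s hs y hy
      have hy1 : (1:ℝ) ≤ ‖y‖ := le_trans hR1 hy
      have hgy : R * ‖y‖ ^ m ≤ g y := by
        have e1 : ‖y‖^(2*m) ≤ g y := by
          rw [hgdef]
          calc ‖y‖^(2*m) = (‖y‖^2)^m := by rw [← pow_mul]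
            _ ≤ (1 + ⟪y, y⟫)^m := by
                apply pow_le_pow_left₀ (by positivity)
                rw [real_inner_self_eq_norm_sq]; linarith
        have e2 : ‖y‖^(m+1) ≤ ‖y‖^(2*m) := pow_le_pow_right₀ hy1 (by omega)
        have e3 : R * ‖y‖ ^ m ≤ ‖y‖^(m+1) := by
          rw [pow_succ, mul_comm (‖y‖^m) (‖y‖)]
          apply mul_le_mul_of_nonneg_right (le_trans hy (le_refl _)) (by positivity)
        linarith
      have hεgy : C₁ * (1 + ‖y‖ ^ m) + |G (0,0)| + 1 ≤ ε * g y := by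
        have h1 : 1 + ‖y‖ ^ m ≤ 2 * ‖y‖ ^ m := by
          have : (1:ℝ) ≤ ‖y‖ ^ m := one_le_pow₀ hy1
          linarith
        have h2 : ε * (R * ‖y‖ ^ m) ≤ ε * g y := mul_le_mul_of_nonneg_left hgy hε.le
        have h3 : 2*(C₁ + |G (0, 0)| + 1) ≤ ε * R := by
          rw [div_le_iff₀ hε] at hR2; linarith
        have h4 : (1:ℝ) ≤ ‖y‖ ^ m := one_le_pow₀ hy1
        nlinarith [abs_nonneg (G (0,0)), hC₁0]
      have hexp1 : (1:ℝ) ≤ Real.exp (lam*(T-s)) :=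
        Real.one_le_exp (mul_nonneg hlam0 (by linarith [hs.2]))
      have hbound := hW s hs y
      have : -(C₁ * (1 + ‖y‖ ^ m)) ≤ Real.exp (M*s) * (U s y - V s y) := neg_le_of_abs_le hbound
      have hg0 : 0 ≤ g y := by linarith [hg1 y]
      have : G (0,0) + 1 ≤ -(C₁ * (1 + ‖y‖ ^ m)) + ε * g y := by
        have := le_abs_self (G (0,0))
        linarith
      have hfin : -(C₁ * (1 + ‖y‖ ^ m)) + ε * g y ≤ G (s, y) := by
        simp only [hGdef]
        have : ε * g y ≤ ε * Real.exp (lam*(T-s)) * g y := by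
          rw [mul_assoc]
          apply mul_le_mul_of_nonneg_left _ hε.le
          nlinarith
        linarith [neg_le_of_abs_le (hW s hs y)]
      linarith
    -- global minimality
    have hglob : ∀ s ∈ Icc (0:ℝ) T, ∀ y, G (t₀, x₀) ≤ G (s, y) := by
      intro s hs y
      rcases le_or_gt ‖y‖ R with h | h
      · exact hzmin ⟨hs, by simpa [Metric.mem_closedBall, dist_eq_norm] using h⟩
      · calc G (t₀, x₀) ≤ G (0, 0) := hzmin h00
          _ ≤ G (s, y) := by linarith [hout s hs y h.le]
    -- positivity of the minimum
    have hpos : 0 < G (t₀, x₀) := by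
      by_contra hα
      push_neg at hα
      -- t₀ < T
      have ht₀T : t₀ < T := by
        rcases lt_or_eq_of_le ht₀.2 with h | h
        · exact h
        · exfalso
          have h1 : 0 ≤ U T x₀ - V T x₀ := by linarith [hTerm x₀]
          rw [hGval t₀ x₀, h, sub_self, mul_zero, Real.exp_zero, mul_one] at hα
          nlinarith [Real.exp_pos (M*T), hg1 x₀, hε]
      have ht₀mem : t₀ ∈ Ico (0:ℝ) T := ⟨ht₀.1, ht₀T⟩
      set e1 : ℝ := Real.exp (M*t₀) with he1def
      set e2 : ℝ := ε * Real.exp (lam*(T-t₀)) with he2def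
      have he1 : 0 < e1 := Real.exp_pos _
      have he2 : 0 < e2 := by positivity
      set q : ℝ := ⟪x₀, x₀⟫ with hqdef
      have hqnn : 0 ≤ q := hq0 x₀
      set cc : ℝ := 2*(m:ℝ)*(1+q)^(m-1) with hccdef
      set bb : ℝ := 4*(m:ℝ)*((m-1:ℕ):ℝ)*(1+q)^(m-1-1) with hbbdef
      have hccnn : 0 ≤ cc := by positivity
      have hbbnn : 0 ≤ bb := by positivity
      -- TIME DERIVATIVE
      have htime : 0 ≤ e1*M*(U t₀ x₀ - V t₀ x₀) + e1*(Ut t₀ x₀ - Vt t₀ x₀) - lam*e2*(g x₀) := by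
        have hexp : HasDerivAt (fun s => Real.exp (M*s)) (Real.exp (M*t₀) * M) t₀ := by
          simpa using ((hasDerivAt_id t₀).const_mul M).exp
        have hD1 : HasDerivWithinAt (fun s => Real.exp (M*s) * (U s x₀ - V s x₀))
            (Real.exp (M*t₀) * M * (U t₀ x₀ - V t₀ x₀) + Real.exp (M*t₀) * (Ut t₀ x₀ - Vt t₀ x₀))
            (Ico 0 T) t₀ :=
          hexp.hasDerivWithinAt.mul ((hUt t₀ ht₀mem x₀).sub (hVt t₀ ht₀mem x₀))
        have h0 : HasDerivAt (fun s => lam*(T-s)) (-lam) t₀ := by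
          simpa using (((hasDerivAt_id t₀).const_sub T).const_mul lam)
        have hD2 : HasDerivAt (fun s => ε * Real.exp (lam*(T-s)) * g x₀)
            (-lam * (ε * Real.exp (lam*(T-t₀))) * g x₀) t₀ := by
          have h1 := (h0.exp.const_mul ε).mul_const (g x₀)
          refine h1.congr_deriv ?_
          ring
        have hder := hD1.add hD2.hasDerivWithinAt
        have hmint : ∀ s ∈ Ico (0:ℝ) T,
            (fun s => Real.exp (M*s) * (U s x₀ - V s x₀) + ε * Real.exp (lam*(T-s)) * g x₀) t₀
            ≤ (fun s => Real.exp (M*s) * (U s x₀ - V s x₀) + ε * Real.exp (lam*(T-s)) * g x₀) s := by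
          intro s hs
          have h2 := hglob s (Ico_subset_Icc_self hs) x₀
          rw [hGval, hGval] at h2
          simpa using h2
        have := aux_deriv_nonneg_of_min ht₀T ht₀.1 hder hmint
        rw [he1def, he2def]
        linarith [this]
      -- SPACE: gradient and Hessian data
      set Grad : EuclideanSpace ℝ (Fin d) → EuclideanSpace ℝ (Fin d) := fun y =>
        e1 • (Ux t₀ y - Vx t₀ y) + e2 • ((2*(m:ℝ)*(1+⟪y,y⟫)^(m-1)) • y) with hGraddef
      have hGrad : ∀ y, HasGradientAt (fun y => G (t₀, y)) (Grad y) y := by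
        intro y
        have hfun : (fun y => G (t₀, y)) = (fun y : EuclideanSpace ℝ (Fin d) =>
            e1 * (U t₀ y - V t₀ y) + e2 * (1 + ⟪y,y⟫)^m) := by
          funext z
          rw [hGval t₀ z, he1def, he2def]
        rw [hfun, hasGradientAt_iff_hasFDerivAt]
        have hu := (hUx t₀ ht₀mem y).hasFDerivAt
        have hv := (hVx t₀ ht₀mem y).hasFDerivAt
        have hgg := (aux_g_grad m y).hasFDerivAt
        have h := ((hu.sub hv).const_mul e1).add (hgg.const_mul e2)
        refine h.congr_fderiv ?_
        ext v
        simp only [hGraddef, ContinuousLinearMap.add_apply, ContinuousLinearMap.smul_apply,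
          ContinuousLinearMap.sub_apply, InnerProductSpace.toDual_apply_apply, smul_eq_mul,
          inner_add_left, inner_smul_left, inner_sub_left, conj_trivial, real_inner_smul_left]
      have hmin2 : ∀ y, G (t₀, x₀) ≤ G (t₀, y) := fun y => hglob t₀ ht₀ y
      have hgrad0 : Grad x₀ = 0 := aux_grad_zero (hGrad x₀) hmin2
      have hinner0 : e1 * (⟪x₀, Ux t₀ x₀⟫ - ⟪x₀, Vx t₀ x₀⟫) + e2 * (cc * q) = 0 := by
        have h0 : (⟪x₀, Grad x₀⟫ : ℝ)
            = e1 * (⟪x₀, Ux t₀ x₀⟫ - ⟪x₀, Vx t₀ x₀⟫) + e2 * (cc * q) := by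
          simp only [hGraddef, inner_add_right, real_inner_smul_right, inner_sub_right]
          try rw [hccdef, hqdef]
          try ring
        have h1 : (⟪x₀, Grad x₀⟫ : ℝ) = 0 := by rw [hgrad0, inner_zero_right]
        linarith
      set Hclm : EuclideanSpace ℝ (Fin d) →L[ℝ] EuclideanSpace ℝ (Fin d) :=
        e1 • ((Matrix.toEuclideanCLM (𝕜 := ℝ) (Uxx t₀ x₀)) - (Matrix.toEuclideanCLM (𝕜 := ℝ) (Vxx t₀ x₀)))
        + e2 • ((2*(m:ℝ)*(1+q)^(m-1)) • ContinuousLinearMap.id ℝ (EuclideanSpace ℝ (Fin d))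
          + ((4*(m:ℝ)*((m-1:ℕ):ℝ)*(1+q)^(m-1-1)) • (innerSL ℝ x₀)).smulRight x₀) with hHclmdef
      have hHess : HasFDerivAt Grad Hclm x₀ := by
        have hu := hUxx t₀ ht₀mem x₀
        have hv := hVxx t₀ ht₀mem x₀
        have hgg := aux_G_fderiv m x₀
        exact ((hu.sub hv).const_smul e1).add (hgg.const_smul e2)
      have hqf : ∀ v, 0 ≤ e1 * (⟪(Matrix.toEuclideanCLM (𝕜 := ℝ) (Uxx t₀ x₀)) v, v⟫
          - ⟪(Matrix.toEuclideanCLM (𝕜 := ℝ) (Vxx t₀ x₀)) v, v⟫)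
          + e2 * (cc * ⟪v,v⟫ + bb * ⟪x₀,v⟫^2) := by
        intro v
        have h := aux_qf_nonneg hGrad hHess hmin2 v
        have h2 : (⟪Hclm v, v⟫ : ℝ) = e1 * (⟪(Matrix.toEuclideanCLM (𝕜 := ℝ) (Uxx t₀ x₀)) v, v⟫
            - ⟪(Matrix.toEuclideanCLM (𝕜 := ℝ) (Vxx t₀ x₀)) v, v⟫)
            + e2 * (cc * ⟪v,v⟫ + bb * ⟪x₀,v⟫^2) := by
          simp only [hHclmdef, hccdef, hbbdef, ContinuousLinearMap.add_apply,
            ContinuousLinearMap.smul_apply, ContinuousLinearMap.sub_apply,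
            ContinuousLinearMap.id_apply, ContinuousLinearMap.smulRight_apply,
            ContinuousLinearMap.coe_smul', Pi.smul_apply, innerSL_apply_apply,
            inner_add_left, inner_sub_left, real_inner_smul_left, smul_eq_mul]
          ring
        rw [h2] at h
        exact h
      -- TRACE INEQUALITY
      have htrace : -(e2 * (12*(m:ℝ)^2*C^2*(d:ℝ)^2*(1+q)^m)) ≤
          e1 * ((σ x₀ * (σ x₀)ᵀ * Uxx t₀ x₀).trace - (σ x₀ * (σ x₀)ᵀ * Vxx t₀ x₀).trace) := by
        set ss := σ x₀ with hssdef
        set col : Fin d → EuclideanSpace ℝ (Fin d) :=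
          fun j => (WithLp.equiv 2 (Fin d → ℝ)).symm (fun k => ss k j) with hcoldef
        have hsplit : ∀ j, (⟪(Matrix.toEuclideanCLM (𝕜 := ℝ) (Uxx t₀ x₀ - Vxx t₀ x₀)) (col j), col j⟫:ℝ)
            = ⟪(Matrix.toEuclideanCLM (𝕜 := ℝ) (Uxx t₀ x₀)) (col j), col j⟫
              - ⟪(Matrix.toEuclideanCLM (𝕜 := ℝ) (Vxx t₀ x₀)) (col j), col j⟫ := by
          intro j
          rw [map_sub, ContinuousLinearMap.sub_apply, inner_sub_left]
        have htr : (ss * ssᵀ * Uxx t₀ x₀).trace - (ss * ssᵀ * Vxx t₀ x₀).trace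
            = ∑ j, ((⟪(Matrix.toEuclideanCLM (𝕜 := ℝ) (Uxx t₀ x₀)) (col j), col j⟫:ℝ)
              - ⟪(Matrix.toEuclideanCLM (𝕜 := ℝ) (Vxx t₀ x₀)) (col j), col j⟫) := by
          calc (ss * ssᵀ * Uxx t₀ x₀).trace - (ss * ssᵀ * Vxx t₀ x₀).trace
              = (ss * ssᵀ * (Uxx t₀ x₀ - Vxx t₀ x₀)).trace := by
                rw [Matrix.mul_sub, Matrix.trace_sub]
            _ = ∑ j, (⟪(Matrix.toEuclideanCLM (𝕜 := ℝ) (Uxx t₀ x₀ - Vxx t₀ x₀)) (col j), col j⟫:ℝ) :=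
                aux_trace ss _
            _ = _ := Finset.sum_congr rfl fun j _ => hsplit j
        have hperj : ∀ j, -(e2 * (cc * ⟪col j, col j⟫ + bb * ⟪x₀, col j⟫^2))
            ≤ e1 * ((⟪(Matrix.toEuclideanCLM (𝕜 := ℝ) (Uxx t₀ x₀)) (col j), col j⟫:ℝ)
              - ⟪(Matrix.toEuclideanCLM (𝕜 := ℝ) (Vxx t₀ x₀)) (col j), col j⟫) :=
          fun j => by linarith [hqf (col j)]
        have hcj : ∀ j, (⟪col j, col j⟫:ℝ) ≤ (d:ℝ) * ‖ss‖^2 := by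
          intro j
          have h1 : (⟪col j, col j⟫:ℝ) = ∑ k, (ss k j) * (ss k j) := by
            simp only [hcoldef, PiLp.inner_apply, WithLp.equiv_symm_apply, PiLp.toLp_apply, RCLike.inner_apply,
              conj_trivial]
          have h2 : ∀ k, ss k j * ss k j ≤ ‖ss‖^2 := by
            intro k
            have h3 : |ss k j| ≤ ‖ss‖ := Matrix.norm_entry_le_entrywise_sup_norm ss
            nlinarith [abs_nonneg (ss k j), abs_mul_abs_self (ss k j)]
          rw [h1]
          calc ∑ k, ss k j * ss k j
              ≤ ∑ _k : Fin d, ‖ss‖^2 := Finset.sum_le_sum fun k _ => h2 k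
            _ = (d:ℝ) * ‖ss‖^2 := by
                simp [Finset.sum_const, Finset.card_univ, nsmul_eq_mul]
        have hxcj : ∀ j, (⟪x₀, col j⟫:ℝ)^2 ≤ q * ((d:ℝ) * ‖ss‖^2) := by
          intro j
          rw [sq]
          calc (⟪x₀, col j⟫:ℝ) * ⟪x₀, col j⟫ ≤ ⟪x₀,x₀⟫ * ⟪col j, col j⟫ :=
              real_inner_mul_inner_self_le x₀ (col j)
            _ ≤ q * ((d:ℝ)*‖ss‖^2) := by
              rw [← hqdef]
              exact mul_le_mul_of_nonneg_left (hcj j) hqnn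
        have hσ2 : ‖ss‖^2 ≤ 2*C^2*(1+q) := by
          have h1 := hσ x₀
          have h2 : q = ‖x₀‖^2 := by rw [hqdef, real_inner_self_eq_norm_sq]
          nlinarith [norm_nonneg ss, norm_nonneg x₀, hC0, sq_nonneg (‖x₀‖ - 1)]
        have h1q : (0:ℝ) ≤ 1 + q := by linarith
        have hcb : cc + bb*q ≤ 6*(m:ℝ)^2*(1+q)^(m-1) := by
          have hm1' : (1:ℝ) ≤ (m:ℝ) := by exact_mod_cast hm1
          have hm2 : (m:ℝ) ≤ (m:ℝ)^2 := by nlinarith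
          have hbq : bb * q ≤ 4*(m:ℝ)^2*(1+q)^(m-1) := by
            rcases Nat.lt_or_ge m 2 with h | h
            · have hmm : m = 1 := by omega
              have hbb0 : bb = 0 := by
                rw [hbbdef, hmm]
                norm_num
              rw [hbb0, zero_mul]
              positivity
            · have hpow2 : (1+q)^(m-1-1)*(1+q) = (1+q)^(m-1) := by
                rw [← pow_succ]
                congr 1
                omega
              have hcast : ((m-1:ℕ):ℝ) ≤ (m:ℝ) := by
                exact_mod_cast Nat.cast_le.2 (Nat.sub_le m 1)
              have hcast0 : (0:ℝ) ≤ ((m-1:ℕ):ℝ) := Nat.cast_nonneg _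
              have hpq : (0:ℝ) ≤ (1+q)^(m-1-1) := pow_nonneg h1q _
              have s1 : (1+q)^(m-1-1)*q ≤ (1+q)^(m-1) := by
                linarith [hpow2, hpq]
              have s2 : 4*(m:ℝ)*((m-1:ℕ):ℝ) ≤ 4*(m:ℝ)^2 := by nlinarith [hcast, hm1']
              rw [hbbdef]
              nlinarith [mul_le_mul s2 s1 (mul_nonneg hpq hqnn)
                (by positivity : (0:ℝ) ≤ 4*(m:ℝ)^2)]
          have hpnn : (0:ℝ) ≤ (1+q)^(m-1) := pow_nonneg h1q _
          rw [hccdef]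
          nlinarith [hbq, hpnn]
        have hpowm : (1+q)^(m-1)*(1+q) = (1+q)^m := by
          rw [← pow_succ]
          congr 1
          omega
        have hSsum : ∑ j : Fin d, (cc * (⟪col j, col j⟫:ℝ) + bb * ⟪x₀, col j⟫^2)
            ≤ 12*(m:ℝ)^2*C^2*(d:ℝ)^2*(1+q)^m := by
          calc ∑ j : Fin d, (cc * (⟪col j, col j⟫:ℝ) + bb * ⟪x₀, col j⟫^2)
              ≤ ∑ _j : Fin d, (cc * ((d:ℝ)*‖ss‖^2) + bb * (q * ((d:ℝ)*‖ss‖^2))) :=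
                Finset.sum_le_sum fun j _ => add_le_add
                  (mul_le_mul_of_nonneg_left (hcj j) hccnn)
                  (mul_le_mul_of_nonneg_left (hxcj j) hbbnn)
            _ = ((d:ℝ)^2*‖ss‖^2) * (cc + bb*q) := by
                simp [Finset.sum_const, Finset.card_univ, nsmul_eq_mul]
                ring
            _ ≤ ((d:ℝ)^2*‖ss‖^2) * (6*(m:ℝ)^2*(1+q)^(m-1)) :=
                mul_le_mul_of_nonneg_left hcb (by positivity)
            _ ≤ ((d:ℝ)^2*(2*C^2*(1+q))) * (6*(m:ℝ)^2*(1+q)^(m-1)) :=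
                mul_le_mul_of_nonneg_right
                  (mul_le_mul_of_nonneg_left hσ2 (sq_nonneg (d:ℝ)))
                  (by positivity)
            _ = 12*(m:ℝ)^2*C^2*(d:ℝ)^2*((1+q)^(m-1)*(1+q)) := by ring
            _ = 12*(m:ℝ)^2*C^2*(d:ℝ)^2*(1+q)^m := by rw [hpowm]
        calc -(e2 * (12*(m:ℝ)^2*C^2*(d:ℝ)^2*(1+q)^m))
            ≤ -(e2 * (∑ j : Fin d, (cc * (⟪col j, col j⟫:ℝ) + bb * ⟪x₀, col j⟫^2))) := by
              have := mul_le_mul_of_nonneg_left hSsum he2.le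
              linarith
          _ = ∑ j : Fin d, -(e2 * (cc * (⟪col j, col j⟫:ℝ) + bb * ⟪x₀, col j⟫^2)) := by
              rw [Finset.mul_sum, ← Finset.sum_neg_distrib]
          _ ≤ ∑ j, e1 * ((⟪(Matrix.toEuclideanCLM (𝕜 := ℝ) (Uxx t₀ x₀)) (col j), col j⟫:ℝ)
              - ⟪(Matrix.toEuclideanCLM (𝕜 := ℝ) (Vxx t₀ x₀)) (col j), col j⟫) :=
              Finset.sum_le_sum fun j _ => hperj j
          _ = e1 * ∑ j, ((⟪(Matrix.toEuclideanCLM (𝕜 := ℝ) (Uxx t₀ x₀)) (col j), col j⟫:ℝ)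
              - ⟪(Matrix.toEuclideanCLM (𝕜 := ℝ) (Vxx t₀ x₀)) (col j), col j⟫) :=
              (Finset.mul_sum _ _ _).symm
          _ = e1 * ((ss * ssᵀ * Uxx t₀ x₀).trace - (ss * ssᵀ * Vxx t₀ x₀).trace) := by
              rw [htr]
      -- PDE
      have hPDE : (Ut t₀ x₀ - Vt t₀ x₀) + ρ x₀ * (⟪x₀, Ux t₀ x₀⟫ - ⟪x₀, Vx t₀ x₀⟫)
          + (1/2) * ((σ x₀ * (σ x₀)ᵀ * Uxx t₀ x₀).trace - (σ x₀ * (σ x₀)ᵀ * Vxx t₀ x₀).trace)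
          ≤ ρ x₀ * (U t₀ x₀ - V t₀ x₀) := by
        have h1 := hUsuper t₀ ht₀mem x₀
        have h2 := hVsub t₀ ht₀mem x₀
        linarith
      -- FINAL CONTRADICTION
      have hα' : e1 * (U t₀ x₀ - V t₀ x₀) + e2 * g x₀ ≤ 0 := by
        rw [hGval t₀ x₀] at hα
        rw [he1def, he2def]
        linarith [hα]
      have hccq : cc * q ≤ 2*(m:ℝ) * g x₀ := by
        have hgval : g x₀ = (1+q)^m := rfl
        have hpow : (1+q)^(m-1)*(1+q) = (1+q)^m := by
          rw [← pow_succ]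
          congr 1
          omega
        have h1 : (1+q)^(m-1)*q ≤ (1+q)^(m-1)*(1+q) :=
          mul_le_mul_of_nonneg_left (by linarith) (by positivity)
        have h2 := mul_le_mul_of_nonneg_left h1 (by positivity : (0:ℝ) ≤ 2*(m:ℝ))
        rw [hccdef, hgval]
        calc 2*(m:ℝ)*(1+q)^(m-1)*q = 2*(m:ℝ)*((1+q)^(m-1)*q) := by ring
          _ ≤ 2*(m:ℝ)*((1+q)^(m-1)*(1+q)) := h2
          _ = 2*(m:ℝ)*(1+q)^m := by rw [hpow]
      have hgx₀ : g x₀ = (1+q)^m := by rw [hgdef, hqdef]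
      -- multiply the PDE by e1 and combine
      have hr := hρM x₀
      have hrK := hK x₀
      have hMr : 0 ≤ M + ρ x₀ := by linarith
      have hG1 : (1:ℝ) ≤ g x₀ := hg1 x₀
      have h1 : ρ x₀ * (e1 * (⟪x₀, Ux t₀ x₀⟫ - ⟪x₀, Vx t₀ x₀⟫))
          = -(ρ x₀ * (e2 * (cc*q))) := by
        have h : e1 * (⟪x₀, Ux t₀ x₀⟫ - ⟪x₀, Vx t₀ x₀⟫) = -(e2*(cc*q)) := by linarith [hinner0]
        rw [h]; ring
      have h2 := mul_le_mul_of_nonneg_left hPDE he1.le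
      have h3 : ρ x₀ * (e2*(cc*q)) ≤ K * (e2*(cc*q)) :=
        mul_le_mul_of_nonneg_right (le_trans (le_abs_self _) hrK)
          (mul_nonneg he2.le (mul_nonneg hccnn hqnn))
      have h4 : K * (e2*(cc*q)) ≤ K * (e2*(2*(m:ℝ)*g x₀)) :=
        mul_le_mul_of_nonneg_left (mul_le_mul_of_nonneg_left hccq he2.le) hK0
      have h5 : 0 ≤ (M + ρ x₀) * (e2 * g x₀) :=
        mul_nonneg hMr (mul_nonneg he2.le (by linarith))
      have h6 := mul_le_mul_of_nonneg_left hα' hMr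
      have h7 : 0 < e2 * g x₀ := mul_pos he2 (lt_of_lt_of_le one_pos hG1)
      have hlam' : lam * (e2 * g x₀)
          = (2*(m:ℝ)*K + 6*(m:ℝ)^2*C^2*(d:ℝ)^2 + 1) * (e2 * g x₀) := by rw [hlamdef]
      linarith only [htime, htrace, h1, h2, h3, h4, h5, h6, h7, hlam', hgx₀, hα']
    intro t ht x
    exact lt_of_lt_of_le hpos (hglob t ht x)
  -- conclude by letting ε → 0
  intro t ht x
  have hB : 0 < Real.exp (lam*(T-t)) * g x := by
    have := hg1 x; nlinarith [Real.exp_pos (lam*(T-t))]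
  have hA : 0 ≤ Real.exp (M*t) * (U t x - V t x) := by
    by_contra hA
    push_neg at hA
    set A : ℝ := Real.exp (M*t) * (U t x - V t x) with hAdef
    set B : ℝ := Real.exp (lam*(T-t)) * g x with hBdef
    have hεp : 0 < -A / B := div_pos (by linarith) hB
    have := key (-A/B) hεp t ht x
    rw [← hAdef, mul_assoc, ← hBdef, div_mul_cancel₀ _ (ne_of_gt hB)] at this
    linarith
  nlinarith [Real.exp_pos (M*t)]
end

section
/- Let d ≥ 1 and let K ⊆ ℝ^d be a nonempty closed convex set with support function δ_K. Let σ_Y : ℝ^d × ℝ^d → ℝ^d and σ : ℝ^d × ℝ^d → M_d(ℝ) be continuous and suppose that for every (x, p) ∈ ℝ^d × ℝ^d there is a unique a ∈ ℝ^d, denoted ψ(x, p), such that σ_Y(x, a) = σ(x, a)ᵀ p, and that ψ : ℝ^d × ℝ^d → ℝ^d is continuous. Assume further the coercivity condition: for every compact set A' ⊆ ℝ^d × ℝ^d, inf_{(x,p) ∈ A'} ‖σ_Y(x, a) − σ(x, a)ᵀ p‖ → ∞ as ‖a‖ → ∞. Let A ⊆ ℝ^d × ℝ^d be a compact set and ε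 > 0 such that for every (x, p) ∈ A there exists ζ ∈ ℝ^d with ‖ζ‖ = 1 and δ_K(ζ) − ⟨ζ, ψ(x, p)⟩ ≤ −ε. Then: (i) there exists c_ε > 0 such that ‖a − ψ(x, p)‖ ≥ c_ε for every a ∈ K and every (x, p) ∈ A; and (ii) there exists k_ε > 0 such that ‖σ_Y(x, a) − σ(x, a)ᵀ p‖ ≥ k_ε for every a ∈ K and every (x, p) ∈ A. -/
open Set Matrix

open scoped RealInnerProductSpace

/-- **Uniform separation from the constraint set and uniform non-degeneracy.**
Let `K ⊆ ℝ^d` be nonempty, closed and convex with support function `δ_K`, and let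
`ψ(x,p)` be the unique solution `a` of `σ_Y(x,a) = σ(x,a)ᵀ p`, assumed continuous, with the
coercivity condition that `‖σ_Y(x,a) − σ(x,a)ᵀ p‖ → ∞` uniformly over compact sets of `(x,p)`
as `‖a‖ → ∞`.  If on a compact set `A` the constraint is violated by at least `ε`
(`δ_K(ζ) − ⟨ζ, ψ(x,p)⟩ ≤ −ε` for some unit `ζ`), then `ψ(x,p)` stays at uniform distance
`c_ε > 0` from `K` and `‖σ_Y(x,a) − σ(x,a)ᵀ p‖ ≥ k_ε > 0` uniformly for `a ∈ K`, `(x,p) ∈ A`. -/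
theorem stmt_6
    (d : ℕ) (hd : 1 ≤ d)
    (K : Set (EuclideanSpace ℝ (Fin d)))
    (hKne : K.Nonempty) (hKclosed : IsClosed K) (hKconv : Convex ℝ K)
    (σY : EuclideanSpace ℝ (Fin d) → EuclideanSpace ℝ (Fin d) → EuclideanSpace ℝ (Fin d))
    (σ : EuclideanSpace ℝ (Fin d) → EuclideanSpace ℝ (Fin d) → Matrix (Fin d) (Fin d) ℝ)
    (hσYc : Continuous (fun q : EuclideanSpace ℝ (Fin d) × EuclideanSpace ℝ (Fin d) =>
      σY q.1 q.2))
    (hσc : Continuous (fun q : EuclideanSpace ℝ (Fin d) × EuclideanSpace ℝ (Fin d) =>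
      σ q.1 q.2))
    (ψ : EuclideanSpace ℝ (Fin d) → EuclideanSpace ℝ (Fin d) → EuclideanSpace ℝ (Fin d))
    (hψ : ∀ x p, σY x (ψ x p) = Matrix.toEuclideanLin ((σ x (ψ x p))ᵀ) p)
    (hψuniq : ∀ x p a, σY x a = Matrix.toEuclideanLin ((σ x a)ᵀ) p → a = ψ x p)
    (hψc : Continuous (fun q : EuclideanSpace ℝ (Fin d) × EuclideanSpace ℝ (Fin d) =>
      ψ q.1 q.2))
    (hcoerc : ∀ A' : Set (EuclideanSpace ℝ (Fin d) × EuclideanSpace ℝ (Fin d)),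
      IsCompact A' → ∀ M : ℝ, ∃ R : ℝ, ∀ a : EuclideanSpace ℝ (Fin d), R ≤ ‖a‖ →
        ∀ q ∈ A', M ≤ ‖σY q.1 a - Matrix.toEuclideanLin ((σ q.1 a)ᵀ) q.2‖)
    (A : Set (EuclideanSpace ℝ (Fin d) × EuclideanSpace ℝ (Fin d))) (hA : IsCompact A)
    (ε : ℝ) (hε : 0 < ε)
    (hviol : ∀ q ∈ A, ∃ ζ : EuclideanSpace ℝ (Fin d), ‖ζ‖ = 1 ∧
      (⨆ η : K, (((⟪(η : EuclideanSpace ℝ (Fin d)), ζ⟫ : ℝ)) : EReal)) ≤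
        (((⟪ζ, ψ q.1 q.2⟫ : ℝ) - ε : ℝ) : EReal)) :
    (∃ c : ℝ, 0 < c ∧ ∀ a ∈ K, ∀ q ∈ A, c ≤ ‖a - ψ q.1 q.2‖) ∧
    (∃ k : ℝ, 0 < k ∧ ∀ a ∈ K, ∀ q ∈ A,
      k ≤ ‖σY q.1 a - Matrix.toEuclideanLin ((σ q.1 a)ᵀ) q.2‖) := by

  classical
  -- Part (i): c = ε works
  have h1 : ∀ a ∈ K, ∀ q ∈ A, ε ≤ ‖a - ψ q.1 q.2‖ := by
    intro a ha q hq
    obtain ⟨ζ, hζ, hsup⟩ := hviol q hq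
    have hle : ((⟪a, ζ⟫ : ℝ) : EReal) ≤ (((⟪ζ, ψ q.1 q.2⟫ : ℝ) - ε : ℝ) : EReal) :=
      le_trans (le_iSup (fun η : K => ((⟪(η : EuclideanSpace ℝ (Fin d)), ζ⟫ : ℝ) : EReal))
        ⟨a, ha⟩) hsup
    rw [EReal.coe_le_coe_iff] at hle
    have hcs : ⟪ζ, ψ q.1 q.2 - a⟫ ≤ ‖ζ‖ * ‖ψ q.1 q.2 - a‖ := real_inner_le_norm _ _
    rw [inner_sub_right] at hcs
    have hsym : ⟪ζ, a⟫ = ⟪a, ζ⟫ := real_inner_comm _ _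
    have hn : ‖a - ψ q.1 q.2‖ = ‖ψ q.1 q.2 - a‖ := norm_sub_rev _ _
    rw [hζ, one_mul] at hcs
    linarith
  refine ⟨⟨ε, hε, h1⟩, ?_⟩
  -- Part (ii)
  obtain ⟨R, hR⟩ := hcoerc A hA 1
  set F : EuclideanSpace ℝ (Fin d) × (EuclideanSpace ℝ (Fin d) × EuclideanSpace ℝ (Fin d)) → ℝ :=
    fun w => ‖σY w.2.1 w.1 - Matrix.toEuclideanLin ((σ w.2.1 w.1)ᵀ) w.2.2‖ with hF
  have hFc : Continuous F := by
    have h2 : Continuous (fun w : EuclideanSpace ℝ (Fin d) ×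
        (EuclideanSpace ℝ (Fin d) × EuclideanSpace ℝ (Fin d)) =>
        Matrix.toEuclideanLin ((σ w.2.1 w.1)ᵀ) w.2.2) := by
      simp only [Matrix.toEuclideanLin_apply]
      refine (PiLp.continuous_toLp 2 (fun _ : Fin d => ℝ)).comp ?_
      refine Continuous.matrix_mulVec ?_ ?_
      · exact Continuous.matrix_transpose (hσc.comp
          ((continuous_fst.comp continuous_snd).prodMk continuous_fst))
      · exact (PiLp.continuous_ofLp 2 (fun _ : Fin d => ℝ)).comp (by fun_prop)
    have h3 : Continuous (fun w : EuclideanSpace ℝ (Fin d) ×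
        (EuclideanSpace ℝ (Fin d) × EuclideanSpace ℝ (Fin d)) => σY w.2.1 w.1) :=
      hσYc.comp ((continuous_fst.comp continuous_snd).prodMk continuous_fst)
    exact (h3.sub h2).norm
  by_cases hC : ((K ∩ Metric.closedBall 0 R) ×ˢ A).Nonempty
  · have hCcpt : IsCompact ((K ∩ Metric.closedBall 0 R) ×ˢ A) :=
      ((Metric.isCompact_of_isClosed_isBounded
        (hKclosed.inter Metric.isClosed_closedBall)
        (Metric.isBounded_closedBall.subset Set.inter_subset_right))).prod hA
    obtain ⟨w₀, hw₀, hmin⟩ := hCcpt.exists_isMinOn hC hFc.continuousOn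
    have hw₀K : w₀.1 ∈ K := hw₀.1.1
    have hw₀A : w₀.2 ∈ A := hw₀.2
    have hm : 0 < F w₀ := by
      rcases (norm_nonneg (σY w₀.2.1 w₀.1 - Matrix.toEuclideanLin ((σ w₀.2.1 w₀.1)ᵀ) w₀.2.2)).lt_or_eq with h | h
      · exact h
      · exfalso
        have heq : σY w₀.2.1 w₀.1 = Matrix.toEuclideanLin ((σ w₀.2.1 w₀.1)ᵀ) w₀.2.2 :=
          sub_eq_zero.mp (norm_eq_zero.mp h.symm)
        have := hψuniq w₀.2.1 w₀.2.2 w₀.1 heq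
        have hε' := h1 w₀.1 hw₀K w₀.2 hw₀A
        rw [this] at hε'
        simp at hε'
        linarith
    refine ⟨min 1 (F w₀), lt_min one_pos hm, ?_⟩
    intro a ha q hq
    by_cases hball : a ∈ Metric.closedBall (0 : EuclideanSpace ℝ (Fin d)) R
    · have := hmin (Set.mk_mem_prod ⟨ha, hball⟩ hq)
      exact le_trans (min_le_right _ _) this
    · have hnorm : R ≤ ‖a‖ := by
        simp only [Metric.mem_closedBall, dist_zero_right, not_le] at hball
        exact hball.le
      exact le_trans (min_le_left _ _) (hR a hnorm q hq)
  · refine ⟨1, one_pos, ?_⟩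
    intro a ha q hq
    have hnotball : a ∉ Metric.closedBall (0 : EuclideanSpace ℝ (Fin d)) R := by
      intro hb
      exact hC ⟨(a, q), Set.mk_mem_prod ⟨ha, hb⟩ hq⟩
    have hnorm : R ≤ ‖a‖ := by
      simp only [Metric.mem_closedBall, dist_zero_right, not_le] at hnotball
      exact hnotball.le
    exact hR a hnorm q hq
end

section
/- Let (Ω, F, P) be a probability space, Z : Ω → ℝ a random variable, g : ℝ → ℝ continuous and bounded from below, and M ≥ 0 a real number. Define the face-lifted function ĝ(x) := sup_{ζ ≥ 0} (g(x + ζ) − Mζ), and assume ĝ(x) < ∞ for every x ∈ ℝ and that ĝ(Z) is integrable. Then sup { E[g(Z + ξ) − Mξ] : ξ : Ω → [0, ∞) measurable and bounded } = E[ĝ(Z)]. -/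
open MeasureTheory Set Filter Topology

section aux
variable (g : ℝ → ℝ) (M : ℝ)

noncomputable def sel : List ℝ → ℝ → ℝ
  | [], _ => 0
  | q :: l, x =>
      if g (x + q) - M * q ≤ g (x + sel l x) - M * sel l x then sel l x else q

lemma sel_mem (l : List ℝ) (x : ℝ) : sel g M l x ∈ (0 : ℝ) :: l := by
  induction l with
  | nil => simp [sel]
  | cons q l ih =>
    simp only [sel]
    split
    · rcases List.mem_cons.1 ih with h | h
      · simp [h]
      · simp [List.mem_cons, h]
    · simp

lemma le_sel_payoff (l : List ℝ) (x : ℝ) :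
    ∀ s ∈ (0:ℝ) :: l, g (x + s) - M * s ≤ g (x + sel g M l x) - M * sel g M l x := by
  induction l with
  | nil => intro s hs; simp only [List.mem_singleton] at hs; subst hs; simp [sel]
  | cons q l ih =>
    intro s hs
    rcases List.mem_cons.1 hs with h | h
    · subst h
      simp only [sel]
      split
      · exact ih 0 (by simp)
      · rename_i hc
        exact le_trans (ih 0 (by simp)) (le_of_not_ge hc)
    · rcases List.mem_cons.1 h with h' | h'
      · subst h'
        simp only [sel]
        split
        · rename_i hc; exact hc
        · exact le_refl _
      · simp only [sel]
        split
        · exact ih s (List.mem_cons_of_mem _ h')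
        · rename_i hc
          exact le_trans (ih s (List.mem_cons_of_mem _ h')) (le_of_not_ge hc)

lemma sel_measurable (hg : Continuous g) (l : List ℝ) : Measurable (sel g M l) := by
  induction l with
  | nil => simp only [sel]; exact measurable_const
  | cons q l ih =>
    have h1 : Measurable fun x => g (x + q) - M * q :=
      ((hg.measurable.comp (measurable_id.add_const q)).sub measurable_const)
    have h2 : Measurable fun x => g (x + sel g M l x) - M * sel g M l x :=
      ((hg.measurable.comp (measurable_id.add ih)).sub (measurable_const.mul ih))
    exact Measurable.ite (measurableSet_le h1 h2) ih measurable_const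

lemma list_bdd (l : List ℝ) : ∃ b : ℝ, ∀ s ∈ l, s ≤ b := by
  induction l with
  | nil => exact ⟨0, by simp⟩
  | cons q l ih =>
    obtain ⟨b, hb⟩ := ih
    exact ⟨max q b, by
      intro s hs
      rcases List.mem_cons.1 hs with h | h
      · exact h ▸ le_max_left _ _
      · exact le_trans (hb s h) (le_max_right _ _)⟩

end aux

/-- **Face-lifted payoff as the value of a static optimization over bounded shifts.**
With `ĝ(x) = sup_{ζ ≥ 0} (g(x+ζ) − Mζ)` (assumed finite everywhere and with `ĝ(Z)`
integrable), the supremum of `E[g(Z+ξ) − Mξ]` over all bounded measurable `ξ ≥ 0`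
equals `E[ĝ(Z)]`. -/
theorem stmt_8
    {Ω : Type*} [MeasurableSpace Ω] (P : Measure Ω) [IsProbabilityMeasure P]
    (Z : Ω → ℝ) (hZ : Measurable Z)
    (g : ℝ → ℝ) (hg : Continuous g) (hgbdd : ∃ m : ℝ, ∀ x, m ≤ g x)
    (M : ℝ) (hM : 0 ≤ M)
    (ghat : ℝ → ℝ)
    (hghat : ∀ x, ghat x = sSup {y : ℝ | ∃ ζ : ℝ, 0 ≤ ζ ∧ y = g (x + ζ) - M * ζ})
    (hfin : ∀ x, BddAbove {y : ℝ | ∃ ζ : ℝ, 0 ≤ ζ ∧ y = g (x + ζ) - M * ζ})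
    (hint : Integrable (fun ω => ghat (Z ω)) P) :
    sSup {r : ℝ | ∃ ξ : Ω → ℝ, Measurable ξ ∧ (∀ ω, 0 ≤ ξ ω) ∧ (∃ b : ℝ, ∀ ω, ξ ω ≤ b) ∧
        r = ∫ ω, (g (Z ω + ξ ω) - M * ξ ω) ∂P}
      = ∫ ω, ghat (Z ω) ∂P := by
  obtain ⟨m, hm⟩ := hgbdd
  set S : Set ℝ := {r : ℝ | ∃ ξ : Ω → ℝ, Measurable ξ ∧ (∀ ω, 0 ≤ ξ ω) ∧
      (∃ b : ℝ, ∀ ω, ξ ω ≤ b) ∧ r = ∫ ω, (g (Z ω + ξ ω) - M * ξ ω) ∂P} with hS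
  -- basic upper bound: payoff ≤ ghat
  have hub : ∀ x ζ, 0 ≤ ζ → g (x + ζ) - M * ζ ≤ ghat x := by
    intro x ζ hζ
    rw [hghat x]
    exact le_csSup (hfin x) ⟨ζ, hζ, rfl⟩
  -- integrability of every payoff
  have key_int : ∀ ξ : Ω → ℝ, Measurable ξ → (∀ ω, 0 ≤ ξ ω) → (∀ b : ℝ, (∀ ω, ξ ω ≤ b) →
      Integrable (fun ω => g (Z ω + ξ ω) - M * ξ ω) P) := by
    intro ξ hmeas hpos b hb
    have hfm : Measurable fun ω => g (Z ω + ξ ω) - M * ξ ω :=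
      (hg.measurable.comp (hZ.add hmeas)).sub (measurable_const.mul hmeas)
    have hbd : Integrable (fun ω => |ghat (Z ω)| + |m - M * b|) P :=
      hint.abs.add (integrable_const _)
    refine Integrable.mono' hbd hfm.aestronglyMeasurable (ae_of_all _ fun ω => ?_)
    have h1 : g (Z ω + ξ ω) - M * ξ ω ≤ ghat (Z ω) := hub _ _ (hpos ω)
    have h2 : m - M * b ≤ g (Z ω + ξ ω) - M * ξ ω :=
      sub_le_sub (hm _) (mul_le_mul_of_nonneg_left (hb ω) hM)
    rw [Real.norm_eq_abs, abs_le]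
    constructor
    · calc -(|ghat (Z ω)| + |m - M * b|) ≤ -|m - M * b| := by
            have := abs_nonneg (ghat (Z ω)); linarith
        _ ≤ m - M * b := neg_abs_le _
        _ ≤ _ := h2
    · calc g (Z ω + ξ ω) - M * ξ ω ≤ ghat (Z ω) := h1
        _ ≤ |ghat (Z ω)| := le_abs_self _
        _ ≤ _ := by have := abs_nonneg (m - M * b); linarith
  -- every element of S is ≤ ∫ ghat
  have hSle : ∀ r ∈ S, r ≤ ∫ ω, ghat (Z ω) ∂P := by
    rintro r ⟨ξ, hmeas, hpos, ⟨b, hb⟩, rfl⟩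
    exact integral_mono (key_int ξ hmeas hpos b hb) hint fun ω => hub _ _ (hpos ω)
  have hSne : S.Nonempty := by
    refine ⟨∫ ω, (g (Z ω + (0:ℝ)) - M * 0) ∂P, fun _ => 0, measurable_const,
      fun _ => le_refl _, ⟨0, fun _ => le_refl _⟩, rfl⟩
  have hSbdd : BddAbove S := ⟨_, hSle⟩
  -- the approximating sequence
  set e : ℕ → ℝ := fun n => max 0 ((Denumerable.ofNat ℚ n : ℚ) : ℝ) with he
  set L : ℕ → List ℝ := fun n => (List.range (n+1)).map e with hL
  have hLpos : ∀ n s, s ∈ (0:ℝ) :: L n → 0 ≤ s := by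
    intro n s hs
    rcases List.mem_cons.1 hs with h | h
    · exact le_of_eq h.symm
    · obtain ⟨k, _, rfl⟩ := List.mem_map.1 h
      exact le_max_left _ _
  set ξ : ℕ → Ω → ℝ := fun n ω => sel g M (L n) (Z ω) with hxi
  set f : ℕ → Ω → ℝ := fun n ω => g (Z ω + ξ n ω) - M * ξ n ω with hf
  have hξpos : ∀ n ω, 0 ≤ ξ n ω := fun n ω => hLpos n _ (sel_mem g M (L n) (Z ω))
  have hξmeas : ∀ n, Measurable (ξ n) := fun n => (sel_measurable g M hg (L n)).comp hZ
  have hξbdd : ∀ n, ∃ b : ℝ, ∀ ω, ξ n ω ≤ b := by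
    intro n
    obtain ⟨b, hb⟩ := list_bdd ((0:ℝ) :: L n)
    exact ⟨b, fun ω => hb _ (sel_mem g M (L n) (Z ω))⟩
  have hfint : ∀ n, Integrable (f n) P := by
    intro n
    obtain ⟨b, hb⟩ := hξbdd n
    exact key_int (ξ n) (hξmeas n) (hξpos n) b hb
  have hfS : ∀ n, (∫ ω, f n ω ∂P) ∈ S :=
    fun n => ⟨ξ n, hξmeas n, hξpos n, hξbdd n, rfl⟩
  have hfle : ∀ n ω, f n ω ≤ ghat (Z ω) := fun n ω => hub _ _ (hξpos n ω)
  have hmono : ∀ ω, Monotone fun n => f n ω := by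
    intro ω
    refine monotone_nat_of_le_succ fun n => ?_
    have hsub : sel g M (L n) (Z ω) ∈ (0:ℝ) :: L (n+1) := by
      rcases List.mem_cons.1 (sel_mem g M (L n) (Z ω)) with h | h
      · exact List.mem_cons.2 (Or.inl h)
      · refine List.mem_cons.2 (Or.inr ?_)
        obtain ⟨k, hk, hek⟩ := List.mem_map.1 h
        rw [← hek]
        exact List.mem_map.2 ⟨k, List.mem_range.2 (lt_trans (List.mem_range.1 hk)
          (Nat.lt_succ_self _)), rfl⟩
    exact le_sel_payoff g M (L (n+1)) (Z ω) _ hsub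
  have htend : ∀ ω, Tendsto (fun n => f n ω) atTop (𝓝 (ghat (Z ω))) := by
    intro ω
    refine tendsto_atTop_isLUB (hmono ω) ⟨?_, ?_⟩
    · rintro _ ⟨n, rfl⟩; exact hfle n ω
    · intro y hy
      rw [hghat (Z ω)]
      refine csSup_le ⟨g (Z ω + 0) - M * 0, 0, le_refl _, rfl⟩ ?_
      rintro _ ⟨ζ, hζ, rfl⟩
      -- show g (Z ω + ζ) - M * ζ ≤ y using rational approximation
      refine le_of_forall_pos_le_add fun ε hε => ?_
      have hc : ContinuousAt (fun t => g (Z ω + t) - M * t) ζ :=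
        ((hg.comp (continuous_const.add continuous_id)).sub
          (continuous_const.mul continuous_id)).continuousAt
      rw [Metric.continuousAt_iff] at hc
      obtain ⟨δ, hδ, hcd⟩ := hc ε hε
      obtain ⟨q, hq1, hq2⟩ := exists_rat_btwn (lt_add_of_pos_right ζ hδ)
      have hqd : dist ((q:ℝ)) ζ < δ := by
        rw [Real.dist_eq, abs_of_pos (by linarith)]; linarith
      have hclose := hcd hqd
      rw [Real.dist_eq, abs_lt] at hclose
      -- (q : ℝ) appears in the list L n for n = encode q
      have hqpos : (0:ℝ) ≤ (q:ℝ) := le_trans hζ hq1.le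
      obtain ⟨n, hofnat⟩ : ∃ n, Denumerable.ofNat ℚ n = q :=
        ((Denumerable.eqv ℚ).symm.surjective q).imp fun n hn => hn
      have hqe : e n = (q:ℝ) := by
        rw [he]; simp only [hofnat]; exact max_eq_right hqpos
      have hqmem : (q:ℝ) ∈ L n := by
        rw [hL]
        exact List.mem_map.2 ⟨n, List.mem_range.2 (Nat.lt_succ_self n), hqe⟩
      have : g (Z ω + (q:ℝ)) - M * (q:ℝ) ≤ f n ω :=
        le_sel_payoff g M (L n) (Z ω) _ (List.mem_cons_of_mem _ hqmem)
      have hfy : f n ω ≤ y := hy ⟨n, rfl⟩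
      linarith
  have hint_tend : Tendsto (fun n => ∫ ω, f n ω ∂P) atTop (𝓝 (∫ ω, ghat (Z ω) ∂P)) :=
    integral_tendsto_of_tendsto_of_monotone hfint hint (ae_of_all _ hmono) (ae_of_all _ htend)
  refine le_antisymm (csSup_le hSne hSle) ?_
  exact le_of_tendsto hint_tend (Eventually.of_forall fun n => le_csSup hSbdd (hfS n))
end

section
/- Let (Ω, F, P) be a probability space, G : Ω → [0, ∞) and V : Ω → [0, ∞) measurable with V·G integrable, y ≥ 0, and let ℓ : [0, ∞) → [0, ∞) be convex, continuous and nondecreasing with E[ℓ(G)] < ∞. Then there exists a measurable φ̂ : Ω → [0, 1] with E[V G φ̂] ≤ y such that E[ℓ((1 − φ̂)G)] = inf { E[ℓ((1 − φ)G)] : φ : Ω → [0, 1] measurable, E[V G φ] ≤ y }, i.e. the infimum in the constrained expected-shortfall problem is attained. -/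
open MeasureTheory Set
open Filter Topology

/-- **Existence of a minimizer for the constrained expected-shortfall problem.**
For `G, V ≥ 0` with `V·G` integrable, `y ≥ 0`, and `ℓ : [0,∞) → [0,∞)` convex, continuous,
nondecreasing with `E[ℓ(G)] < ∞`, there is a measurable `φ̂ : Ω → [0,1]` with
`E[V G φ̂] ≤ y` attaining the infimum of `E[ℓ((1−φ)G)]` over all measurable `φ : Ω → [0,1]`
with `E[V G φ] ≤ y`. -/
theorem stmt_9
    {Ω : Type*} [MeasurableSpace Ω] (P : Measure Ω) [IsProbabilityMeasure P]
    (G V : Ω → ℝ) (hGmeas : Measurable G) (hVmeas : Measurable V)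
    (hGpos : ∀ ω, 0 ≤ G ω) (hVpos : ∀ ω, 0 ≤ V ω)
    (hVG : Integrable (fun ω => V ω * G ω) P)
    (y : ℝ) (hy : 0 ≤ y)
    (ℓ : ℝ → ℝ)
    (hconv : ConvexOn ℝ (Ici 0) ℓ)
    (hcont : ContinuousOn ℓ (Ici 0))
    (hmono : MonotoneOn ℓ (Ici 0))
    (hnonneg : ∀ x ∈ Ici (0:ℝ), 0 ≤ ℓ x)
    (hint : Integrable (fun ω => ℓ (G ω)) P) :
    ∃ φhat : Ω → ℝ, Measurable φhat ∧ (∀ ω, φhat ω ∈ Icc (0:ℝ) 1) ∧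
      (∫ ω, V ω * G ω * φhat ω ∂P) ≤ y ∧
      (∫ ω, ℓ ((1 - φhat ω) * G ω) ∂P)
        = sInf {r : ℝ | ∃ φ : Ω → ℝ, Measurable φ ∧ (∀ ω, φ ω ∈ Icc (0:ℝ) 1) ∧
            (∫ ω, V ω * G ω * φ ω ∂P) ≤ y ∧ r = ∫ ω, ℓ ((1 - φ ω) * G ω) ∂P} := by
  classical
  -- the everywhere-defined modification of ℓ
  set L : ℝ → ℝ := fun x => ℓ (max x 0) with hLdef
  have hLcont : Continuous L := by
    rw [hLdef]
    rw [← continuousOn_univ]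
    exact hcont.comp (continuous_id.max continuous_const).continuousOn
      (fun x _ => Set.mem_Ici.2 (le_max_right _ _))
  have hLeq : ∀ x : ℝ, 0 ≤ x → L x = ℓ x := by
    intro x hx; simp [hLdef, max_eq_left hx]
  have hLnonneg : ∀ x, 0 ≤ L x := fun x => hnonneg _ (Set.mem_Ici.2 (le_max_right _ _))
  have hLmono : ∀ a b : ℝ, 0 ≤ a → a ≤ b → L a ≤ L b := by
    intro a b ha hab
    rw [hLeq a ha, hLeq b (ha.trans hab)]
    exact hmono ha (ha.trans hab) hab
  set S : Set ℝ := {r : ℝ | ∃ φ : Ω → ℝ, Measurable φ ∧ (∀ ω, φ ω ∈ Icc (0:ℝ) 1) ∧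
      (∫ ω, V ω * G ω * φ ω ∂P) ≤ y ∧ r = ∫ ω, ℓ ((1 - φ ω) * G ω) ∂P} with hSdef
  have hSne : S.Nonempty := by
    refine ⟨∫ ω, ℓ ((1 - (0:ℝ)) * G ω) ∂P, fun _ => (0:ℝ), measurable_const,
      fun ω => ⟨le_refl 0, zero_le_one⟩, ?_, rfl⟩
    simpa using hy
  have hSbdd : BddBelow S := by
    refine ⟨0, ?_⟩
    rintro r ⟨φ, hφm, hφ01, hφy, rfl⟩
    refine integral_nonneg fun ω => hnonneg _ ?_
    exact mul_nonneg (by linarith [(hφ01 ω).2]) (hGpos ω)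
  set m : ℝ := sInf S with hmdef
  -- integrability helpers
  have intVG : ∀ (f : Ω → ℝ), AEStronglyMeasurable f P → (∀ᵐ ω ∂P, f ω ∈ Icc (0:ℝ) 1) →
      Integrable (fun ω => V ω * G ω * f ω) P := by
    intro f hf hf01
    refine hVG.mono ((hVmeas.mul hGmeas).aestronglyMeasurable.mul hf) ?_
    filter_upwards [hf01] with ω h01
    have h0 : 0 ≤ V ω * G ω := mul_nonneg (hVpos ω) (hGpos ω)
    rw [Real.norm_eq_abs, Real.norm_eq_abs, abs_mul, abs_of_nonneg h0]
    have : |f ω| ≤ 1 := abs_le.2 ⟨by linarith [h01.1], h01.2⟩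
    exact mul_le_of_le_one_right h0 this
  have intL : ∀ (f : Ω → ℝ), AEStronglyMeasurable f P → (∀ᵐ ω ∂P, f ω ∈ Icc (0:ℝ) 1) →
      Integrable (fun ω => L ((1 - f ω) * G ω)) P := by
    intro f hf hf01
    refine hint.mono (hLcont.comp_aestronglyMeasurable
      ((aestronglyMeasurable_const.sub hf).mul hGmeas.aestronglyMeasurable)) ?_
    filter_upwards [hf01] with ω h01
    have harg0 : 0 ≤ (1 - f ω) * G ω := mul_nonneg (by linarith [h01.2]) (hGpos ω)
    have harg1 : (1 - f ω) * G ω ≤ G ω := by nlinarith [h01.1, h01.2, hGpos ω]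
    rw [Real.norm_eq_abs, Real.norm_eq_abs, abs_of_nonneg (hLnonneg _),
      abs_of_nonneg (hnonneg _ (hGpos ω))]
    calc L ((1 - f ω) * G ω) ≤ L (G ω) := hLmono _ _ harg0 harg1
      _ = ℓ (G ω) := hLeq _ (hGpos ω)
  -- equality of L- and ℓ-integrals for [0,1]-valued functions
  have hLeqI : ∀ (f : Ω → ℝ), (∀ ω, f ω ∈ Icc (0:ℝ) 1) →
      (∫ ω, L ((1 - f ω) * G ω) ∂P) = ∫ ω, ℓ ((1 - f ω) * G ω) ∂P := by
    intro f hf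
    refine integral_congr_ae (Eventually.of_forall fun ω => ?_)
    exact hLeq _ (mul_nonneg (by linarith [(hf ω).2]) (hGpos ω))
  -- the nested constraint sets in L²
  set A : ℕ → Set (Lp ℝ 2 P) := fun n =>
    {f | (∀ᵐ ω ∂P, f ω ∈ Icc (0:ℝ) 1) ∧ (∫ ω, V ω * G ω * f ω ∂P) ≤ y ∧
      (∫ ω, L ((1 - f ω) * G ω) ∂P) ≤ m + 1/(n+1)} with hAdef
  have hinv : ∀ n : ℕ, (0:ℝ) < 1/(n+1) := by
    intro n; positivity
  have hAne : ∀ n : ℕ, (A n).Nonempty := by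
    intro n
    obtain ⟨r, hrS, hrlt⟩ := exists_lt_of_csInf_lt hSne (lt_add_of_pos_right m (hinv n))
    obtain ⟨φ, hφm, hφ01, hφy, rfl⟩ := hrS
    have hmem : MemLp φ 2 P := by
      refine MemLp.of_bound hφm.aestronglyMeasurable 1 (Eventually.of_forall fun ω => ?_)
      rw [Real.norm_eq_abs, abs_of_nonneg (hφ01 ω).1]; exact (hφ01 ω).2
    have hcoe : ⇑(hmem.toLp φ) =ᵐ[P] φ := hmem.coeFn_toLp
    refine ⟨hmem.toLp φ, ?_, ?_, ?_⟩
    · filter_upwards [hcoe] with ω h; rw [h]; exact hφ01 ω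
    · rw [integral_congr_ae (g := fun ω => V ω * G ω * φ ω) ?_]
      · exact hφy
      · filter_upwards [hcoe] with ω h; rw [h]
    · rw [integral_congr_ae (g := fun ω => L ((1 - φ ω) * G ω)) ?_]
      · rw [hLeqI φ hφ01]; exact hrlt.le
      · filter_upwards [hcoe] with ω h; rw [h]
  have hAmono : ∀ {n k : ℕ}, n ≤ k → A k ⊆ A n := by
    intro n k hnk f hf
    refine ⟨hf.1, hf.2.1, hf.2.2.trans ?_⟩
    have : (1:ℝ)/(k+1) ≤ 1/(n+1) := by
      apply one_div_le_one_div_of_le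
      · positivity
      · have : (n:ℝ) ≤ k := Nat.cast_le.2 hnk
        linarith
    linarith
  -- midpoint of two elements stays in A n
  have hmid : ∀ (n : ℕ) (f g : Lp ℝ 2 P), f ∈ A n → g ∈ A n →
      (2⁻¹ : ℝ) • (f + g) ∈ A n := by
    intro n f g hf hg
    obtain ⟨hf01, hfy, hfL⟩ := hf
    obtain ⟨hg01, hgy, hgL⟩ := hg
    have hae : ⇑((2⁻¹ : ℝ) • (f + g)) =ᵐ[P] fun ω => 2⁻¹ * (f ω + g ω) := by
      filter_upwards [Lp.coeFn_smul (2⁻¹ : ℝ) (f + g), Lp.coeFn_add f g] with ω h1 h2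
      rw [h1]
      simp only [Pi.smul_apply, h2, Pi.add_apply, smul_eq_mul]
    have hIccMid : ∀ᵐ ω ∂P, ((2⁻¹ : ℝ) • (f + g)) ω ∈ Icc (0:ℝ) 1 := by
      filter_upwards [hae, hf01, hg01] with ω h hfo hgo
      rw [h]; exact ⟨by linarith [hfo.1, hgo.1], by linarith [hfo.2, hgo.2]⟩
    refine ⟨hIccMid, ?_, ?_⟩
    · have heq : (fun ω => V ω * G ω * ((2⁻¹ : ℝ) • (f + g)) ω)
          =ᵐ[P] fun ω => 2⁻¹ * (V ω * G ω * f ω) + 2⁻¹ * (V ω * G ω * g ω) := by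
        filter_upwards [hae] with ω h; rw [h]; ring
      rw [integral_congr_ae heq, integral_add ((intVG f (Lp.aestronglyMeasurable f) hf01).const_mul _)
        ((intVG g (Lp.aestronglyMeasurable g) hg01).const_mul _), integral_const_mul, integral_const_mul]
      linarith
    · have hptwise : ∀ᵐ ω ∂P, L ((1 - ((2⁻¹ : ℝ) • (f + g)) ω) * G ω)
          ≤ 2⁻¹ * L ((1 - f ω) * G ω) + 2⁻¹ * L ((1 - g ω) * G ω) := by
        filter_upwards [hae, hf01, hg01] with ω h hfo hgo
        rw [h]
        have ha : (0:ℝ) ≤ (1 - f ω) * G ω := mul_nonneg (by linarith [hfo.2]) (hGpos ω)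
        have hb : (0:ℝ) ≤ (1 - g ω) * G ω := mul_nonneg (by linarith [hgo.2]) (hGpos ω)
        have harg : (1 - 2⁻¹ * (f ω + g ω)) * G ω
            = 2⁻¹ * ((1 - f ω) * G ω) + 2⁻¹ * ((1 - g ω) * G ω) := by ring
        rw [harg, hLeq _ (by positivity), hLeq _ ha, hLeq _ hb]
        have := hconv.2 ha hb (by norm_num : (0:ℝ) ≤ 2⁻¹) (by norm_num : (0:ℝ) ≤ 2⁻¹)
          (by norm_num : (2⁻¹:ℝ) + 2⁻¹ = 1)
        simpa [smul_eq_mul] using this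
      have hintMid := intL _ (Lp.aestronglyMeasurable ((2⁻¹ : ℝ) • (f + g))) hIccMid
      have hintf := intL f (Lp.aestronglyMeasurable f) hf01
      have hintg := intL g (Lp.aestronglyMeasurable g) hg01
      calc (∫ ω, L ((1 - ((2⁻¹ : ℝ) • (f + g)) ω) * G ω) ∂P)
          ≤ ∫ ω, (2⁻¹ * L ((1 - f ω) * G ω) + 2⁻¹ * L ((1 - g ω) * G ω)) ∂P := by
            exact integral_mono_ae hintMid ((hintf.const_mul _).add (hintg.const_mul _)) hptwise
        _ = 2⁻¹ * (∫ ω, L ((1 - f ω) * G ω) ∂P) + 2⁻¹ * (∫ ω, L ((1 - g ω) * G ω) ∂P) := by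
            rw [integral_add (hintf.const_mul _) (hintg.const_mul _), integral_const_mul,
              integral_const_mul]
        _ ≤ m + 1/(n+1) := by linarith
  -- norms of elements of A n
  have hnormle : ∀ (n : ℕ) (f : Lp ℝ 2 P), f ∈ A n → ‖f‖ ≤ 1 := by
    intro n f hf
    have hb : ∀ᵐ ω ∂P, ‖f ω‖ ≤ 1 := by
      filter_upwards [hf.1] with ω h01
      rw [Real.norm_eq_abs, abs_of_nonneg h01.1]; exact h01.2
    have := Lp.norm_le_of_ae_bound (f := f) zero_le_one hb
    simpa [measureUnivNNReal] using this
  set d : ℕ → ℝ := fun n => sInf ((fun f : Lp ℝ 2 P => ‖f‖) '' A n) with hddef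
  have hdbdd : ∀ n : ℕ, BddBelow ((fun f : Lp ℝ 2 P => ‖f‖) '' A n) := by
    rintro n
    exact ⟨0, by rintro x ⟨f, -, rfl⟩; exact norm_nonneg f⟩
  have hdle : ∀ (n : ℕ) (f : Lp ℝ 2 P), f ∈ A n → d n ≤ ‖f‖ := by
    intro n f hf
    exact csInf_le (hdbdd n) ⟨f, hf, rfl⟩
  have hdnonneg : ∀ n, 0 ≤ d n := by
    intro n
    obtain ⟨f, hf⟩ := hAne n
    exact le_csInf ((hAne n).image _) (by rintro x ⟨g, -, rfl⟩; exact norm_nonneg g)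
  have hd1 : ∀ n, d n ≤ 1 := by
    intro n
    obtain ⟨f, hf⟩ := hAne n
    exact (hdle n f hf).trans (hnormle n f hf)
  have hdmono : Monotone d := by
    intro n k hnk
    exact csInf_le_csInf (hdbdd n) ((hAne k).image _) (image_mono (hAmono hnk))
  set dl : ℝ := ⨆ n, d n with hdldef
  have hdbddA : BddAbove (Set.range d) := ⟨1, by rintro x ⟨n, rfl⟩; exact hd1 n⟩
  have hdtend : Tendsto d atTop (𝓝 dl) := tendsto_atTop_ciSup hdmono hdbddA
  have hdledl : ∀ n, d n ≤ dl := fun n => le_ciSup hdbddA n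
  -- select an approximately minimal-norm element in each A n
  have hselect : ∀ n : ℕ, ∃ f : Lp ℝ 2 P, f ∈ A n ∧ ‖f‖ < d n + 1/(n+1) := by
    intro n
    obtain ⟨x, ⟨f, hf, rfl⟩, hx⟩ := exists_lt_of_csInf_lt ((hAne n).image _)
      (lt_add_of_pos_right (d n) (hinv n))
    exact ⟨f, hf, hx⟩
  choose u hu hun using hselect
  -- the parallelogram estimate makes u a Cauchy sequence
  set b : ℕ → ℝ := fun N => Real.sqrt (4*(dl + 1/(N+1))^2 - 4*(d N)^2) with hbdef
  have hdist : ∀ k j N : ℕ, N ≤ k → N ≤ j → dist (u k) (u j) ≤ b N := by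
    intro k j N hNk hNj
    have hmidA : (2⁻¹ : ℝ) • (u k + u j) ∈ A N :=
      hmid N (u k) (u j) (hAmono hNk (hu k)) (hAmono hNj (hu j))
    have hmidnorm : d N ≤ 2⁻¹ * ‖u k + u j‖ := by
      have := hdle N _ hmidA
      rwa [norm_smul, Real.norm_eq_abs, abs_of_pos (by norm_num : (0:ℝ) < 2⁻¹)] at this
    have hpar := parallelogram_law_with_norm ℝ (u k) (u j)
    have hk1 : ‖u k‖ < dl + 1/(N+1) := by
      have h1 : (1:ℝ)/(k+1) ≤ 1/(N+1) := by
        apply one_div_le_one_div_of_le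
        · positivity
        · have : (N:ℝ) ≤ k := Nat.cast_le.2 hNk
          linarith
      have := hun k
      have := hdledl k
      linarith
    have hj1 : ‖u j‖ < dl + 1/(N+1) := by
      have h1 : (1:ℝ)/(j+1) ≤ 1/(N+1) := by
        apply one_div_le_one_div_of_le
        · positivity
        · have : (N:ℝ) ≤ j := Nat.cast_le.2 hNj
          linarith
      have := hun j
      have := hdledl j
      linarith
    have hkey : ‖u k - u j‖^2 ≤ 4*(dl + 1/(N+1))^2 - 4*(d N)^2 := by
      nlinarith [norm_nonneg (u k), norm_nonneg (u j), norm_nonneg (u k + u j),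
        norm_nonneg (u k - u j), hdnonneg N]
    rw [dist_eq_norm, hbdef]
    calc ‖u k - u j‖ = Real.sqrt (‖u k - u j‖^2) := (Real.sqrt_sq (norm_nonneg _)).symm
      _ ≤ Real.sqrt (4*(dl + 1/(N+1))^2 - 4*(d N)^2) := Real.sqrt_le_sqrt hkey
  have hinvtend : Tendsto (fun N : ℕ => 1/((N:ℝ)+1)) atTop (𝓝 0) :=
    tendsto_one_div_add_atTop_nhds_zero_nat
  have hbtend : Tendsto b atTop (𝓝 0) := by
    have h2 : Tendsto (fun N : ℕ => dl + 1/((N:ℝ)+1)) atTop (𝓝 dl) := by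
      simpa using tendsto_const_nhds.add hinvtend
    have h3 : Tendsto (fun N : ℕ => 4*(dl + 1/((N:ℝ)+1))^2 - 4*(d N)^2) atTop
        (𝓝 (4*dl^2 - 4*dl^2)) :=
      ((tendsto_const_nhds.mul (h2.pow 2)).sub (tendsto_const_nhds.mul (hdtend.pow 2)))
    rw [sub_self] at h3
    have := (Real.continuous_sqrt.tendsto 0).comp h3
    simpa [hbdef, Function.comp_def] using this
  have hcauchy : CauchySeq u := cauchySeq_of_le_tendsto_0 b
    (fun n m N hn hm => hdist n m N hn hm) hbtend
  obtain ⟨p, hp⟩ := cauchySeq_tendsto_of_complete hcauchy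
  obtain ⟨ns, hns, haetend⟩ := (tendstoInMeasure_of_tendsto_Lp hp).exists_seq_tendsto_ae
  -- properties of the limit p
  have hall : ∀ᵐ ω ∂P, ∀ i : ℕ, (u (ns i)) ω ∈ Icc (0:ℝ) 1 :=
    ae_all_iff.2 fun i => (hu (ns i)).1
  have hp01 : ∀ᵐ ω ∂P, p ω ∈ Icc (0:ℝ) 1 := by
    filter_upwards [haetend, hall] with ω ht hi
    exact isClosed_Icc.mem_of_tendsto ht (Eventually.of_forall hi)
  have hDCT1 : Tendsto (fun i => ∫ ω, V ω * G ω * (u (ns i)) ω ∂P) atTop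
      (𝓝 (∫ ω, V ω * G ω * p ω ∂P)) := by
    refine tendsto_integral_of_dominated_convergence (fun ω => V ω * G ω)
      (fun i => (hVmeas.mul hGmeas).aestronglyMeasurable.mul (Lp.aestronglyMeasurable _))
      hVG ?_ ?_
    · intro i
      filter_upwards [(hu (ns i)).1] with ω h01
      have h0 : 0 ≤ V ω * G ω := mul_nonneg (hVpos ω) (hGpos ω)
      rw [Real.norm_eq_abs, abs_mul, abs_of_nonneg h0]
      exact mul_le_of_le_one_right h0 (abs_le.2 ⟨by linarith [h01.1], h01.2⟩)
    · filter_upwards [haetend] with ω ht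
      exact ht.const_mul (V ω * G ω)
  have hpy : (∫ ω, V ω * G ω * p ω ∂P) ≤ y :=
    le_of_tendsto hDCT1 (Eventually.of_forall fun i => (hu (ns i)).2.1)
  have hDCT2 : Tendsto (fun i => ∫ ω, L ((1 - (u (ns i)) ω) * G ω) ∂P) atTop
      (𝓝 (∫ ω, L ((1 - p ω) * G ω) ∂P)) := by
    refine tendsto_integral_of_dominated_convergence (fun ω => ℓ (G ω))
      (fun i => hLcont.comp_aestronglyMeasurable
        ((aestronglyMeasurable_const.sub (Lp.aestronglyMeasurable _)).mul
          hGmeas.aestronglyMeasurable)) hint ?_ ?_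
    · intro i
      filter_upwards [(hu (ns i)).1] with ω h01
      have harg0 : 0 ≤ (1 - (u (ns i)) ω) * G ω := mul_nonneg (by linarith [h01.2]) (hGpos ω)
      have harg1 : (1 - (u (ns i)) ω) * G ω ≤ G ω := by nlinarith [h01.1, h01.2, hGpos ω]
      rw [Real.norm_eq_abs, abs_of_nonneg (hLnonneg _)]
      calc L ((1 - (u (ns i)) ω) * G ω) ≤ L (G ω) := hLmono _ _ harg0 harg1
        _ = ℓ (G ω) := hLeq _ (hGpos ω)
    · filter_upwards [haetend] with ω ht
      have h1 : Tendsto (fun i => (1 - (u (ns i)) ω) * G ω) atTop (𝓝 ((1 - p ω) * G ω)) :=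
        (tendsto_const_nhds.sub ht).mul tendsto_const_nhds
      exact (hLcont.tendsto _).comp h1
  have hmlim : Tendsto (fun i => m + 1/((ns i : ℝ)+1)) atTop (𝓝 m) := by
    have h1 : Tendsto (fun i => 1/((ns i : ℝ)+1)) atTop (𝓝 0) :=
      hinvtend.comp hns.tendsto_atTop
    simpa using tendsto_const_nhds.add h1
  have hpL : (∫ ω, L ((1 - p ω) * G ω) ∂P) ≤ m :=
    le_of_tendsto_of_tendsto' hDCT2 hmlim (fun i => (hu (ns i)).2.2)
  -- build the pointwise nice representative
  have hmk := (Lp.aestronglyMeasurable p).ae_eq_mk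
  set φ₀ : Ω → ℝ := (Lp.aestronglyMeasurable p).mk p with hφ₀def
  have hφ₀meas : Measurable φ₀ := (Lp.aestronglyMeasurable p).stronglyMeasurable_mk.measurable
  set φhat : Ω → ℝ := fun ω => max 0 (min (φ₀ ω) 1) with hφhatdef
  have hφhatmeas : Measurable φhat := measurable_const.max (hφ₀meas.min measurable_const)
  have hφhatIcc : ∀ ω, φhat ω ∈ Icc (0:ℝ) 1 :=
    fun ω => ⟨le_max_left _ _, max_le zero_le_one (min_le_right _ _)⟩
  have hφp : φhat =ᵐ[P] ⇑p := by
    filter_upwards [hmk, hp01] with ω he h01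
    rw [hφhatdef]
    simp only [← hφ₀def, ← he]
    rw [min_eq_left h01.2, max_eq_right h01.1]
  have hbudget : (∫ ω, V ω * G ω * φhat ω ∂P) ≤ y := by
    rw [integral_congr_ae (g := fun ω => V ω * G ω * p ω) ?_]
    · exact hpy
    · filter_upwards [hφp] with ω h; rw [h]
  have hval : (∫ ω, ℓ ((1 - φhat ω) * G ω) ∂P) ≤ m := by
    rw [← hLeqI φhat hφhatIcc]
    rw [integral_congr_ae (g := fun ω => L ((1 - p ω) * G ω)) ?_]
    · exact hpL
    · filter_upwards [hφp] with ω h; rw [h]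
  have hmemS : (∫ ω, ℓ ((1 - φhat ω) * G ω) ∂P) ∈ S :=
    ⟨φhat, hφhatmeas, hφhatIcc, hbudget, rfl⟩
  exact ⟨φhat, hφhatmeas, hφhatIcc, hbudget, le_antisymm hval (csInf_le hSbdd hmemS)⟩
end

section
/- Let (Ω, F, P) be a probability space, let ℓ : [0, ∞) → [0, ∞) be convex, nondecreasing and continuously differentiable with ℓ(0) = 0, let G : Ω → [0, ∞) be measurable with E[ℓ(2G)] < ∞, and let φ, φ̂ : Ω → [0, 1] be measurable. For ε ∈ [0, 1] define φ_ε := εφ + (1 − ε)φ̂ and F(ε) := E[ℓ((1 − φ_ε)G)]. Then F is real-valued and convex on [0, 1], the random variable ℓ'((1 − φ̂)G)(φ̂ − φ)G is integrable, and the right derivative of F at 0 exists and equals E[ℓ'((1 − φ̂)G)(φ̂ − φ)G]. -/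
open MeasureTheory Set Filter Topology

lemma aux_support {ℓ ℓd : ℝ → ℝ} (hconv : ConvexOn ℝ (Ici 0) ℓ)
    (hderiv : ∀ x ∈ Ici (0:ℝ), HasDerivWithinAt ℓ (ℓd x) (Ici 0) x)
    {x y : ℝ} (hx : (0:ℝ) ≤ x) (hy : (0:ℝ) ≤ y) : ℓ x + ℓd x * (y - x) ≤ ℓ y := by
  rcases lt_trichotomy x y with h | rfl | h
  · have h1 := hconv.le_slope_of_hasDerivWithinAt hx hy h (hderiv x hx)
    rw [slope_def_field] at h1
    have hyx : (0:ℝ) < y - x := sub_pos.2 h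
    have h2 := (le_div_iff₀ hyx).mp h1
    linarith
  · simp
  · have h1 := hconv.slope_le_of_hasDerivWithinAt hy hx h (hderiv x hx)
    rw [slope_def_field] at h1
    have hxy : (0:ℝ) < x - y := sub_pos.2 h
    have h2 := (div_le_iff₀ hxy).mp h1
    nlinarith

lemma aux_dnonneg {ℓ ℓd : ℝ → ℝ} (hmono : MonotoneOn ℓ (Ici 0))
    (hderiv : ∀ x ∈ Ici (0:ℝ), HasDerivWithinAt ℓ (ℓd x) (Ici 0) x)
    {x : ℝ} (hx : (0:ℝ) ≤ x) : 0 ≤ ℓd x := by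
  have h := (hderiv x hx).mono (fun t (ht : x < t) => le_trans hx ht.le)
  have ht := (hasDerivWithinAt_iff_tendsto_slope' (notMem_Ioi_self)).mp h
  refine ge_of_tendsto ht ?_
  filter_upwards [self_mem_nhdsWithin] with t (ht : x < t)
  rw [slope_def_field]
  apply div_nonneg
  · have := hmono hx (le_trans hx ht.le) ht.le
    linarith
  · linarith

lemma aux_meas {Ω : Type*} [MeasurableSpace Ω] {g : ℝ → ℝ} (hg : ContinuousOn g (Ici 0))
    {f : Ω → ℝ} (hf : Measurable f) (h0 : ∀ ω, 0 ≤ f ω) :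
    Measurable (fun ω => g (f ω)) := by
  have hc : Continuous ((Ici (0:ℝ)).restrict g) := continuousOn_iff_continuous_restrict.mp hg
  have hm : Measurable (fun ω => (⟨f ω, h0 ω⟩ : Ici (0:ℝ))) := hf.subtype_mk
  exact hc.measurable.comp hm

/-- **Right differentiability of the shortfall functional along convex perturbations.**
With `ℓ` convex, nondecreasing, `C¹` on `[0,∞)`, `ℓ(0)=0`, `G ≥ 0` with `E[ℓ(2G)] < ∞`, and
`φ, φ̂ : Ω → [0,1]`, the function `F(ε) = E[ℓ((1−φ_ε)G)]`, `φ_ε = εφ + (1−ε)φ̂`, is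
real-valued and convex on `[0,1]`, the random variable `ℓ'((1−φ̂)G)(φ̂−φ)G` is integrable,
and the right derivative of `F` at `0` equals `E[ℓ'((1−φ̂)G)(φ̂−φ)G]`. -/
theorem stmt_10
    {Ω : Type*} [MeasurableSpace Ω] (P : Measure Ω) [IsProbabilityMeasure P]
    (ℓ ℓd : ℝ → ℝ)
    (hconv : ConvexOn ℝ (Ici 0) ℓ)
    (hmono : MonotoneOn ℓ (Ici 0))
    (hnonneg : ∀ x ∈ Ici (0:ℝ), 0 ≤ ℓ x)
    (hzero : ℓ 0 = 0)
    (hderiv : ∀ x ∈ Ici (0:ℝ), HasDerivWithinAt ℓ (ℓd x) (Ici 0) x)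
    (hdcont : ContinuousOn ℓd (Ici 0))
    (G : Ω → ℝ) (hGmeas : Measurable G) (hGpos : ∀ ω, 0 ≤ G ω)
    (hint : Integrable (fun ω => ℓ (2 * G ω)) P)
    (φ φhat : Ω → ℝ) (hφmeas : Measurable φ) (hφhatmeas : Measurable φhat)
    (hφ : ∀ ω, φ ω ∈ Icc (0:ℝ) 1) (hφhat : ∀ ω, φhat ω ∈ Icc (0:ℝ) 1)
    (F : ℝ → ℝ)
    (hF : ∀ ε : ℝ, F ε = ∫ ω, ℓ ((1 - (ε * φ ω + (1 - ε) * φhat ω)) * G ω) ∂P) :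
    (∀ ε ∈ Icc (0:ℝ) 1,
      Integrable (fun ω => ℓ ((1 - (ε * φ ω + (1 - ε) * φhat ω)) * G ω)) P) ∧
    ConvexOn ℝ (Icc 0 1) F ∧
    Integrable (fun ω => ℓd ((1 - φhat ω) * G ω) * (φhat ω - φ ω) * G ω) P ∧
    HasDerivWithinAt F (∫ ω, ℓd ((1 - φhat ω) * G ω) * (φhat ω - φ ω) * G ω ∂P)
      (Icc 0 1) 0 := by
  set X : Ω → ℝ := fun ω => (1 - φhat ω) * G ω with hXdef
  set Y : Ω → ℝ := fun ω => (φhat ω - φ ω) * G ω with hYdef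
  have hℓcont : ContinuousOn ℓ (Ici 0) := fun x hx => (hderiv x hx).continuousWithinAt
  have hXYrw : ∀ ε (ω : Ω), (1 - (ε * φ ω + (1 - ε) * φhat ω)) * G ω = X ω + ε * Y ω := by
    intro ε ω; simp only [hXdef, hYdef]; ring
  have hmem : ∀ ε ∈ Icc (0:ℝ) 1, ∀ ω, 0 ≤ X ω + ε * Y ω ∧ X ω + ε * Y ω ≤ G ω := by
    intro ε hε ω
    simp only [hXdef, hYdef]
    constructor
    · nlinarith [mul_nonneg (mul_nonneg (sub_nonneg.2 hε.2) (sub_nonneg.2 (hφhat ω).2)) (hGpos ω),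
        mul_nonneg (mul_nonneg hε.1 (sub_nonneg.2 (hφ ω).2)) (hGpos ω)]
    · nlinarith [mul_nonneg (mul_nonneg (sub_nonneg.2 hε.2) (hφhat ω).1) (hGpos ω),
        mul_nonneg (mul_nonneg hε.1 (hφ ω).1) (hGpos ω)]
  have hX0 : ∀ ω, 0 ≤ X ω := by
    intro ω; have := (hmem 0 ⟨le_refl 0, zero_le_one⟩ ω).1; simpa using this
  have hXle : ∀ ω, X ω ≤ G ω := by
    intro ω; have := (hmem 0 ⟨le_refl 0, zero_le_one⟩ ω).2; simpa using this
  have hXmeas : Measurable X := by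
    simp only [hXdef]; exact (measurable_const.sub hφhatmeas).mul hGmeas
  have hYmeas : Measurable Y := by
    simp only [hYdef]; exact (hφhatmeas.sub hφmeas).mul hGmeas
  have hd0 : ∀ ω, 0 ≤ ℓd (X ω) := fun ω => aux_dnonneg hmono hderiv (hX0 ω)
  have hℓ2G0 : ∀ ω, 0 ≤ ℓ (2 * G ω) := fun ω =>
    hnonneg _ (by have := hGpos ω; simp only [mem_Ici]; linarith)
  have hmono2G : ∀ ω (t : ℝ), 0 ≤ t → t ≤ G ω → ℓ t ≤ ℓ (2 * G ω) := by
    intro ω t ht htG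
    exact hmono ht (by have := hGpos ω; simp only [mem_Ici]; linarith)
      (by have := hGpos ω; linarith)
  have hkey : ∀ ω, ℓd (X ω) * G ω ≤ ℓ (2 * G ω) := by
    intro ω
    have h1 := aux_support hconv hderiv (hX0 ω)
      (show (0:ℝ) ≤ X ω + G ω by have := hX0 ω; have := hGpos ω; linarith)
    rw [add_sub_cancel_left] at h1
    have h2 : ℓ (X ω + G ω) ≤ ℓ (2 * G ω) :=
      hmono (by have := hX0 ω; have := hGpos ω; simp only [mem_Ici]; linarith)
        (by have := hGpos ω; simp only [mem_Ici]; linarith)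
        (by have := hXle ω; linarith)
    have h3 := hnonneg (X ω) (hX0 ω)
    linarith
  have hYabs : ∀ ω, |Y ω| ≤ G ω := by
    intro ω
    rw [abs_le]
    simp only [hYdef]
    constructor
    · nlinarith [mul_nonneg (show (0:ℝ) ≤ φhat ω - φ ω + 1 by
        have := (hφhat ω).1; have := (hφ ω).2; linarith) (hGpos ω)]
    · nlinarith [mul_nonneg (show (0:ℝ) ≤ 1 - (φhat ω - φ ω) by
        have := (hφhat ω).2; have := (hφ ω).1; linarith) (hGpos ω)]
  -- integrability for all ε in [0,1]
  have hInt : ∀ ε ∈ Icc (0:ℝ) 1, Integrable (fun ω => ℓ (X ω + ε * Y ω)) P := by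
    intro ε hε
    have hm : Measurable (fun ω => ℓ (X ω + ε * Y ω)) :=
      aux_meas hℓcont (hXmeas.add (measurable_const.mul hYmeas)) (fun ω => (hmem ε hε ω).1)
    refine hint.mono hm.aestronglyMeasurable (ae_of_all _ fun ω => ?_)
    rw [Real.norm_eq_abs, Real.norm_eq_abs, abs_of_nonneg (hnonneg _ (hmem ε hε ω).1),
      abs_of_nonneg (hℓ2G0 ω)]
    exact hmono2G ω _ (hmem ε hε ω).1 (hmem ε hε ω).2
  have hIntX : Integrable (fun ω => ℓ (X ω)) P := by
    have := hInt 0 ⟨le_refl 0, zero_le_one⟩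
    simpa using this
  have hFrw : ∀ ε, F ε = ∫ ω, ℓ (X ω + ε * Y ω) ∂P := by
    intro ε
    rw [hF ε]
    congr 1
    funext ω
    rw [hXYrw]
  have part1 : ∀ ε ∈ Icc (0:ℝ) 1,
      Integrable (fun ω => ℓ ((1 - (ε * φ ω + (1 - ε) * φhat ω)) * G ω)) P := by
    intro ε hε
    have : (fun ω => ℓ ((1 - (ε * φ ω + (1 - ε) * φhat ω)) * G ω))
        = fun ω => ℓ (X ω + ε * Y ω) := funext fun ω => by rw [hXYrw]
    rw [this]; exact hInt ε hε
  -- convexity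
  have part2 : ConvexOn ℝ (Icc 0 1) F := by
    refine ⟨convex_Icc 0 1, fun ε₁ hε₁ ε₂ hε₂ a b ha hb hab => ?_⟩
    have hmemc : a • ε₁ + b • ε₂ ∈ Icc (0:ℝ) 1 := (convex_Icc (0:ℝ) 1) hε₁ hε₂ ha hb hab
    simp only [smul_eq_mul] at hmemc ⊢
    rw [hFrw, hFrw, hFrw]
    calc ∫ ω, ℓ (X ω + (a * ε₁ + b * ε₂) * Y ω) ∂P
        ≤ ∫ ω, (a * ℓ (X ω + ε₁ * Y ω) + b * ℓ (X ω + ε₂ * Y ω)) ∂P := by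
          refine integral_mono (hInt _ hmemc)
            (((hInt _ hε₁).const_mul a).add ((hInt _ hε₂).const_mul b)) (fun ω => ?_)
          have he : X ω + (a * ε₁ + b * ε₂) * Y ω
              = a • (X ω + ε₁ * Y ω) + b • (X ω + ε₂ * Y ω) := by
            have hb1 : b = 1 - a := by linarith
            simp only [smul_eq_mul, hb1]; ring
          rw [he]
          have := hconv.2 (hmem ε₁ hε₁ ω).1 (hmem ε₂ hε₂ ω).1 ha hb hab
          simpa using this
      _ = a * (∫ ω, ℓ (X ω + ε₁ * Y ω) ∂P) + b * (∫ ω, ℓ (X ω + ε₂ * Y ω) ∂P) := by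
          rw [integral_add ((hInt _ hε₁).const_mul a) ((hInt _ hε₂).const_mul b),
            integral_const_mul, integral_const_mul]
  -- integrability of derivative integrand
  have hDrw : (fun ω => ℓd ((1 - φhat ω) * G ω) * (φhat ω - φ ω) * G ω)
      = fun ω => ℓd (X ω) * Y ω := by
    funext ω; simp only [hXdef, hYdef]; ring
  have part3' : Integrable (fun ω => ℓd (X ω) * Y ω) P := by
    have hm : Measurable (fun ω => ℓd (X ω) * Y ω) :=
      (aux_meas hdcont hXmeas hX0).mul hYmeas
    refine hint.mono hm.aestronglyMeasurable (ae_of_all _ fun ω => ?_)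
    rw [Real.norm_eq_abs, Real.norm_eq_abs, abs_mul, abs_of_nonneg (hd0 ω),
      abs_of_nonneg (hℓ2G0 ω)]
    calc ℓd (X ω) * |Y ω| ≤ ℓd (X ω) * G ω :=
          mul_le_mul_of_nonneg_left (hYabs ω) (hd0 ω)
      _ ≤ ℓ (2 * G ω) := hkey ω
  have part3 : Integrable (fun ω => ℓd ((1 - φhat ω) * G ω) * (φhat ω - φ ω) * G ω) P := by
    rw [hDrw]; exact part3'
  refine ⟨part1, part2, part3, ?_⟩
  -- the derivative
  have hDirw : (∫ ω, ℓd ((1 - φhat ω) * G ω) * (φhat ω - φ ω) * G ω ∂P)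
      = ∫ ω, ℓd (X ω) * Y ω ∂P := by rw [hDrw]
  rw [hDirw, hasDerivWithinAt_iff_tendsto_slope]
  set l : Filter ℝ := 𝓝[Icc (0:ℝ) 1 \ {0}] 0 with hldef
  have hmain : Tendsto (fun ε => ∫ ω, (ℓ (X ω + ε * Y ω) - ℓ (X ω)) / ε ∂P) l
      (𝓝 (∫ ω, ℓd (X ω) * Y ω ∂P)) := by
    refine tendsto_integral_filter_of_dominated_convergence (fun ω => ℓ (2 * G ω)) ?_ ?_ hint ?_
    · filter_upwards [self_mem_nhdsWithin] with ε hε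
      have hε' : ε ∈ Icc (0:ℝ) 1 := hε.1
      exact (((aux_meas hℓcont (hXmeas.add (measurable_const.mul hYmeas))
        (fun ω => (hmem ε hε' ω).1)).sub (aux_meas hℓcont hXmeas hX0)).div_const
        ε).aestronglyMeasurable
    · filter_upwards [self_mem_nhdsWithin] with ε hε
      refine ae_of_all _ fun ω => ?_
      have hε1 : ε ∈ Icc (0:ℝ) 1 := hε.1
      have hεpos : 0 < ε := lt_of_le_of_ne hε1.1 (fun h => hε.2 (by simp [← h]))
      -- upper bound via convexity
      have hup : ℓ (X ω + ε * Y ω) - ℓ (X ω) ≤ ε * ℓ (2 * G ω) := by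
        have hc := hconv.2 (hX0 ω) (hmem 1 ⟨zero_le_one, le_refl 1⟩ ω).1
          (show (0:ℝ) ≤ 1 - ε by linarith [hε1.2]) hεpos.le (by ring)
        simp only [smul_eq_mul] at hc
        have he : (1 - ε) * X ω + ε * (X ω + 1 * Y ω) = X ω + ε * Y ω := by ring
        rw [he] at hc
        have h2 : ℓ (X ω + 1 * Y ω) ≤ ℓ (2 * G ω) :=
          hmono2G ω _ (hmem 1 ⟨zero_le_one, le_refl 1⟩ ω).1 (hmem 1 ⟨zero_le_one, le_refl 1⟩ ω).2
        have h3 := hnonneg (X ω) (hX0 ω)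
        nlinarith
      -- lower bound via supporting line
      have hlow : -(ε * ℓ (2 * G ω)) ≤ ℓ (X ω + ε * Y ω) - ℓ (X ω) := by
        have hs := aux_support hconv hderiv (hX0 ω) (hmem ε hε1 ω).1
        rw [add_sub_cancel_left] at hs
        have h1 : ℓd (X ω) * (ε * Y ω) ≥ ε * (-(ℓd (X ω) * G ω)) := by
          have hy : -(G ω) ≤ Y ω := neg_le_of_abs_le (hYabs ω)
          nlinarith [mul_nonneg (mul_nonneg hεpos.le (hd0 ω))
            (show (0:ℝ) ≤ Y ω + G ω by linarith)]
        have h2 : ℓd (X ω) * G ω ≤ ℓ (2 * G ω) := hkey ω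
        nlinarith [hεpos.le]
      rw [Real.norm_eq_abs, abs_le]
      constructor
      · rw [le_div_iff₀ hεpos]; nlinarith
      · rw [div_le_iff₀ hεpos]; nlinarith
    · refine ae_of_all _ fun ω => ?_
      have hinner : HasDerivWithinAt (fun ε : ℝ => X ω + ε * Y ω) (Y ω) (Icc 0 1) 0 := by
        have h := (((hasDerivAt_id (0:ℝ)).mul_const (Y ω)).const_add (X ω)).hasDerivWithinAt
          (s := Icc (0:ℝ) 1)
        simpa using h
      have houter : HasDerivWithinAt ℓ (ℓd (X ω)) (Ici 0)
          ((fun ε : ℝ => X ω + ε * Y ω) 0) := by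
        simpa using hderiv (X ω) (hX0 ω)
      have hmaps : MapsTo (fun ε : ℝ => X ω + ε * Y ω) (Icc 0 1) (Ici 0) :=
        fun ε hε => (hmem ε hε ω).1
      have hcomp := HasDerivWithinAt.comp (0:ℝ) houter hinner hmaps
      rw [hasDerivWithinAt_iff_tendsto_slope] at hcomp
      refine hcomp.congr' ?_
      filter_upwards [self_mem_nhdsWithin] with ε hε
      rw [slope_def_field]
      simp [Function.comp]
  refine hmain.congr' ?_
  filter_upwards [self_mem_nhdsWithin] with ε hε
  have hε1 : ε ∈ Icc (0:ℝ) 1 := hε.1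
  rw [slope_def_field, hFrw ε, hFrw 0]
  have h0 : (∫ ω, ℓ (X ω + 0 * Y ω) ∂P) = ∫ ω, ℓ (X ω) ∂P := by
    congr 1; funext ω; norm_num
  rw [h0, ← integral_sub (hInt ε hε1) hIntX, sub_zero, ← integral_div]
end

section
/- Let (Ω, F, P) be a probability space, ℓ : [0, ∞) → [0, ∞) a loss function as specified, I := (ℓ')⁻¹, V : Ω → (0, ∞) measurable, and G : Ω → [0, ∞) measurable with 0 < E[V G] < ∞. For c > 0 define φ̂(c) := 1_{G>0}·(1 − min(I(cV)/G, 1)) and k(c) := E[V G φ̂(c)]. Then: k is continuous on (0, ∞); k(c) → E[V G] as c → 0⁺; k(c) → 0 as c → ∞; and for every y ∈ (0, E[V G]) there exists a unique ĉ > 0 with k(ĉ) = y. -/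
open MeasureTheory Set Filter

/-- **Properties of the budget function `k(c) = E[V G φ̂(c)]`.**
With `ℓ` a `C¹`, strictly convex, increasing loss function with `ℓ(0)=0`, `ℓ'(0⁺)=0`,
`ℓ'(∞)=∞`, `I = (ℓ')⁻¹`, `V > 0`, `G ≥ 0` with `0 < E[VG] < ∞`, and
`φ̂(c) = 1_{G>0}(1 − min(I(cV)/G, 1))`: the function `k` is continuous on `(0,∞)`,
`k(c) → E[VG]` as `c → 0⁺`, `k(c) → 0` as `c → ∞`, and for each `y ∈ (0, E[VG])` there is a
unique `ĉ > 0` with `k(ĉ) = y`. -/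
theorem stmt_11
    {Ω : Type*} [MeasurableSpace Ω] (P : Measure Ω) [IsProbabilityMeasure P]
    (ℓ ℓd I : ℝ → ℝ)
    (hderiv : ∀ x ∈ Ici (0:ℝ), HasDerivWithinAt ℓ (ℓd x) (Ici 0) x)
    (hdcont : ContinuousOn ℓd (Ici 0))
    (hsconv : StrictConvexOn ℝ (Ici 0) ℓ)
    (hincr : StrictMonoOn ℓ (Ici 0))
    (hzero : ℓ 0 = 0)
    (hd0 : Tendsto ℓd (nhdsWithin 0 (Ioi 0)) (nhds 0))
    (hdinf : Tendsto ℓd atTop atTop)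
    (hI : ∀ y ∈ Ioi (0:ℝ), I y ∈ Ioi (0:ℝ) ∧ ℓd (I y) = y)
    (hI' : ∀ x ∈ Ioi (0:ℝ), I (ℓd x) = x)
    (V G : Ω → ℝ) (hVmeas : Measurable V) (hGmeas : Measurable G)
    (hVpos : ∀ ω, 0 < V ω) (hGpos : ∀ ω, 0 ≤ G ω)
    (hVG : Integrable (fun ω => V ω * G ω) P)
    (hVGpos : 0 < ∫ ω, V ω * G ω ∂P)
    (φh : ℝ → Ω → ℝ)
    (hφh : ∀ c ω, φh c ω = if 0 < G ω then 1 - min (I (c * V ω) / G ω) 1 else 0)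
    (k : ℝ → ℝ)
    (hk : ∀ c, k c = ∫ ω, V ω * G ω * φh c ω ∂P) :
    ContinuousOn k (Ioi 0) ∧
    Tendsto k (nhdsWithin 0 (Ioi 0)) (nhds (∫ ω, V ω * G ω ∂P)) ∧
    Tendsto k atTop (nhds 0) ∧
    ∀ y ∈ Ioo (0:ℝ) (∫ ω, V ω * G ω ∂P), ∃! c : ℝ, 0 < c ∧ k c = y := by
  classical
  -- strict monotonicity of ℓd on [0,∞)
  have hℓdmono : StrictMonoOn ℓd (Ici 0) := by
    intro x hx y hy hxy
    exact lt_trans (hsconv.lt_slope_of_hasDerivWithinAt hx hy hxy (hderiv x hx))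
      (hsconv.slope_lt_of_hasDerivWithinAt hx hy hxy (hderiv y hy))
  have hℓdpos : ∀ x : ℝ, 0 < x → 0 < ℓd x := by
    intro x hx
    have h2 : (0:ℝ) ≤ ℓd (x / 2) := by
      refine le_of_tendsto hd0 ?_
      filter_upwards [Ioo_mem_nhdsGT (half_pos hx)] with t ht
      exact (hℓdmono (le_of_lt ht.1) (half_pos hx).le ht.2).le
    exact h2.trans_lt (hℓdmono (half_pos hx).le hx.le (half_lt_self hx))
  have hIpos : ∀ y : ℝ, 0 < y → 0 < I y := fun y hy => (hI y hy).1
  have hImono : StrictMonoOn I (Ioi 0) := by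
    intro y1 h1 y2 h2 h12
    by_contra hle
    push_neg at hle
    have := hℓdmono.monotoneOn (Set.mem_Ici.mpr (le_of_lt (hI y2 h2).1)) (Set.mem_Ici.mpr (le_of_lt (hI y1 h1).1)) hle
    rw [(hI y1 h1).2, (hI y2 h2).2] at this
    exact absurd h12 (not_lt.mpr this)
  -- continuity of I on (0,∞)
  have hIcont : ContinuousOn I (Ioi 0) := by
    intro y0 hy0
    have hy0' : (0:ℝ) < y0 := hy0
    have hIy0 : 0 < I y0 := hIpos y0 hy0'
    rw [ContinuousWithinAt, tendsto_order]
    constructor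
    · intro b hb
      rcases le_or_gt b 0 with h0 | h0
      · filter_upwards [self_mem_nhdsWithin] with y hy
        exact lt_of_le_of_lt h0 (hIpos y hy)
      · have hb' : ℓd b < y0 := by
          have := hℓdmono h0.le hIy0.le hb
          rwa [(hI y0 hy0').2] at this
        filter_upwards [self_mem_nhdsWithin,
          mem_nhdsWithin_of_mem_nhds (Ioi_mem_nhds hb')] with y hy hy'
        have := hImono (hℓdpos b h0) hy hy'
        rwa [hI' b h0] at this
    · intro b hb
      have hb0 : 0 < b := hIy0.trans hb
      have hb' : y0 < ℓd b := by
        have := hℓdmono hIy0.le hb0.le hb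
        rwa [(hI y0 hy0').2] at this
      filter_upwards [self_mem_nhdsWithin,
        mem_nhdsWithin_of_mem_nhds (Iio_mem_nhds hb')] with y hy hy'
      have := hImono hy (hℓdpos b hb0) hy'
      rwa [hI' b hb0] at this
  -- limits of I
  have hI0 : Tendsto I (nhdsWithin 0 (Ioi 0)) (nhds 0) := by
    rw [tendsto_order]
    constructor
    · intro b hb
      filter_upwards [self_mem_nhdsWithin] with y hy
      exact hb.trans (hIpos y hy)
    · intro b hb
      filter_upwards [Ioo_mem_nhdsGT (hℓdpos b hb)] with y hy
      have := hImono hy.1 (hℓdpos b hb) hy.2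
      rwa [hI' b hb] at this
  have hIinf : Tendsto I atTop atTop := by
    rw [tendsto_atTop]
    intro b
    set b' : ℝ := max b 1 with hb'
    have hb0 : (0:ℝ) < b' := lt_of_lt_of_le one_pos (le_max_right b 1)
    filter_upwards [eventually_ge_atTop (ℓd b' + 1)] with y hy
    have hy' : ℓd b' < y := lt_of_lt_of_le (lt_add_one _) hy
    have hy0 : (0:ℝ) < y := (hℓdpos b' hb0).trans hy'
    have := hImono (hℓdpos b' hb0) hy0 hy'
    rw [hI' b' hb0] at this
    exact (le_max_left b 1).trans this.le
  -- basic bounds on φh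
  have hφ01 : ∀ c ω, 0 < c → 0 ≤ φh c ω ∧ φh c ω ≤ 1 := by
    intro c ω hc
    rw [hφh]
    split_ifs with hG
    · constructor
      · have : min (I (c * V ω) / G ω) 1 ≤ 1 := min_le_right _ _
        linarith
      · have h1 : 0 ≤ I (c * V ω) / G ω :=
          div_nonneg (hIpos _ (mul_pos hc (hVpos ω))).le (hGpos ω)
        have : 0 ≤ min (I (c * V ω) / G ω) 1 := le_min h1 zero_le_one
        linarith
    · exact ⟨le_refl 0, zero_le_one⟩
  have hVGnn : ∀ ω, 0 ≤ V ω * G ω := fun ω => mul_nonneg (hVpos ω).le (hGpos ω)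
  have hFnn : ∀ c ω, 0 < c → 0 ≤ V ω * G ω * φh c ω := fun c ω hc =>
    mul_nonneg (hVGnn ω) (hφ01 c ω hc).1
  have hFle : ∀ c ω, 0 < c → V ω * G ω * φh c ω ≤ V ω * G ω := by
    intro c ω hc
    calc V ω * G ω * φh c ω ≤ V ω * G ω * 1 :=
          mul_le_mul_of_nonneg_left (hφ01 c ω hc).2 (hVGnn ω)
      _ = V ω * G ω := mul_one _
  -- measurability
  have hIrestr : Continuous (fun x : Ioi (0:ℝ) => I x) :=
    continuousOn_iff_continuous_restrict.mp hIcont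
  have hImeas : ∀ c : ℝ, 0 < c → Measurable fun ω => I (c * V ω) := by
    intro c hc
    exact hIrestr.measurable.comp
      ((measurable_const.mul hVmeas).subtype_mk
        (h := fun ω => mul_pos hc (hVpos ω)))
  have hφmeas : ∀ c : ℝ, 0 < c → Measurable (φh c) := by
    intro c hc
    have hfe : φh c = fun ω => if 0 < G ω then 1 - min (I (c * V ω) / G ω) 1 else 0 :=
      funext (hφh c)
    rw [hfe]
    exact Measurable.ite (measurableSet_lt measurable_const hGmeas)
      (measurable_const.sub (((hImeas c hc).div hGmeas).min measurable_const))
      measurable_const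
  have hFmeas : ∀ c : ℝ, 0 < c →
      AEStronglyMeasurable (fun ω => V ω * G ω * φh c ω) P := fun c hc =>
    ((hVmeas.mul hGmeas).mul (hφmeas c hc)).aestronglyMeasurable
  have hFbd : ∀ c : ℝ, 0 < c → ∀ ω, ‖V ω * G ω * φh c ω‖ ≤ V ω * G ω := by
    intro c hc ω
    rw [Real.norm_eq_abs, abs_of_nonneg (hFnn c ω hc)]
    exact hFle c ω hc
  have hFint : ∀ c : ℝ, 0 < c → Integrable (fun ω => V ω * G ω * φh c ω) P := by
    intro c hc
    refine hVG.mono (hFmeas c hc) ?_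
    filter_upwards with ω
    rw [Real.norm_eq_abs (V ω * G ω), abs_of_nonneg (hVGnn ω)]
    exact hFbd c hc ω
  -- pointwise continuity of c ↦ F c ω within (0,∞)
  have hmul_t : ∀ (c0 : ℝ) (ω : Ω), 0 ≤ c0 → Tendsto (fun c => c * V ω)
      (nhdsWithin c0 (Ioi 0)) (nhdsWithin (c0 * V ω) (Ioi 0)) := by
    intro c0 ω _
    apply tendsto_nhdsWithin_of_tendsto_nhds_of_eventually_within
    · exact ((continuous_id.mul continuous_const).tendsto c0).mono_left nhdsWithin_le_nhds
    · filter_upwards [self_mem_nhdsWithin] with c hc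
      exact mul_pos hc (hVpos ω)
  have hpt : ∀ c0 : ℝ, 0 < c0 → ∀ ω, Tendsto (fun c => V ω * G ω * φh c ω)
      (nhdsWithin c0 (Ioi 0)) (nhds (V ω * G ω * φh c0 ω)) := by
    intro c0 hc0 ω
    rcases lt_or_ge 0 (G ω) with hG | hG
    · have h2 : Tendsto (fun c => I (c * V ω)) (nhdsWithin c0 (Ioi 0))
          (nhds (I (c0 * V ω))) :=
        (hIcont _ (mul_pos hc0 (hVpos ω))).tendsto.comp (hmul_t c0 ω hc0.le)
      have h3 : Tendsto (fun c => V ω * G ω * (1 - min (I (c * V ω) / G ω) 1))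
          (nhdsWithin c0 (Ioi 0))
          (nhds (V ω * G ω * (1 - min (I (c0 * V ω) / G ω) 1))) :=
        tendsto_const_nhds.mul
          (tendsto_const_nhds.sub ((h2.div_const _).min tendsto_const_nhds))
      have h4 : V ω * G ω * (1 - min (I (c0 * V ω) / G ω) 1) = V ω * G ω * φh c0 ω := by
        rw [hφh c0 ω, if_pos hG]
      rw [← h4]
      refine h3.congr' ?_
      filter_upwards with c
      rw [hφh c ω, if_pos hG]
    · have hG0 : G ω = 0 := le_antisymm hG (hGpos ω)
      have : (fun c => V ω * G ω * φh c ω) = fun _ => (0:ℝ) := by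
        funext c; rw [hG0]; ring
      rw [this, hG0]
      simpa using tendsto_const_nhds
  have hkfun : k = fun c => ∫ ω, V ω * G ω * φh c ω ∂P := funext hk
  -- continuity of k
  have hconts : ContinuousOn k (Ioi 0) := by
    intro c0 hc0
    have hc0' : (0:ℝ) < c0 := hc0
    rw [ContinuousWithinAt, hkfun]
    refine tendsto_integral_filter_of_dominated_convergence
      (fun ω => V ω * G ω) ?_ ?_ hVG ?_
    · filter_upwards [self_mem_nhdsWithin] with c hc
      exact hFmeas c hc
    · filter_upwards [self_mem_nhdsWithin] with c hc
      filter_upwards with ω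
      exact hFbd c hc ω
    · filter_upwards with ω
      exact hpt c0 hc0' ω
  -- limit as c → 0⁺
  have hlim0 : Tendsto k (nhdsWithin 0 (Ioi 0)) (nhds (∫ ω, V ω * G ω ∂P)) := by
    rw [hkfun]
    refine tendsto_integral_filter_of_dominated_convergence
      (fun ω => V ω * G ω) ?_ ?_ hVG ?_
    · filter_upwards [self_mem_nhdsWithin] with c hc
      exact hFmeas c hc
    · filter_upwards [self_mem_nhdsWithin] with c hc
      filter_upwards with ω
      exact hFbd c hc ω
    · filter_upwards with ω
      rcases lt_or_ge 0 (G ω) with hG | hG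
      · have h1 : Tendsto (fun c : ℝ => c * V ω) (nhdsWithin 0 (Ioi 0))
            (nhdsWithin 0 (Ioi 0)) := by
          have := hmul_t 0 ω le_rfl
          rwa [zero_mul] at this
        have h2 : Tendsto (fun c => I (c * V ω)) (nhdsWithin 0 (Ioi 0)) (nhds 0) :=
          hI0.comp h1
        have h3 : Tendsto (fun c => V ω * G ω * (1 - min (I (c * V ω) / G ω) 1))
            (nhdsWithin 0 (Ioi 0)) (nhds (V ω * G ω * (1 - min (0 / G ω) 1))) :=
          tendsto_const_nhds.mul
            (tendsto_const_nhds.sub ((h2.div_const _).min tendsto_const_nhds))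
        have h4 : V ω * G ω * (1 - min (0 / G ω) 1) = V ω * G ω := by
          rw [zero_div, min_eq_left zero_le_one]; ring
        rw [h4] at h3
        refine h3.congr' ?_
        filter_upwards with c
        rw [hφh c ω, if_pos hG]
      · have hG0 : G ω = 0 := le_antisymm hG (hGpos ω)
        have he : (fun c => V ω * G ω * φh c ω) = fun _ => (0:ℝ) := by
          funext c; rw [hG0]; ring
        rw [he, hG0, mul_zero]
        exact tendsto_const_nhds
  -- limit as c → ∞
  have hliminf : Tendsto k atTop (nhds 0) := by
    rw [hkfun]
    have h0 : (0:ℝ) = ∫ (_ : Ω), (0:ℝ) ∂P := by simp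
    rw [h0]
    refine tendsto_integral_filter_of_dominated_convergence
      (fun ω => V ω * G ω) ?_ ?_ hVG ?_
    · filter_upwards [eventually_gt_atTop 0] with c hc
      exact hFmeas c hc
    · filter_upwards [eventually_gt_atTop 0] with c hc
      filter_upwards with ω
      exact hFbd c hc ω
    · filter_upwards with ω
      rcases lt_or_ge 0 (G ω) with hG | hG
      · have h1 : Tendsto (fun c : ℝ => c * V ω) atTop atTop :=
          Tendsto.atTop_mul_const (hVpos ω) tendsto_id
        have h2 : Tendsto (fun c => I (c * V ω)) atTop atTop := hIinf.comp h1
        have h3 : ∀ᶠ c in atTop, V ω * G ω * φh c ω = 0 := by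
          filter_upwards [h2.eventually_ge_atTop (G ω)] with c hc
          rw [hφh c ω, if_pos hG]
          have : min (I (c * V ω) / G ω) 1 = 1 :=
            min_eq_right ((one_le_div hG).mpr hc)
          rw [this]; ring
        exact Tendsto.congr' (h3.mono fun c hc => hc.symm) tendsto_const_nhds
      · have hG0 : G ω = 0 := le_antisymm hG (hGpos ω)
        have he : (fun c => V ω * G ω * φh c ω) = fun _ => (0:ℝ) := by
          funext c; rw [hG0]; ring
        rw [he]
        exact tendsto_const_nhds
  refine ⟨hconts, hlim0, hliminf, ?_⟩
  -- monotone comparison facts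
  have hφle : ∀ c1 c2 : ℝ, 0 < c1 → c1 < c2 → ∀ ω, φh c2 ω ≤ φh c1 ω := by
    intro c1 c2 hc1 h12 ω
    rw [hφh c1 ω, hφh c2 ω]
    split_ifs with hG
    · have hII : I (c1 * V ω) ≤ I (c2 * V ω) :=
        (hImono (mul_pos hc1 (hVpos ω)) (mul_pos (hc1.trans h12) (hVpos ω))
          (mul_lt_mul_of_pos_right h12 (hVpos ω))).le
      have hmm : min (I (c1 * V ω) / G ω) 1 ≤ min (I (c2 * V ω) / G ω) 1 := by
        gcongr
      linarith
    · exact le_refl 0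
  have hFdec : ∀ c1 c2 : ℝ, 0 < c1 → c1 < c2 → ∀ ω,
      V ω * G ω * φh c2 ω ≤ V ω * G ω * φh c1 ω := fun c1 c2 hc1 h12 ω =>
    mul_le_mul_of_nonneg_left (hφle c1 c2 hc1 h12 ω) (hVGnn ω)
  -- strict decrease on the support of the integrand
  have hFstrict : ∀ c1 c2 : ℝ, 0 < c1 → c1 < c2 → ∀ ω,
      V ω * G ω * φh c1 ω ≠ 0 → V ω * G ω * φh c2 ω < V ω * G ω * φh c1 ω := by
    intro c1 c2 hc1 h12 ω hne
    have hc2 : 0 < c2 := hc1.trans h12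
    have hGpos' : 0 < G ω := by
      by_contra hG
      exact hne (by rw [hφh c1 ω, if_neg hG, mul_zero])
    have hVG' : 0 < V ω * G ω := mul_pos (hVpos ω) hGpos'
    have hφ1pos : 0 < φh c1 ω := by
      rcases lt_or_eq_of_le (hφ01 c1 ω hc1).1 with h | h
      · exact h
      · exact absurd (by rw [← h, mul_zero]) hne
    have ha1 : I (c1 * V ω) / G ω < 1 := by
      rw [hφh c1 ω, if_pos hGpos'] at hφ1pos
      by_contra hge
      push_neg at hge
      rw [min_eq_right hge] at hφ1pos
      linarith
    have hφlt : φh c2 ω < φh c1 ω := by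
      rw [hφh c1 ω, hφh c2 ω, if_pos hGpos', if_pos hGpos']
      have hab : I (c1 * V ω) / G ω < I (c2 * V ω) / G ω := by
        have hlt := hImono (mul_pos hc1 (hVpos ω)) (mul_pos hc2 (hVpos ω))
          (mul_lt_mul_of_pos_right h12 (hVpos ω))
        gcongr
      have : min (I (c1 * V ω) / G ω) 1 < min (I (c2 * V ω) / G ω) 1 := by
        rw [min_eq_left ha1.le]
        exact lt_min hab ha1
      linarith
    exact mul_lt_mul_of_pos_left hφlt hVG'
  -- unique root
  intro y hy
  obtain ⟨hy0, hyE⟩ := hy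
  -- existence of a with k a > y
  have hev1 : ∀ᶠ c in nhdsWithin (0:ℝ) (Ioi 0), y < k c :=
    hlim0.eventually (eventually_gt_nhds hyE)
  obtain ⟨a, hay, ha0⟩ := (hev1.and self_mem_nhdsWithin).exists
  -- existence of b with k b < y and a < b
  have hev2 : ∀ᶠ c in atTop, k c < y := hliminf.eventually (eventually_lt_nhds hy0)
  obtain ⟨b, hby, hab⟩ := (hev2.and (eventually_gt_atTop a)).exists
  have hb0 : (0:ℝ) < b := lt_trans ha0 hab
  have hsub : Icc a b ⊆ Ioi 0 := fun x hx => lt_of_lt_of_le ha0 hx.1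
  have hIVT := intermediate_value_Icc' hab.le (hconts.mono hsub)
  have hyIcc : y ∈ Icc (k b) (k a) := ⟨hby.le, hay.le⟩
  obtain ⟨c, hc, hkc⟩ := hIVT hyIcc
  have hcpos : 0 < c := lt_of_lt_of_le ha0 hc.1
  -- strict monotonicity consequence for uniqueness
  have key : ∀ c1 c2 : ℝ, 0 < c1 → c1 < c2 → k c1 = y → k c2 = y → False := by
    intro c1 c2 hc1 h12 hk1 hk2
    have hc2 : 0 < c2 := hc1.trans h12
    have hint1 := hFint c1 hc1
    have hint2 := hFint c2 hc2
    have heq : ∫ ω, (V ω * G ω * φh c1 ω - V ω * G ω * φh c2 ω) ∂P = 0 := by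
      rw [integral_sub hint1 hint2, ← hk c1, ← hk c2, hk1, hk2, sub_self]
    have hgnn : (0:Ω → ℝ) ≤ fun ω => V ω * G ω * φh c1 ω - V ω * G ω * φh c2 ω :=
      fun ω => sub_nonneg.mpr (hFdec c1 c2 hc1 h12 ω)
    have hgae : (fun ω => V ω * G ω * φh c1 ω - V ω * G ω * φh c2 ω) =ᵐ[P] 0 :=
      (integral_eq_zero_iff_of_nonneg hgnn (hint1.sub hint2)).mp heq
    have hfne : ¬ ((fun ω => V ω * G ω * φh c1 ω) =ᵐ[P] 0) := by
      intro hcon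
      have := (integral_eq_zero_iff_of_nonneg (fun ω => hFnn c1 ω hc1) hint1).mpr hcon
      rw [← hk c1, hk1] at this
      exact hy0.ne' this
    apply hfne
    filter_upwards [hgae] with ω hg
    by_contra hne
    have := hFstrict c1 c2 hc1 h12 ω hne
    simp only [Pi.zero_apply] at hg
    linarith
  refine ⟨c, ⟨hcpos, hkc⟩, ?_⟩
  rintro c' ⟨hc'pos, hkc'⟩
  rcases lt_trichotomy c' c with h | h | h
  · exact absurd (key c' c hc'pos h hkc' hkc) not_false
  · exact h
  · exact absurd (key c c' hcpos h hkc hkc') not_false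
end
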